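/- arXiv:1708.04530 — 4 statements merged into one kernel-verified Lean document; each statement's English description precedes it below -/
import Mathlib

section
/- Let M be a topological space, W ⊆ M, w₀ ∈ W, and suppose that the second homotopy group π₂(M, w₀) is trivial (a subsingleton). Let f₀, f₁ ∈ ℛ_{w₀}(W, M) and suppose that their boundary loops γᵢ(t) = fᵢ(exp(2πit)) (t ∈ [0,1]), which are loops in W based at w₀, are homotopic rel endpoints through loops in W. Then f₀ and f₁ are homotopic in ℛ_{w₀}(W, M): there exists a continuous map H : [0,1] × 𝔻̄ → M with H(0,·) = f₀, H(1,·) = f₁, and for every t ∈ [0,1], H(t, 𝕋) ⊆ W and H(t, 1) = w₀. (This expresses that the boundary-loop homomorphism δ₂ : ρ₁(W, M, w₀) → π₁(W, w₀) is injective when π₂(M, w₀) = 0.) -/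
open Complex Metric Set

/-- The loop `t ↦ exp (2π i t)` parametrizing the unit circle. -/
noncomputable def unitLoop (t : ℝ) : ℂ := Complex.exp (2 * Real.pi * t * Complex.I)

open Filter Topology Function


/-- Descent of a continuous map along a continuous surjection from a compact space
to a Hausdorff space, provided the map is constant on fibers. -/
theorem descend {X Y Z : Type*} [TopologicalSpace X] [TopologicalSpace Y] [TopologicalSpace Z]
    [CompactSpace X] [T2Space Y] {q : X → Y} (hq : Continuous q) (hsurj : Surjective q)
    (f : X → Z) (hf : Continuous f) (hconst : ∀ a b, q a = q b → f a = f b) :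
    ∃ g : Y → Z, Continuous g ∧ ∀ x, g (q x) = f x := by
  have hquot : IsQuotientMap q := (hq.isClosedMap).isQuotientMap hq hsurj
  refine ⟨fun y => f (hsurj y).choose, ?_, ?_⟩
  · rw [hquot.continuous_iff]
    have : (fun y => f (hsurj y).choose) ∘ q = f := by
      funext x
      exact hconst _ _ (hsurj (q x)).choose_spec
    rw [this]; exact hf
  · intro x
    exact hconst _ _ (hsurj (q x)).choose_spec

/-- Pasting lemma for two closed sets. -/
theorem pasting {X Z : Type*} [TopologicalSpace X] [TopologicalSpace Z]
    {f : X → Z} {s t : Set X} (hs : IsClosed s) (ht : IsClosed t)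
    (hfs : ContinuousOn f s) (hft : ContinuousOn f t) : ContinuousOn f (s ∪ t) := by
  intro x hx
  have h1 : ContinuousWithinAt f s x := by
    by_cases h : x ∈ s
    · exact hfs x h
    · exact continuousWithinAt_of_notMem_closure (by rwa [hs.closure_eq])
  have h2 : ContinuousWithinAt f t x := by
    by_cases h : x ∈ t
    · exact hft x h
    · exact continuousWithinAt_of_notMem_closure (by rwa [ht.closure_eq])
  exact h1.union h2

noncomputable section

/-- Box norm on `ℝ × ℂ` adapted to the cylinder `[0,1] × D̄`. -/
def mnorm (w : ℝ × ℂ) : ℝ := max (2 * |w.1|) (‖w.2‖)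

def cC : ℝ × ℂ := (1/2, 0)

def bC : ℝ × ℂ := (1/2, 1)

lemma mnorm_nonneg (w : ℝ × ℂ) : 0 ≤ mnorm w :=
  le_trans (by positivity) (le_max_left _ _)

lemma mnorm_eq_zero {w : ℝ × ℂ} (h : mnorm w = 0) : w = 0 := by
  have h1 : 2 * |w.1| ≤ 0 := h ▸ le_max_left _ _
  have h2 : ‖w.2‖ ≤ 0 := h ▸ le_max_right _ _
  have : w.1 = 0 := by
    have h0 := abs_nonneg w.1
    have : |w.1| = 0 := by linarith
    exact abs_eq_zero.mp this
  have h2' : w.2 = 0 := by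
    simpa using le_antisymm h2 (norm_nonneg _)
  exact Prod.ext this h2'

lemma mnorm_smul (r : ℝ) (hr : 0 ≤ r) (w : ℝ × ℂ) : mnorm (r • w) = r * mnorm w := by
  simp only [mnorm, Prod.smul_fst, Prod.smul_snd, smul_eq_mul, Complex.real_smul, map_mul,
    norm_mul, Complex.norm_real, Real.norm_eq_abs, abs_mul, _root_.abs_of_nonneg hr]
  rw [mul_max_of_nonneg _ _ hr]; ring_nf

lemma continuous_mnorm : Continuous mnorm := by
  apply Continuous.max
  · exact (continuous_const.mul continuous_fst.abs)
  · exact continuous_norm.comp continuous_snd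

lemma mem_cyl_iff {p : ℝ × ℂ} :
    p ∈ Icc (0:ℝ) 1 ×ˢ closedBall (0:ℂ) 1 ↔ mnorm (p - cC) ≤ 1 := by
  simp only [mnorm, cC, Prod.fst_sub, Prod.snd_sub, sub_zero, Set.mem_prod, Set.mem_Icc,
    mem_closedBall, Complex.dist_eq, sub_zero, max_le_iff]
  constructor
  · rintro ⟨⟨h0, h1⟩, h2⟩
    have : |p.1 - 1/2| ≤ 1/2 := by rw [abs_le]; constructor <;> linarith
    refine ⟨by linarith, by simpa using h2⟩
  · rintro ⟨h1, h2⟩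
    have h1' : |p.1 - 1/2| ≤ 1/2 := by linarith
    rw [abs_le] at h1'
    exact ⟨⟨by linarith [h1'.1], by linarith [h1'.2]⟩, by simpa using h2⟩

lemma mem_sph_cyl {p : ℝ × ℂ} (h : mnorm (p - cC) = 1) :
    p ∈ Icc (0:ℝ) 1 ×ˢ closedBall (0:ℂ) 1 := mem_cyl_iff.mpr h.le

end

noncomputable section

/-- Inverse stereographic projection onto the unit sphere of `ℝ × ℂ` with pole `(0, 1)`. -/
def sg (u v : ℝ) : ℝ × ℂ :=
  (2*u/(u^2+v^2+1), (((u^2+v^2-1)/(u^2+v^2+1) : ℝ) : ℂ) + ((2*v/(u^2+v^2+1) : ℝ) : ℂ) * Complex.I)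

lemma sg_re (u v : ℝ) : (sg u v).2.re = (u^2+v^2-1)/(u^2+v^2+1) := by
  simp only [sg, Complex.add_re, Complex.ofReal_re, Complex.mul_re, Complex.I_re,
    Complex.I_im, Complex.ofReal_im]
  ring

lemma sg_im (u v : ℝ) : (sg u v).2.im = 2*v/(u^2+v^2+1) := by
  simp only [sg, Complex.add_im, Complex.ofReal_im, Complex.mul_im, Complex.I_re,
    Complex.I_im, Complex.ofReal_re]
  ring

lemma sq_denom_pos (u v : ℝ) : (0:ℝ) < u^2+v^2+1 := by positivity

lemma sg_abs2 (u v : ℝ) : ‖(sg u v).2‖ ^ 2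
    = ((u^2+v^2-1)/(u^2+v^2+1))^2 + (2*v/(u^2+v^2+1))^2 := by
  show ‖(((u^2+v^2-1)/(u^2+v^2+1) : ℝ) : ℂ) + ((2*v/(u^2+v^2+1) : ℝ) : ℂ) * Complex.I‖ ^ 2 = _
  rw [Complex.sq_norm, Complex.normSq_add_mul_I]

lemma sg_norm (u v : ℝ) : (sg u v).1 ^ 2 + ‖(sg u v).2‖ ^ 2 = 1 := by
  rw [sg_abs2]
  have h := (sq_denom_pos u v).ne'
  show (2*u/(u^2+v^2+1))^2 + _ = 1
  field_simp
  ring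

lemma sg_re_lt_one (u v : ℝ) : (sg u v).2.re < 1 := by
  rw [sg_re, div_lt_one (sq_denom_pos u v)]
  linarith

lemma sg_inj {u v u' v' : ℝ} (h : sg u v = sg u' v') : u = u' ∧ v = v' := by
  have hre := congrArg (fun p : ℝ × ℂ => p.2.re) h
  have him := congrArg (fun p : ℝ × ℂ => p.2.im) h
  have hfst := congrArg (fun p : ℝ × ℂ => p.1) h
  simp only [sg_re, sg_im] at hre him
  simp only [sg] at hfst
  have h1 := (sq_denom_pos u v).ne'
  have h2 := (sq_denom_pos u' v').ne'
  have hq : u^2+v^2 = u'^2+v'^2 := by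
    field_simp at hre
    nlinarith [hre]
  rw [hq] at hfst him
  constructor
  · field_simp at hfst; exact hfst
  · field_simp at him; exact him

/-- Surjectivity of `sg` onto the unit sphere minus the pole. -/
lemma sg_eq_of {z : ℝ × ℂ} (hz : z.1 ^ 2 + ‖z.2‖ ^ 2 = 1) (hre : z.2.re ≠ 1) :
    sg (z.1/(1-z.2.re)) (z.2.im/(1-z.2.re)) = z := by
  set x := z.1
  set a := z.2.re
  set b := z.2.im
  have habs : ‖z.2‖ ^ 2 = a^2 + b^2 := by
    rw [Complex.sq_norm, Complex.normSq_apply]; ring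
  rw [habs] at hz
  have hd : 1 - a ≠ 0 := fun h => hre (by linarith [sub_eq_zero.mp h])
  have hkey : (x/(1-a))^2 + (b/(1-a))^2 + 1 = 2/(1-a) := by
    field_simp
    nlinarith [hz]
  have hz2 : z.2 = ((a:ℝ):ℂ) + ((b:ℝ):ℂ) * Complex.I := (Complex.re_add_im z.2).symm
  have hd2 : (1:ℝ) - a > 0 ∨ (1:ℝ) - a < 0 := hd.lt_or_gt.symm.imp id id
  refine Prod.ext ?_ ?_
  · show 2*(x/(1-a))/((x/(1-a))^2 + (b/(1-a))^2 + 1) = x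
    rw [hkey]
    field_simp
  · show _ = z.2
    rw [hz2, sg]
    have e1 : ((x/(1-a))^2 + (b/(1-a))^2 - 1) / ((x/(1-a))^2 + (b/(1-a))^2 + 1) = a := by
      rw [hkey]
      have h2 : (x/(1-a))^2 + (b/(1-a))^2 - 1 = 2/(1-a) - 2 := by
        have := hkey; linarith
      rw [h2]
      field_simp
      ring
    have e2 : 2*(b/(1-a)) / ((x/(1-a))^2 + (b/(1-a))^2 + 1) = b := by
      rw [hkey]
      field_simp
    simp only [sg_re, sg_im] at e1 e2 ⊢
    rw [e1, e2]

end

noncomputable section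

lemma sg_ne_zero (u v : ℝ) : sg u v ≠ 0 := by
  intro h
  have := sg_norm u v
  rw [h] at this
  simp at this

lemma mnorm_sg_pos (u v : ℝ) : 0 < mnorm (sg u v) :=
  lt_of_le_of_ne (mnorm_nonneg _) (fun h => sg_ne_zero u v (mnorm_eq_zero h.symm))

/-- The square-to-sphere map composed with radial projection onto the cylinder boundary. -/
def muC (u v : ℝ) : ℝ × ℂ := cC + (mnorm (sg u v))⁻¹ • sg u v

lemma muC_sub (u v : ℝ) : muC u v - cC = (mnorm (sg u v))⁻¹ • sg u v := by
  simp [muC]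

lemma muC_mem (u v : ℝ) : mnorm (muC u v - cC) = 1 := by
  rw [muC_sub, mnorm_smul _ (inv_nonneg.mpr (mnorm_nonneg _))]
  exact inv_mul_cancel₀ (mnorm_sg_pos u v).ne'

/-- Euclidean square norm on `ℝ × ℂ`. -/
def en (w : ℝ × ℂ) : ℝ := w.1 ^ 2 + ‖w.2‖ ^ 2

lemma en_smul (r : ℝ) (w : ℝ × ℂ) : en (r • w) = r^2 * en w := by
  simp only [en, Prod.smul_fst, Prod.smul_snd, smul_eq_mul, Complex.real_smul, map_mul,
    norm_mul, Complex.norm_real, Real.norm_eq_abs, mul_pow]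
  rw [_root_.sq_abs]
  ring

lemma sq_eq_of_pos {x y : ℝ} (hx : 0 < x) (hy : 0 < y) (h : x^2 = y^2) : x = y := by
  have h0 : (x - y) * (x + y) = 0 := by nlinarith
  rcases mul_eq_zero.mp h0 with h' | h'
  · linarith
  · linarith

lemma muC_inj {u v u' v' : ℝ} (h : muC u v = muC u' v') : u = u' ∧ v = v' := by
  have h' : (mnorm (sg u v))⁻¹ • sg u v = (mnorm (sg u' v'))⁻¹ • sg u' v' := by
    rw [← muC_sub, ← muC_sub, h]
  have hen := congrArg en h'
  rw [en_smul, en_smul] at hen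
  have e1 : en (sg u v) = 1 := sg_norm u v
  have e2 : en (sg u' v') = 1 := sg_norm u' v'
  rw [e1, e2, mul_one, mul_one] at hen
  have hpos := mnorm_sg_pos u v
  have hpos' := mnorm_sg_pos u' v'
  have hmn : mnorm (sg u v) = mnorm (sg u' v') := by
    have h1 : (mnorm (sg u v))⁻¹ = (mnorm (sg u' v'))⁻¹ :=
      sq_eq_of_pos (inv_pos.mpr hpos) (inv_pos.mpr hpos') hen
    exact inv_injective h1
  rw [hmn] at h'
  have : sg u v = sg u' v' :=
    smul_right_injective _ (inv_pos.mpr hpos').ne' h'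
  exact sg_inj this

lemma muC_ne_bC (u v : ℝ) : muC u v ≠ bC := by
  intro h
  set m := mnorm (sg u v) with hm
  have hpos : 0 < m := mnorm_sg_pos u v
  have h' : m⁻¹ • sg u v = ((0:ℝ), (1:ℂ)) := by
    rw [hm, ← muC_sub, h]
    simp only [bC, cC, Prod.mk_sub_mk, sub_zero]
    norm_num
  have h1 : (sg u v).1 = 0 := by
    have h1' := congrArg Prod.fst h'
    simp only [Prod.smul_fst, smul_eq_mul] at h1'
    rcases mul_eq_zero.mp h1' with h'' | h''
    · exact absurd h'' (inv_pos.mpr hpos).ne'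
    · exact h''
  have h2 : (sg u v).2 = (m : ℂ) := by
    have h2' := congrArg Prod.snd h'
    simp only [Prod.smul_snd, Complex.real_smul] at h2'
    have hm0 : ((m:ℝ) : ℂ) ≠ 0 := by exact_mod_cast hpos.ne'
    have : ((m⁻¹ : ℝ) : ℂ) * (sg u v).2 = 1 := h2'
    rw [Complex.ofReal_inv] at this
    field_simp at this
    exact this
  have hn := sg_norm u v
  rw [h1, h2] at hn
  simp only [Complex.norm_real, Real.norm_eq_abs] at hn
  have hm1 : m = 1 := by nlinarith [abs_of_pos hpos]
  have hlt := sg_re_lt_one u v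
  rw [h2, hm1] at hlt
  simp at hlt

lemma muC_surj {p : ℝ × ℂ} (h : mnorm (p - cC) = 1) (hne : p ≠ bC) :
    ∃ u v, muC u v = p := by
  set w := p - cC with hw
  have hw0 : w ≠ 0 := by
    intro h0; rw [h0] at h; simp [mnorm] at h
  have henw : w.1 ^ 2 + ‖w.2‖ ^ 2 = en w := rfl
  have h00 : (0:ℝ) ≤ en w := by
    rw [← henw]; positivity
  have hen : 0 < en w := by
    rcases lt_or_eq_of_le h00 with h' | h'
    · exact h'
    · exfalso; apply hw0
      have h0 : w.1 ^ 2 + ‖w.2‖ ^ 2 = 0 := by rw [henw, ← h']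
      have h1 : w.1 = 0 := pow_eq_zero_iff (n := 2) two_ne_zero |>.mp
        (by nlinarith [sq_nonneg (‖w.2‖)])
      have h2 : ‖w.2‖ = 0 := pow_eq_zero_iff (n := 2) two_ne_zero |>.mp
        (by nlinarith [sq_nonneg w.1])
      exact Prod.ext h1 (by simpa using h2)
  set e := Real.sqrt (en w) with he
  have hepos : 0 < e := Real.sqrt_pos.mpr hen
  set z := e⁻¹ • w with hz
  have henz : en z = 1 := by
    rw [hz, en_smul, inv_pow, he, Real.sq_sqrt hen.le]
    exact inv_mul_cancel₀ hen.ne'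
  have henz' : z.1 ^ 2 + ‖z.2‖ ^ 2 = 1 := henz
  have hzre : z.2.re ≠ 1 := by
    intro hre
    have habs : ‖z.2‖ ^ 2 = z.2.re ^ 2 + z.2.im ^ 2 := by
      rw [Complex.sq_norm, Complex.normSq_apply]; ring
    have h1 : z.1 ^ 2 = 0 := by nlinarith [sq_nonneg z.2.im]
    have h2 : z.2.im ^ 2 = 0 := by nlinarith [sq_nonneg z.1]
    have hz1 : z.1 = 0 := pow_eq_zero_iff (n := 2) two_ne_zero |>.mp h1
    have hzim : z.2.im = 0 := pow_eq_zero_iff (n := 2) two_ne_zero |>.mp h2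
    have hz2 : z.2 = 1 := by apply Complex.ext <;> simp [hre, hzim]
    have hz' : z = ((0:ℝ), (1:ℂ)) := Prod.ext hz1 hz2
    have hwz : w = e • z := by
      rw [hz, smul_smul, mul_inv_cancel₀ hepos.ne', one_smul]
    have hmn : mnorm w = e := by
      rw [hwz, mnorm_smul _ hepos.le, hz']
      simp [mnorm]
    rw [h] at hmn
    apply hne
    have hp : p = cC + w := by rw [hw]; ring
    rw [hp, hwz, hz', ← hmn, one_smul]
    simp only [cC, bC, Prod.mk_add_mk, add_zero]
    norm_num
  refine ⟨z.1/(1-z.2.re), z.2.im/(1-z.2.re), ?_⟩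
  have hsg : sg (z.1/(1-z.2.re)) (z.2.im/(1-z.2.re)) = z := sg_eq_of henz' hzre
  rw [muC, hsg]
  have hmz : mnorm z = e⁻¹ := by
    rw [hz, mnorm_smul _ (inv_nonneg.mpr hepos.le), h, mul_one]
  rw [hmz, inv_inv, hz, smul_smul, mul_inv_cancel₀ hepos.ne', one_smul, hw]
  ring

lemma continuous_muC : Continuous (fun p : ℝ × ℝ => muC p.1 p.2) := by
  have hsg : Continuous (fun p : ℝ × ℝ => sg p.1 p.2) := by
    apply Continuous.prodMk
    · apply Continuous.div
      · fun_prop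
      · fun_prop
      · intro p; exact (sq_denom_pos p.1 p.2).ne'
    · apply Continuous.add
      · apply Continuous.comp Complex.continuous_ofReal
        apply Continuous.div
        · fun_prop
        · fun_prop
        · intro p; exact (sq_denom_pos p.1 p.2).ne'
      · apply Continuous.mul _ continuous_const
        apply Continuous.comp Complex.continuous_ofReal
        apply Continuous.div
        · fun_prop
        · fun_prop
        · intro p; exact (sq_denom_pos p.1 p.2).ne'
  apply Continuous.add continuous_const
  apply Continuous.smul (f := fun p : ℝ × ℝ => (mnorm (sg p.1 p.2))⁻¹) (g := fun p : ℝ × ℝ => sg p.1 p.2)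
  · exact (continuous_mnorm.comp hsg).inv₀ (fun p => (mnorm_sg_pos p.1 p.2).ne')
  · exact hsg

end

noncomputable section

open Filter Topology

lemma tendsto_sg {α : Type*} {F : Filter α} {f g : α → ℝ}
    (h : Tendsto (fun x => (f x)^2 + (g x)^2) F atTop) :
    Tendsto (fun x => sg (f x) (g x)) F (𝓝 ((0:ℝ), (1:ℂ))) := by
  set Q : α → ℝ := fun x => (f x)^2 + (g x)^2 with hQ
  have hQ1 : Tendsto (fun x => Q x + 1) F atTop := tendsto_atTop_add_const_right F 1 h
  have hQpos : ∀ x, 0 < Q x + 1 := fun x => by positivity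
  have hden : Tendsto (fun x => 4 / (Q x + 1)) F (𝓝 0) :=
    tendsto_const_nhds.div_atTop hQ1
  have hsqrt : Tendsto (fun x => Real.sqrt (4 / (Q x + 1))) F (𝓝 0) := by
    have := hden.sqrt
    rwa [Real.sqrt_zero] at this
  have key : ∀ (f' : α → ℝ), (∀ x, (f' x)^2 ≤ Q x) →
      Tendsto (fun x => 2 * f' x / (Q x + 1)) F (𝓝 0) := by
    intro f' hle
    apply squeeze_zero_norm _ hsqrt
    intro x
    have h1 : (2 * f' x / (Q x + 1))^2 ≤ 4 / (Q x + 1) := by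
      rw [div_pow, div_le_div_iff₀ (by positivity) (hQpos x)]
      have := hle x
      nlinarith [hQpos x, sq_nonneg (f' x)]
    have h2 : ‖2 * f' x / (Q x + 1)‖ = Real.sqrt ((2 * f' x / (Q x + 1))^2) := by
      rw [Real.sqrt_sq_eq_abs]; rfl
    rw [h2]
    exact Real.sqrt_le_sqrt h1
  have h1 : Tendsto (fun x => 2 * f x / (Q x + 1)) F (𝓝 0) :=
    key f (fun x => by show f x ^ 2 ≤ f x ^ 2 + g x ^ 2; nlinarith [sq_nonneg (g x)])
  have h2 : Tendsto (fun x => 2 * g x / (Q x + 1)) F (𝓝 0) :=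
    key g (fun x => by show g x ^ 2 ≤ f x ^ 2 + g x ^ 2; nlinarith [sq_nonneg (f x)])
  have h3 : Tendsto (fun x => (Q x - 1) / (Q x + 1)) F (𝓝 1) := by
    have heq : ∀ᶠ x in F, 1 - 2 / (Q x + 1) = (Q x - 1) / (Q x + 1) := by
      filter_upwards with x
      rw [eq_div_iff (hQpos x).ne', sub_mul, div_mul_cancel₀ _ (hQpos x).ne']; ring
    have hbase : Tendsto (fun x => 1 - 2 / (Q x + 1)) F (𝓝 1) := by
      have : Tendsto (fun x => 2 / (Q x + 1)) F (𝓝 0) := tendsto_const_nhds.div_atTop hQ1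
      simpa using tendsto_const_nhds.sub this
    exact hbase.congr' heq
  have hsnd : Tendsto (fun x => (((Q x - 1)/(Q x + 1) : ℝ) : ℂ) + (((2 * g x/(Q x + 1)) : ℝ) : ℂ) * Complex.I)
      F (𝓝 (1 : ℂ)) := by
    have hc1 : Tendsto (fun x => (((Q x - 1)/(Q x + 1) : ℝ) : ℂ)) F (𝓝 ((1:ℝ) : ℂ)) :=
      (Complex.continuous_ofReal.tendsto _).comp h3
    have hc2 : Tendsto (fun x => (((2 * g x/(Q x + 1)) : ℝ) : ℂ) * Complex.I) F (𝓝 (((0:ℝ):ℂ) * Complex.I)) :=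
      ((Complex.continuous_ofReal.tendsto _).comp h2).mul_const _
    have hadd := hc1.add hc2
    rw [show (((1:ℝ):ℂ) + ((0:ℝ):ℂ) * Complex.I) = (1:ℂ) by norm_num] at hadd
    exact hadd
  have hprod := h1.prodMk_nhds hsnd
  exact hprod.congr (fun x => rfl)

lemma mnorm_pole : mnorm ((0:ℝ), (1:ℂ)) = 1 := by
  simp [mnorm]

lemma tendsto_muC {α : Type*} {F : Filter α} {f g : α → ℝ}
    (h : Tendsto (fun x => (f x)^2 + (g x)^2) F atTop) :
    Tendsto (fun x => muC (f x) (g x)) F (𝓝 bC) := by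
  have houter : ContinuousAt (fun w : ℝ × ℂ => cC + (mnorm w)⁻¹ • w) ((0:ℝ), (1:ℂ)) := by
    apply ContinuousAt.add continuousAt_const
    apply ContinuousAt.smul (f := fun w : ℝ × ℂ => (mnorm w)⁻¹) (g := fun w : ℝ × ℂ => w)
    · exact (continuous_mnorm.continuousAt).inv₀ (by rw [mnorm_pole]; norm_num)
    · exact continuousAt_id
  have this1 := houter.tendsto.comp (tendsto_sg h)
  have hval : cC + (mnorm (((0:ℝ), (1:ℂ)) : ℝ × ℂ))⁻¹ • (((0:ℝ), (1:ℂ)) : ℝ × ℂ) = bC := by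
    rw [mnorm_pole]
    simp [cC, bC, Prod.ext_iff]
  rw [hval] at this1
  exact this1

end

noncomputable section

open Filter Topology Real

/-- Homeomorphism `(0,1) → ℝ`. -/
def Lm (a : ℝ) : ℝ := Real.tan (Real.pi * a - Real.pi / 2)

lemma Lm_angle_mem {a : ℝ} (h0 : 0 < a) (h1 : a < 1) :
    Real.pi * a - Real.pi / 2 ∈ Set.Ioo (-(Real.pi/2)) (Real.pi/2) := by
  have hπ := Real.pi_pos
  constructor <;> nlinarith

lemma Lm_continuousAt {a : ℝ} (h0 : 0 < a) (h1 : a < 1) : ContinuousAt Lm a := by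
  have hcos : Real.cos (Real.pi * a - Real.pi / 2) ≠ 0 :=
    (Real.cos_pos_of_mem_Ioo (Lm_angle_mem h0 h1)).ne'
  have hcont : Continuous (fun a : ℝ => Real.pi * a - Real.pi / 2) := by fun_prop
  exact ContinuousAt.comp (x := a) (g := Real.tan)
    (f := fun a : ℝ => Real.pi * a - Real.pi / 2) (Real.continuousAt_tan.mpr hcos)
    hcont.continuousAt

lemma Lm_eq_iff {a : ℝ} (h0 : 0 < a) (h1 : a < 1) :
    a = (Real.arctan (Lm a) + Real.pi / 2) / Real.pi := by
  have hmem := Lm_angle_mem h0 h1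
  have := Real.arctan_tan hmem.1 hmem.2
  rw [Lm, this]
  field_simp; ring

lemma Lm_inj {a a' : ℝ} (h0 : 0 < a) (h1 : a < 1) (h0' : 0 < a') (h1' : a' < 1)
    (h : Lm a = Lm a') : a = a' := by
  rw [Lm_eq_iff h0 h1, Lm_eq_iff h0' h1', h]

lemma Lm_surj (r : ℝ) : ∃ a, 0 < a ∧ a < 1 ∧ Lm a = r := by
  have hπ := Real.pi_pos
  have hmem := Real.arctan_mem_Ioo r
  refine ⟨(Real.arctan r + Real.pi / 2) / Real.pi, div_pos (by nlinarith [hmem.1]) hπ, ?_, ?_⟩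
  · rw [div_lt_one hπ]; nlinarith [hmem.2]
  · rw [Lm]
    have : Real.pi * ((Real.arctan r + Real.pi / 2) / Real.pi) - Real.pi / 2 = Real.arctan r := by
      field_simp
      ring
    rw [this, Real.tan_arctan]

lemma Lm_tendsto_zero : Tendsto Lm (𝓝[Set.Ioo (0:ℝ) 1] 0) atBot := by
  have hθ : Tendsto (fun a : ℝ => Real.pi * a - Real.pi / 2) (𝓝[Set.Ioo (0:ℝ) 1] 0)
      (𝓝[>] (-(Real.pi/2))) := by
    rw [tendsto_nhdsWithin_iff]
    constructor
    · have hcont : Continuous (fun a : ℝ => Real.pi * a - Real.pi / 2) := by fun_prop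
      have h0 := hcont.tendsto 0
      have he : Real.pi * 0 - Real.pi / 2 = -(Real.pi/2) := by ring
      rw [he] at h0
      exact h0.mono_left nhdsWithin_le_nhds
    · filter_upwards [self_mem_nhdsWithin] with a ha
      have hπ := Real.pi_pos
      simp only [Set.mem_Ioo] at ha
      simp only [Set.mem_Ioi]
      nlinarith [ha.1]
  exact Real.tendsto_tan_neg_pi_div_two.comp hθ

lemma Lm_tendsto_one : Tendsto Lm (𝓝[Set.Ioo (0:ℝ) 1] 1) atTop := by
  have hθ : Tendsto (fun a : ℝ => Real.pi * a - Real.pi / 2) (𝓝[Set.Ioo (0:ℝ) 1] 1)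
      (𝓝[<] (Real.pi/2)) := by
    rw [tendsto_nhdsWithin_iff]
    constructor
    · have hcont : Continuous (fun a : ℝ => Real.pi * a - Real.pi / 2) := by fun_prop
      have h0 := hcont.tendsto 1
      have he : Real.pi * 1 - Real.pi / 2 = Real.pi/2 := by ring
      rw [he] at h0
      exact h0.mono_left nhdsWithin_le_nhds
    · filter_upwards [self_mem_nhdsWithin] with a ha
      have hπ := Real.pi_pos
      simp only [Set.mem_Ioo] at ha
      simp only [Set.mem_Iio]
      nlinarith [ha.2]
  exact Real.tendsto_tan_pi_div_two.comp hθ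

lemma sq_tendsto_atTop : Tendsto (fun x : ℝ => x ^ 2) atTop atTop :=
  tendsto_pow_atTop (n := 2) (two_ne_zero)

lemma sq_tendsto_atBot : Tendsto (fun x : ℝ => x ^ 2) atBot atTop := by
  have h := sq_tendsto_atTop.comp (tendsto_neg_atBot_atTop : Tendsto (fun x : ℝ => -x) atBot atTop)
  refine h.congr fun x => ?_
  simp [Function.comp, neg_sq]

end

noncomputable section

open Filter Topology

lemma unitInterval_coe_mem (t : unitInterval) : (0:ℝ) ≤ (t:ℝ) ∧ (t:ℝ) ≤ 1 := ⟨t.2.1, t.2.2⟩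

/-- The quotient map from the square collapsing the boundary, onto the `mnorm`-sphere. -/
def Pm (y : Fin 2 → unitInterval) : ℝ × ℂ :=
  haveI := Classical.dec (y ∈ Cube.boundary (Fin 2))
  if y ∈ Cube.boundary (Fin 2) then bC else muC (Lm (y 0)) (Lm (y 1))

lemma Pm_boundary {y : Fin 2 → unitInterval} (h : y ∈ Cube.boundary (Fin 2)) : Pm y = bC := by
  rw [Pm, if_pos h]

lemma Pm_interior {y : Fin 2 → unitInterval} (h : y ∉ Cube.boundary (Fin 2)) :
    Pm y = muC (Lm (y 0)) (Lm (y 1)) := by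
  rw [Pm, if_neg h]

lemma bC_sub_cC : bC - cC = ((0:ℝ), (1:ℂ)) := by
  simp only [bC, cC, Prod.mk_sub_mk, sub_zero]
  norm_num

lemma Pm_mem (y : Fin 2 → unitInterval) : mnorm (Pm y - cC) = 1 := by
  by_cases h : y ∈ Cube.boundary (Fin 2)
  · rw [Pm_boundary h, bC_sub_cC, mnorm_pole]
  · rw [Pm_interior h]; exact muC_mem _ _

lemma not_boundary_iff {y : Fin 2 → unitInterval} :
    y ∉ Cube.boundary (Fin 2) ↔ ∀ i, (0:ℝ) < (y i : ℝ) ∧ ((y i : ℝ) < 1) := by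
  constructor
  · intro h i
    have h0 : y i ≠ 0 := fun he => h ⟨i, Or.inl he⟩
    have h1 : y i ≠ 1 := fun he => h ⟨i, Or.inr he⟩
    constructor
    · rcases lt_or_eq_of_le (y i).2.1 with h' | h'
      · exact h'
      · exact absurd (Subtype.ext h'.symm) h0
    · rcases lt_or_eq_of_le (y i).2.2 with h' | h'
      · exact h'
      · exact absurd (Subtype.ext h') h1
  · rintro h ⟨i, hi | hi⟩
    · have := (h i).1; rw [hi] at this; simp at this
    · have := (h i).2; rw [hi] at this; simp at this

lemma Pm_surj {p : ℝ × ℂ} (h : mnorm (p - cC) = 1) : ∃ y, Pm y = p := by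
  by_cases hbc : p = bC
  · refine ⟨fun _ => 0, ?_⟩
    rw [Pm_boundary ⟨0, Or.inl rfl⟩, hbc]
  · obtain ⟨u, v, huv⟩ := muC_surj h hbc
    obtain ⟨a, ha0, ha1, hua⟩ := Lm_surj u
    obtain ⟨b, hb0, hb1, hub⟩ := Lm_surj v
    refine ⟨fun i => if i = 0 then ⟨a, ha0.le, ha1.le⟩ else ⟨b, hb0.le, hb1.le⟩, ?_⟩
    have hnb : (fun i : Fin 2 => if i = 0 then (⟨a, ha0.le, ha1.le⟩ : unitInterval)
        else ⟨b, hb0.le, hb1.le⟩) ∉ Cube.boundary (Fin 2) := by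
      rw [not_boundary_iff]
      intro i
      by_cases hi : i = 0 <;> simp [hi, ha0, ha1, hb0, hb1]
    rw [Pm_interior hnb]
    simp only [if_pos, if_neg]
    norm_num
    rw [hua, hub, huv]

lemma Pm_fiber {y y' : Fin 2 → unitInterval} (h : Pm y = Pm y') :
    y = y' ∨ (y ∈ Cube.boundary (Fin 2) ∧ y' ∈ Cube.boundary (Fin 2)) := by
  by_cases hy : y ∈ Cube.boundary (Fin 2) <;> by_cases hy' : y' ∈ Cube.boundary (Fin 2)
  · exact Or.inr ⟨hy, hy'⟩
  · exfalso
    rw [Pm_boundary hy, Pm_interior hy'] at h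
    exact muC_ne_bC _ _ h.symm
  · exfalso
    rw [Pm_interior hy, Pm_boundary hy'] at h
    exact muC_ne_bC _ _ h
  · left
    rw [Pm_interior hy, Pm_interior hy'] at h
    obtain ⟨h0, h1⟩ := muC_inj h
    have hmy := not_boundary_iff.mp hy
    have hmy' := not_boundary_iff.mp hy'
    have e0 : (y 0 : ℝ) = (y' 0 : ℝ) :=
      Lm_inj (hmy 0).1 (hmy 0).2 (hmy' 0).1 (hmy' 0).2 h0
    have e1 : (y 1 : ℝ) = (y' 1 : ℝ) :=
      Lm_inj (hmy 1).1 (hmy 1).2 (hmy' 1).1 (hmy' 1).2 h1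
    funext i
    fin_cases i
    · exact Subtype.ext e0
    · exact Subtype.ext e1

lemma boundary_closed : IsClosed (Cube.boundary (Fin 2)) := by
  have : Cube.boundary (Fin 2) = ⋃ i : Fin 2, ({y | y i = 0} ∪ {y | y i = 1}) := by
    ext y; simp [Cube.boundary]
  rw [this]
  apply isClosed_iUnion_of_finite
  intro i
  exact IsClosed.union
    (isClosed_singleton.preimage (continuous_apply i))
    (isClosed_singleton.preimage (continuous_apply i))

lemma Pm_continuous : Continuous Pm := by
  rw [continuous_iff_continuousAt]
  intro y₀
  by_cases h : y₀ ∈ Cube.boundary (Fin 2)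
  · -- boundary point: Pm tends to bC
    have hPy : Pm y₀ = bC := Pm_boundary h
    rw [ContinuousAt, hPy]
    have hsplit : 𝓝 y₀ = 𝓝[Cube.boundary (Fin 2)] y₀ ⊔ 𝓝[(Cube.boundary (Fin 2))ᶜ] y₀ := by
      rw [← nhdsWithin_univ, ← Set.union_compl_self (Cube.boundary (Fin 2)), nhdsWithin_union]
    rw [hsplit]
    rw [tendsto_sup]
    constructor
    · have : Tendsto (fun _ : Fin 2 → unitInterval => bC) (𝓝[Cube.boundary (Fin 2)] y₀) (𝓝 bC) :=
        tendsto_const_nhds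
      refine this.congr' ?_
      filter_upwards [self_mem_nhdsWithin] with y hy
      exact (Pm_boundary hy).symm
    · -- within the interior
      set F := 𝓝[(Cube.boundary (Fin 2))ᶜ] y₀ with hF
      obtain ⟨i, hi⟩ := h
      -- coordinate i tends to 0 or 1 within Ioo 0 1
      have hcoord : Tendsto (fun y : Fin 2 → unitInterval => ((y i : ℝ)))
          F (𝓝[Set.Ioo (0:ℝ) 1] ((y₀ i : ℝ))) := by
        rw [tendsto_nhdsWithin_iff]
        constructor
        · exact ((continuous_subtype_val.comp (continuous_apply i)).tendsto y₀).mono_left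
            nhdsWithin_le_nhds
        · filter_upwards [self_mem_nhdsWithin] with y hy
          have := (not_boundary_iff.mp hy) i
          exact ⟨this.1, this.2⟩
      have hsq : Tendsto (fun y : Fin 2 → unitInterval => (Lm (y i))^2) F atTop := by
        rcases hi with hi | hi
        · have h0 : ((y₀ i : ℝ)) = 0 := by rw [hi]; rfl
          rw [h0] at hcoord
          exact sq_tendsto_atBot.comp (Lm_tendsto_zero.comp hcoord)
        · have h0 : ((y₀ i : ℝ)) = 1 := by rw [hi]; rfl
          rw [h0] at hcoord
          exact sq_tendsto_atTop.comp (Lm_tendsto_one.comp hcoord)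
      have hQ : Tendsto (fun y : Fin 2 → unitInterval =>
          (Lm (y 0))^2 + (Lm (y 1))^2) F atTop := by
        apply tendsto_atTop_mono _ hsq
        intro y
        have h2 : i = 0 ∨ i = 1 := by omega
        rcases h2 with rfl | rfl
        · nlinarith [sq_nonneg (Lm (y 1))]
        · nlinarith [sq_nonneg (Lm (y 0))]
      have hmu := tendsto_muC hQ
      refine hmu.congr' ?_
      filter_upwards [self_mem_nhdsWithin] with y hy
      exact (Pm_interior hy).symm
  · -- interior point
    have hmem := not_boundary_iff.mp h
    have hopen : IsOpen (Cube.boundary (Fin 2))ᶜ := boundary_closed.isOpen_compl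
    have hev : ∀ᶠ y in 𝓝 y₀, Pm y = muC (Lm (y 0)) (Lm (y 1)) := by
      filter_upwards [hopen.mem_nhds h] with y hy
      exact Pm_interior hy
    have hc0 : Continuous (fun y : Fin 2 → unitInterval => ((y 0 : ℝ))) := by fun_prop
    have hc1 : Continuous (fun y : Fin 2 → unitInterval => ((y 1 : ℝ))) := by fun_prop
    have hL0 : ContinuousAt (fun y : Fin 2 → unitInterval => Lm ((y 0 : ℝ))) y₀ :=
      ContinuousAt.comp (g := Lm) (f := fun y : Fin 2 → unitInterval => ((y 0 : ℝ)))
        (Lm_continuousAt (hmem 0).1 (hmem 0).2) hc0.continuousAt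
    have hL1 : ContinuousAt (fun y : Fin 2 → unitInterval => Lm ((y 1 : ℝ))) y₀ :=
      ContinuousAt.comp (g := Lm) (f := fun y : Fin 2 → unitInterval => ((y 1 : ℝ)))
        (Lm_continuousAt (hmem 1).1 (hmem 1).2) hc1.continuousAt
    have hcont : ContinuousAt (fun y : Fin 2 → unitInterval => muC (Lm ((y 0 : ℝ))) (Lm ((y 1 : ℝ)))) y₀ :=
      ContinuousAt.comp (g := fun p : ℝ × ℝ => muC p.1 p.2)
        (f := fun y : Fin 2 → unitInterval => (Lm ((y 0 : ℝ)), Lm ((y 1 : ℝ))))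
        continuous_muC.continuousAt (hL0.prodMk hL1)
    refine hcont.congr ?_
    filter_upwards [hopen.mem_nhds h] with y hy
    exact (Pm_interior hy).symm

end

section UnitLoop

lemma unitLoop_eq (t : ℝ) : unitLoop t = Complex.exp (((2 * Real.pi * t : ℝ) : ℂ) * Complex.I) := by
  rw [unitLoop]
  norm_cast

lemma unitLoop_mem_sphere (t : ℝ) : unitLoop t ∈ sphere (0:ℂ) 1 := by
  rw [unitLoop_eq, mem_sphere_iff_norm, sub_zero,
    Complex.norm_exp_ofReal_mul_I]

lemma unitLoop_zero : unitLoop 0 = 1 := by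
  rw [unitLoop]
  norm_num

lemma unitLoop_eq_iff {t t' : ℝ} (ht : t ∈ Icc (0:ℝ) 1) (ht' : t' ∈ Icc (0:ℝ) 1)
    (h : unitLoop t = unitLoop t') :
    t = t' ∨ (t = 0 ∧ t' = 1) ∨ (t = 1 ∧ t' = 0) := by
  rw [unitLoop_eq, unitLoop_eq] at h
  obtain ⟨n, hn⟩ := Complex.exp_eq_exp_iff_exists_int.mp h
  have him := congrArg Complex.im hn
  have hπ := Real.pi_pos
  simp only [Complex.add_im, Complex.mul_im, Complex.I_im, Complex.I_re, Complex.ofReal_re,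
    Complex.ofReal_im, Complex.intCast_im, Complex.intCast_re, Complex.mul_re, Complex.re_ofNat,
    Complex.im_ofNat] at him
  -- him should say 2π t = 2π t' + n * 2π
  have htn : t = t' + n := by
    have h2 : 2 * Real.pi * t = 2 * Real.pi * t' + n * (2 * Real.pi) := by nlinarith [him]
    have := Real.pi_ne_zero
    nlinarith [h2]
  have hn1 : (-1 : ℝ) ≤ (n : ℝ) := by
    rw [htn] at ht; obtain ⟨h1, h2⟩ := ht; obtain ⟨h1', h2'⟩ := ht'; linarith
  have hn2 : ((n : ℝ)) ≤ 1 := by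
    rw [htn] at ht; obtain ⟨h1, h2⟩ := ht; obtain ⟨h1', h2'⟩ := ht'; linarith
  have hn1' : (-1 : ℤ) ≤ n := by exact_mod_cast hn1
  have hn2' : n ≤ (1 : ℤ) := by exact_mod_cast hn2
  interval_cases n
  · right; left
    push_cast at htn
    exact ⟨by linarith [ht.1, ht.2, ht'.1, ht'.2], by linarith [ht.1, ht.2, ht'.1, ht'.2]⟩
  · left; push_cast at htn; linarith
  · right; right
    push_cast at htn
    exact ⟨by linarith [ht.1, ht.2, ht'.1, ht'.2], by linarith [ht.1, ht.2, ht'.1, ht'.2]⟩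

lemma unitLoop_surj {ζ : ℂ} (h : ζ ∈ sphere (0:ℂ) 1) :
    ∃ t, t ∈ Icc (0:ℝ) 1 ∧ unitLoop t = ζ := by
  have habs : ‖ζ‖ = 1 := by
    rwa [mem_sphere_iff_norm, sub_zero] at h
  have hζ : Complex.exp (((Complex.arg ζ : ℝ) : ℂ) * Complex.I) = ζ := by
    have := Complex.norm_mul_exp_arg_mul_I ζ
    rwa [habs, Complex.ofReal_one, one_mul] at this
  have hπ := Real.pi_pos
  have harg1 := Complex.arg_le_pi ζ
  have harg2 := Complex.neg_pi_lt_arg ζ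
  by_cases hpos : 0 ≤ Complex.arg ζ
  · refine ⟨Complex.arg ζ / (2 * Real.pi), ⟨by positivity, ?_⟩, ?_⟩
    · rw [div_le_one (by positivity)]; linarith
    · rw [unitLoop_eq]
      have : 2 * Real.pi * (Complex.arg ζ / (2 * Real.pi)) = Complex.arg ζ := by
        field_simp
      rw [this, hζ]
  · refine ⟨Complex.arg ζ / (2 * Real.pi) + 1, ⟨?_, ?_⟩, ?_⟩
    · have : -(2 * Real.pi) < Complex.arg ζ := by linarith
      have h2 : (-1 : ℝ) < Complex.arg ζ / (2 * Real.pi) := by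
        rw [lt_div_iff₀ (by positivity)]; linarith
      linarith
    · have h2 : Complex.arg ζ / (2 * Real.pi) < 0 := by
        apply div_neg_of_neg_of_pos (by linarith) (by positivity)
      linarith
    · rw [unitLoop_eq]
      have heq : 2 * Real.pi * (Complex.arg ζ / (2 * Real.pi) + 1) = Complex.arg ζ + 2 * Real.pi := by
        field_simp
      rw [heq]
      push_cast
      rw [add_mul, Complex.exp_add]
      have h2π : Complex.exp (((2 * Real.pi : ℝ) : ℂ) * Complex.I) = 1 := by
        push_cast
        rw [show ((2:ℂ) * Real.pi * Complex.I) = (2 * ↑Real.pi * Complex.I) from rfl]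
        exact Complex.exp_two_pi_mul_I
      push_cast at h2π hζ ⊢
      rw [h2π, mul_one, hζ]

end UnitLoop

section Faces

lemma mnorm_face {s : ℝ} {ζ : ℂ} (hs : s = 0 ∨ s = 1) (h : ‖ζ‖ ≤ 1) :
    mnorm ((s, ζ) - cC) = 1 := by
  have h1 : 2 * |s - 1/2| = 1 := by
    rcases hs with rfl | rfl
    · rw [_root_.abs_of_nonpos (by norm_num : (0:ℝ) - 1/2 ≤ 0)]; norm_num
    · rw [_root_.abs_of_nonneg (by norm_num : (0:ℝ) ≤ 1 - 1/2)]; norm_num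
  simp only [mnorm, cC, Prod.mk_sub_mk, sub_zero]
  rw [h1]
  exact max_eq_left h

lemma mnorm_side {s : ℝ} {ζ : ℂ} (hs : s ∈ Icc (0:ℝ) 1) (h : ‖ζ‖ = 1) :
    mnorm ((s, ζ) - cC) = 1 := by
  simp only [mnorm, cC, Prod.mk_sub_mk, sub_zero]
  rw [h]
  apply max_eq_right
  have : |s - 1/2| ≤ 1/2 := by rw [abs_le]; constructor <;> [linarith [hs.1]; linarith [hs.2]]
  linarith

end Faces

lemma mnorm_sub_cC (p : ℝ × ℂ) : mnorm (p - cC) = max (2 * |p.1 - 1/2|) (‖p.2‖) := by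
  simp [mnorm, cC]

open unitInterval in
/-- **Theorem 6.2(2)**: if `π₂(M, w₀)` is trivial and `f₀, f₁ ∈ ℛ_{w₀}(W, M)` have
boundary loops that are homotopic rel endpoints through loops in `W`, then `f₀` and `f₁`
are homotopic in `ℛ_{w₀}(W, M)`; i.e. the boundary-loop homomorphism
`δ₂ : ρ₁(W, M, w₀) → π₁(W, w₀)` is injective when `π₂(M, w₀) = 0`. -/
theorem boundary_map_injective_of_pi2_trivial
    (M : Type*) [TopologicalSpace M] (W : Set M) (w₀ : M) (hw₀ : w₀ ∈ W)
    (hπ2 : Subsingleton (HomotopyGroup (Fin 2) M w₀))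
    (f₀ f₁ : ℂ → M)
    (hf₀c : ContinuousOn f₀ (closedBall (0:ℂ) 1))
    (hf₀W : ∀ ζ ∈ sphere (0:ℂ) 1, f₀ ζ ∈ W) (hf₀1 : f₀ 1 = w₀)
    (hf₁c : ContinuousOn f₁ (closedBall (0:ℂ) 1))
    (hf₁W : ∀ ζ ∈ sphere (0:ℂ) 1, f₁ ζ ∈ W) (hf₁1 : f₁ 1 = w₀)
    (γ₀ γ₁ : Path (⟨w₀, hw₀⟩ : W) (⟨w₀, hw₀⟩ : W))
    (hγ₀ : ∀ t : unitInterval, (γ₀ t : M) = f₀ (unitLoop t))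
    (hγ₁ : ∀ t : unitInterval, (γ₁ t : M) = f₁ (unitLoop t))
    (hhom : γ₀.Homotopic γ₁) :
    ∃ H : ℝ × ℂ → M,
      ContinuousOn H (Icc (0:ℝ) 1 ×ˢ closedBall (0:ℂ) 1) ∧
      (∀ ζ ∈ closedBall (0:ℂ) 1, H (0, ζ) = f₀ ζ) ∧
      (∀ ζ ∈ closedBall (0:ℂ) 1, H (1, ζ) = f₁ ζ) ∧
      ∀ t ∈ Icc (0:ℝ) 1, (∀ ζ ∈ sphere (0:ℂ) 1, H (t, ζ) ∈ W) ∧ H (t, 1) = w₀ := by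
  classical
  obtain ⟨Γh⟩ := hhom
  -- the side set and sphere set
  set Side : Set (ℝ × ℂ) := Icc (0:ℝ) 1 ×ˢ sphere (0:ℂ) 1 with hSide_def
  set Cyl : Set (ℝ × ℂ) := Icc (0:ℝ) 1 ×ˢ closedBall (0:ℂ) 1 with hCyl_def
  -- the homotopy of boundary loops, valued in M
  set ΓM : unitInterval × unitInterval → M := fun st => ((Γh st : W) : M) with hΓM_def
  have hΓM_cont : Continuous ΓM := continuous_subtype_val.comp Γh.continuous
  -- the parametrization of the side
  have hqE_mem : ∀ st : unitInterval × unitInterval,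
      ((st.1 : ℝ), unitLoop (st.2 : ℝ)) ∈ Side := fun st =>
    Set.mem_prod.mpr ⟨st.1.2, unitLoop_mem_sphere _⟩
  set qE : unitInterval × unitInterval → ↥Side :=
    fun st => ⟨((st.1 : ℝ), unitLoop (st.2 : ℝ)), hqE_mem st⟩ with hqE_def
  have hqE_cont : Continuous qE := by
    apply Continuous.subtype_mk
    apply Continuous.prodMk
    · exact continuous_subtype_val.comp continuous_fst
    · have hul : Continuous unitLoop := by
        apply Complex.continuous_exp.comp
        fun_prop
      exact hul.comp (continuous_subtype_val.comp continuous_snd)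
  have hqE_surj : Function.Surjective qE := by
    rintro ⟨⟨s, ζ⟩, hp⟩
    obtain ⟨hps, hpζ⟩ := hp
    obtain ⟨t, ht, hult⟩ := unitLoop_surj hpζ
    exact ⟨(⟨s, hps⟩, ⟨t, ht⟩), Subtype.ext (Prod.ext rfl hult)⟩
  -- boundary values of the loop homotopy
  have hΓ_ends : ∀ s : unitInterval, ∀ t : unitInterval, (t = 0 ∨ t = 1) → ΓM (s, t) = w₀ := by
    intro s t ht
    have hmem : t ∈ ({0, 1} : Set unitInterval) := by
      rcases ht with rfl | rfl
      · exact Set.mem_insert _ _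
      · exact Set.mem_insert_of_mem _ rfl
    have := Γh.eq_fst s hmem
    rw [hΓM_def]
    simp only []
    rw [this]
    rcases ht with rfl | rfl
    · rw [show γ₀.toContinuousMap 0 = γ₀ 0 from rfl, γ₀.source]
    · rw [show γ₀.toContinuousMap 1 = γ₀ 1 from rfl, γ₀.target]
  -- descend ΓM along qE
  have hΓ_fib : ∀ a b : unitInterval × unitInterval, qE a = qE b → ΓM a = ΓM b := by
    rintro ⟨s, t⟩ ⟨s', t'⟩ hab
    have hval : ((qE (s, t) : ℝ × ℂ)) = (qE (s', t') : ℝ × ℂ) := Subtype.ext_iff.mp hab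
    have h1 : (s : ℝ) = (s' : ℝ) := (Prod.ext_iff.mp hval).1
    have h2 : unitLoop (t : ℝ) = unitLoop (t' : ℝ) := (Prod.ext_iff.mp hval).2
    have hs : s = s' := Subtype.ext h1
    rcases unitLoop_eq_iff t.2 t'.2 h2 with h | ⟨ha, hb⟩ | ⟨ha, hb⟩
    · rw [hs, Subtype.ext h]
    · rw [hΓ_ends s t (Or.inl (Subtype.ext ha)), hΓ_ends s' t' (Or.inr (Subtype.ext hb))]
    · rw [hΓ_ends s t (Or.inr (Subtype.ext ha)), hΓ_ends s' t' (Or.inl (Subtype.ext hb))]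
  obtain ⟨Γb, hΓb_cont, hΓb_eq⟩ := descend hqE_cont hqE_surj ΓM hΓM_cont hΓ_fib
  have hΓb_W : ∀ p : ↥Side, Γb p ∈ W := by
    intro p
    obtain ⟨st, hst⟩ := hqE_surj p
    rw [← hst, hΓb_eq]
    exact (Γh st).2
  -- the boundary sphere map β
  set Γbar : ℝ × ℂ → M := fun p => if h : p ∈ Side then Γb ⟨p, h⟩ else w₀ with hΓbar_def
  have hΓbar_eq : ∀ (p : ℝ × ℂ) (h : p ∈ Side), Γbar p = Γb ⟨p, h⟩ := fun p h => dif_pos h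
  have hΓbar_cont : ContinuousOn Γbar Side := by
    rw [continuousOn_iff_continuous_restrict]
    have : Side.domRestrict Γbar = Γb := by
      funext x
      show Γbar ↑x = Γb x
      rw [hΓbar_eq ↑x x.2]
    rw [this]
    exact hΓb_cont
  set β : ℝ × ℂ → M := fun p =>
    if p.1 ≤ 0 then f₀ p.2 else if 1 ≤ p.1 then f₁ p.2 else Γbar p with hβ_def
  have hβ0 : ∀ ζ : ℂ, β (0, ζ) = f₀ ζ := fun ζ => if_pos le_rfl
  have hβ1 : ∀ ζ : ℂ, β (1, ζ) = f₁ ζ := by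
    intro ζ
    show (if (1:ℝ) ≤ 0 then f₀ ζ else if (1:ℝ) ≤ 1 then f₁ ζ else Γbar (1, ζ)) = f₁ ζ
    rw [if_neg (by norm_num), if_pos le_rfl]
  -- β agrees with Γbar on the side
  have hβ_side : ∀ p ∈ Side, β p = Γbar p := by
    rintro ⟨s, ζ⟩ hp
    obtain ⟨hps, hpζ⟩ := hp
    obtain ⟨t, ht, hult⟩ := unitLoop_surj hpζ
    by_cases h0 : s ≤ 0
    · have hs0 : s = 0 := le_antisymm h0 hps.1
      subst hs0
      have hq : qE (⟨0, by norm_num, by norm_num⟩, ⟨t, ht⟩) = ⟨((0:ℝ), ζ), ⟨hps, hpζ⟩⟩ :=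
        Subtype.ext (Prod.ext rfl hult)
      have hult' : unitLoop t = ζ := hult
      rw [hβ0, hΓbar_eq _ ⟨hps, hpζ⟩, ← hq, hΓb_eq]
      rw [hΓM_def]
      simp only []
      rw [show Γh (⟨0, by norm_num, by norm_num⟩, ⟨t, ht⟩) = γ₀ ⟨t, ht⟩ from Γh.apply_zero _]
      rw [hγ₀, show ((⟨t, ht⟩ : unitInterval) : ℝ) = t from rfl, hult']
    · by_cases h1 : 1 ≤ s
      · have hs1 : s = 1 := le_antisymm hps.2 h1
        subst hs1
        have hq : qE (⟨1, by norm_num, by norm_num⟩, ⟨t, ht⟩) = ⟨((1:ℝ), ζ), ⟨hps, hpζ⟩⟩ :=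
          Subtype.ext (Prod.ext rfl hult)
        have hult' : unitLoop t = ζ := hult
        rw [hβ1, hΓbar_eq _ ⟨hps, hpζ⟩, ← hq, hΓb_eq]
        rw [hΓM_def]
        simp only []
        rw [show Γh (⟨1, by norm_num, by norm_num⟩, ⟨t, ht⟩) = γ₁ ⟨t, ht⟩ from Γh.apply_one _]
        rw [hγ₁, show ((⟨t, ht⟩ : unitInterval) : ℝ) = t from rfl, hult']
      · show (if s ≤ 0 then _ else if 1 ≤ s then _ else Γbar (s, ζ)) = Γbar (s, ζ)
        rw [if_neg h0, if_neg h1]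
  have hβ_W : ∀ p ∈ Side, β p ∈ W := by
    intro p hp
    rw [hβ_side p hp, hΓbar_eq p hp]
    exact hΓb_W _
  have hβ_base : ∀ s ∈ Icc (0:ℝ) 1, β (s, 1) = w₀ := by
    intro s hs
    have hmem : ((s : ℝ), (1:ℂ)) ∈ Side := Set.mem_prod.mpr ⟨hs, by simp⟩
    have hq : qE (⟨s, hs⟩, 0) = ⟨((s:ℝ), (1:ℂ)), hmem⟩ :=
      Subtype.ext (Prod.ext rfl (unitLoop_zero))
    rw [hβ_side _ hmem, hΓbar_eq _ hmem, ← hq, hΓb_eq]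
    exact hΓ_ends ⟨s, hs⟩ 0 (Or.inl rfl)
  -- continuity of β on the sphere
  have hβ_cont : ContinuousOn β {p : ℝ × ℂ | mnorm (p - cC) = 1} := by
    have hB0 : ContinuousOn β (({0} : Set ℝ) ×ˢ closedBall (0:ℂ) 1) := by
      apply ContinuousOn.congr (f := fun p : ℝ × ℂ => f₀ p.2)
      · exact hf₀c.comp continuous_snd.continuousOn (fun p hp => hp.2)
      · rintro ⟨s, ζ⟩ hp
        have hs : s = (0:ℝ) := hp.1
        subst hs
        exact hβ0 ζ
    have hB1 : ContinuousOn β (({1} : Set ℝ) ×ˢ closedBall (0:ℂ) 1) := by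
      apply ContinuousOn.congr (f := fun p : ℝ × ℂ => f₁ p.2)
      · exact hf₁c.comp continuous_snd.continuousOn (fun p hp => hp.2)
      · rintro ⟨s, ζ⟩ hp
        have hs : s = (1:ℝ) := hp.1
        subst hs
        exact hβ1 ζ
    have hSd : ContinuousOn β Side := hΓbar_cont.congr hβ_side
    have hcl0 : IsClosed (({0} : Set ℝ) ×ˢ closedBall (0:ℂ) 1) :=
      isClosed_singleton.prod Metric.isClosed_closedBall
    have hcl1 : IsClosed (({1} : Set ℝ) ×ˢ closedBall (0:ℂ) 1) :=
      isClosed_singleton.prod Metric.isClosed_closedBall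
    have hclS : IsClosed Side := isClosed_Icc.prod Metric.isClosed_sphere
    have hunion := pasting (hcl0.union hcl1) hclS (pasting hcl0 hcl1 hB0 hB1) hSd
    apply hunion.mono
    intro p hp
    have hp' : p ∈ Cyl := mem_sph_cyl hp
    obtain ⟨hp1, hp2⟩ := hp'
    have habs_le : ‖p.2‖ ≤ 1 := by
      rwa [mem_closedBall, Complex.dist_eq, sub_zero] at hp2
    by_cases habs : ‖p.2‖ = 1
    · exact Or.inr (Set.mem_prod.mpr ⟨hp1, by rwa [mem_sphere_iff_norm, sub_zero]⟩)
    · left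
      have hmax : max (2 * |p.1 - 1/2|) (‖p.2‖) = 1 := by
        rw [← mnorm_sub_cC]
        exact hp
      have h2 : 2 * |p.1 - 1/2| = 1 := by
        rcases max_cases (2 * |p.1 - 1/2|) (‖p.2‖) with ⟨he, _⟩ | ⟨he, _⟩
        · exact he.symm.trans hmax
        · exact absurd (he.symm.trans hmax) habs
      have : |p.1 - 1/2| = 1/2 := by linarith
      rcases abs_eq (by norm_num : (0:ℝ) ≤ 1/2) |>.mp this with h | h
      · right
        refine Set.mem_prod.mpr ⟨?_, hp2⟩
        have : p.1 = 1 := by linarith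
        simp [this]
      · left
        refine Set.mem_prod.mpr ⟨?_, hp2⟩
        have : p.1 = 0 := by linarith
        simp [this]
  -- the generalized loop obtained by composing with the square-to-sphere map
  set gmap : (Fin 2 → unitInterval) → M := fun y => β (Pm y) with hgmap_def
  have hg_cont : Continuous gmap :=
    hβ_cont.comp_continuous Pm_continuous (fun y => Pm_mem y)
  have hβbC : β bC = w₀ := by
    have : β ((1/2 : ℝ), (1:ℂ)) = w₀ := hβ_base (1/2) (by norm_num)
    exact this
  have hg_bd : ∀ y ∈ Cube.boundary (Fin 2), gmap y = w₀ := by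
    intro y hy
    rw [hgmap_def]
    simp only []
    rw [Pm_boundary hy, hβbC]
  set g : GenLoop (Fin 2) M w₀ := ⟨⟨gmap, hg_cont⟩, hg_bd⟩ with hg_def
  -- triviality of π₂ gives a null-homotopy of g rel boundary
  have hhtp : GenLoop.Homotopic g GenLoop.const := by
    have := Subsingleton.elim (α := HomotopyGroup (Fin 2) M w₀)
      (Quotient.mk _ g) (Quotient.mk _ GenLoop.const)
    exact Quotient.exact this
  obtain ⟨K⟩ := hhtp
  -- descend K along the square-to-sphere map
  set Sph : Set (ℝ × ℂ) := {p : ℝ × ℂ | mnorm (p - cC) = 1} with hSph_def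
  haveI : CompactSpace ↥Sph := by
    rw [← isCompact_iff_compactSpace]
    exact IsCompact.of_isClosed_subset
      ((isCompact_Icc ).prod (isCompact_closedBall (0:ℂ) 1))
      (isClosed_eq (continuous_mnorm.comp (continuous_id.sub continuous_const))
        continuous_const)
      (fun p hp => mem_sph_cyl hp)
  set qK : unitInterval × (Fin 2 → unitInterval) → unitInterval × ↥Sph :=
    fun p => (p.1, ⟨Pm p.2, Pm_mem p.2⟩) with hqK_def
  have hqK_cont : Continuous qK :=
    continuous_fst.prodMk ((Pm_continuous.comp continuous_snd).subtype_mk _)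
  have hqK_surj : Function.Surjective qK := by
    rintro ⟨τ, ⟨p, hp⟩⟩
    obtain ⟨y, hy⟩ := Pm_surj hp
    exact ⟨(τ, y), Prod.ext rfl (Subtype.ext hy)⟩
  have hK_fib : ∀ a b : unitInterval × (Fin 2 → unitInterval),
      qK a = qK b → K (a.1, a.2) = K (b.1, b.2) := by
    rintro ⟨τ, y⟩ ⟨τ', y'⟩ hab
    have h1 : τ = τ' := (Prod.ext_iff.mp hab).1
    have h2 : Pm y = Pm y' := Subtype.ext_iff.mp (Prod.ext_iff.mp hab).2
    subst h1
    rcases Pm_fiber h2 with rfl | ⟨hy, hy'⟩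
    · rfl
    · have e1 : K (τ, y) = gmap y := K.eq_fst τ hy
      have e2 : K (τ, y') = gmap y' := K.eq_fst τ hy'
      rw [e1, e2, hg_bd y hy, hg_bd y' hy']
  obtain ⟨Kb, hKb_cont, hKb_eq⟩ := descend hqK_cont hqK_surj
    (fun p => K (p.1, p.2)) (K.continuous.comp continuous_id) hK_fib
  have hKb0 : ∀ b : ↥Sph, Kb (0, b) = β b := by
    intro b
    obtain ⟨⟨τ, y⟩, hy⟩ := hqK_surj (0, b)
    have hτ : τ = 0 := (Prod.ext_iff.mp hy).1
    subst hτ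
    have hpm : Pm y = (b : ℝ × ℂ) := Subtype.ext_iff.mp (Prod.ext_iff.mp hy).2
    rw [← hy, hKb_eq]
    show K ((0 : unitInterval), y) = β b
    rw [K.apply_zero]
    show gmap y = β b
    rw [hgmap_def]
    simp only []
    rw [hpm]
  have hKb1 : ∀ b : ↥Sph, Kb (1, b) = w₀ := by
    intro b
    obtain ⟨⟨τ, y⟩, hy⟩ := hqK_surj (1, b)
    have hτ : τ = 1 := (Prod.ext_iff.mp hy).1
    subst hτ
    rw [← hy, hKb_eq]
    show K ((1 : unitInterval), y) = w₀
    rw [K.apply_one]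
    rfl
  -- the cone map
  have hqc_mem : ∀ lb : unitInterval × ↥Sph,
      cC + (lb.1 : ℝ) • ((lb.2 : ℝ × ℂ) - cC) ∈ Cyl := by
    intro lb
    rw [hCyl_def]
    apply mem_cyl_iff.mpr
    rw [add_sub_cancel_left, mnorm_smul _ lb.1.2.1, lb.2.2, mul_one]
    exact lb.1.2.2
  set qc : unitInterval × ↥Sph → ↥Cyl :=
    fun lb => ⟨cC + (lb.1 : ℝ) • ((lb.2 : ℝ × ℂ) - cC), hqc_mem lb⟩ with hqc_def
  have hqc_cont : Continuous qc := by
    apply Continuous.subtype_mk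
    exact continuous_const.add ((continuous_subtype_val.comp continuous_fst).smul
      ((continuous_subtype_val.comp continuous_snd).sub continuous_const))
  have hbC_Sph : bC ∈ Sph := by
    rw [hSph_def]
    show mnorm (bC - cC) = 1
    rw [bC_sub_cC, mnorm_pole]
  have hqc_surj : Function.Surjective qc := by
    rintro ⟨p, hp⟩
    have hple : mnorm (p - cC) ≤ 1 := mem_cyl_iff.mp hp
    by_cases hpc : p = cC
    · refine ⟨(0, ⟨bC, hbC_Sph⟩), Subtype.ext ?_⟩
      show cC + ((0 : unitInterval) : ℝ) • _ = p
      rw [show ((0 : unitInterval) : ℝ) = (0:ℝ) from rfl, zero_smul, add_zero, hpc]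
    · have hm0 : mnorm (p - cC) ≠ 0 := by
        intro h
        exact hpc (by have := mnorm_eq_zero h; rwa [sub_eq_zero] at this)
      have hmpos : 0 < mnorm (p - cC) := lt_of_le_of_ne (mnorm_nonneg _) (Ne.symm hm0)
      have hbmem : cC + (mnorm (p - cC))⁻¹ • (p - cC) ∈ Sph := by
        rw [hSph_def]
        show mnorm _ = 1
        rw [add_sub_cancel_left, mnorm_smul _ (inv_nonneg.mpr hmpos.le)]
        exact inv_mul_cancel₀ hm0
      refine ⟨(⟨mnorm (p - cC), hmpos.le, hple⟩, ⟨_, hbmem⟩), Subtype.ext ?_⟩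
      show cC + mnorm (p - cC) • (cC + (mnorm (p - cC))⁻¹ • (p - cC) - cC) = p
      rw [add_sub_cancel_left, smul_smul, mul_inv_cancel₀ hm0, one_smul, add_sub_cancel]
  have hqc_fib : ∀ a b : unitInterval × ↥Sph, qc a = qc b →
      Kb (σ a.1, a.2) = Kb (σ b.1, b.2) := by
    rintro ⟨lam, A⟩ ⟨lam', B⟩ hab
    have hval : cC + (lam : ℝ) • ((A : ℝ × ℂ) - cC) = cC + (lam' : ℝ) • ((B : ℝ × ℂ) - cC) :=
      Subtype.ext_iff.mp hab
    have hval' : (lam : ℝ) • ((A : ℝ × ℂ) - cC) = (lam' : ℝ) • ((B : ℝ × ℂ) - cC) :=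
      add_left_cancel hval
    have hlam : (lam : ℝ) = (lam' : ℝ) := by
      have h1 := congrArg mnorm hval'
      rw [mnorm_smul _ lam.2.1, mnorm_smul _ lam'.2.1, A.2, B.2, mul_one, mul_one] at h1
      exact h1
    have hlam' : lam = lam' := Subtype.ext hlam
    subst hlam'
    by_cases h0 : (lam : ℝ) = 0
    · have hlam0 : lam = 0 := Subtype.ext h0
      subst hlam0
      rw [symm_zero]
      rw [hKb1, hKb1]
    · have hAB : (A : ℝ × ℂ) - cC = (B : ℝ × ℂ) - cC := smul_right_injective _ h0 hval'
      have : A = B := Subtype.ext (by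
        have := congrArg (fun w => w + cC) hAB
        simpa using this)
      rw [this]
  obtain ⟨Hc, hHc_cont, hHc_eq⟩ := descend hqc_cont hqc_surj
    (fun lb => Kb (σ lb.1, lb.2)) (hKb_cont.comp ((continuous_symm.comp continuous_fst).prodMk
      continuous_snd)) hqc_fib
  -- value of Hc on the boundary sphere
  have hHc_sph : ∀ (p : ℝ × ℂ) (hp : p ∈ Sph) (hpc : p ∈ Cyl), Hc ⟨p, hpc⟩ = β p := by
    intro p hp hpc
    have hq1 : qc (1, ⟨p, hp⟩) = ⟨p, hpc⟩ := by
      apply Subtype.ext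
      show cC + ((1 : unitInterval) : ℝ) • (p - cC) = p
      rw [show ((1 : unitInterval) : ℝ) = (1:ℝ) from rfl, one_smul, add_sub_cancel]
    rw [← hq1, hHc_eq]
    show Kb (σ 1, ⟨p, hp⟩) = β p
    rw [symm_one]
    exact hKb0 ⟨p, hp⟩
  -- assemble the final homotopy
  set H : ℝ × ℂ → M := fun p => if h : p ∈ Cyl then Hc ⟨p, h⟩ else w₀ with hH_def
  have hH_eq : ∀ (p : ℝ × ℂ) (h : p ∈ Cyl), H p = Hc ⟨p, h⟩ := fun p h => dif_pos h
  refine ⟨H, ?_, ?_, ?_, ?_⟩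
  · -- continuity
    rw [continuousOn_iff_continuous_restrict]
    have : Cyl.domRestrict H = Hc := by
      funext x
      rw [Set.domRestrict_apply, hH_eq _ x.2]
    rw [this]
    exact hHc_cont
  · -- value at time 0
    intro ζ hζ
    have habs : ‖ζ‖ ≤ 1 := by
      rwa [mem_closedBall, Complex.dist_eq, sub_zero] at hζ
    have hsph : ((0:ℝ), ζ) ∈ Sph := mnorm_face (Or.inl rfl) habs
    have hcyl : ((0:ℝ), ζ) ∈ Cyl := by rw [hCyl_def]; exact mem_sph_cyl hsph
    rw [hH_eq _ hcyl, hHc_sph _ hsph hcyl, hβ0]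
  · -- value at time 1
    intro ζ hζ
    have habs : ‖ζ‖ ≤ 1 := by
      rwa [mem_closedBall, Complex.dist_eq, sub_zero] at hζ
    have hsph : ((1:ℝ), ζ) ∈ Sph := mnorm_face (Or.inr rfl) habs
    have hcyl : ((1:ℝ), ζ) ∈ Cyl := by rw [hCyl_def]; exact mem_sph_cyl hsph
    rw [hH_eq _ hcyl, hHc_sph _ hsph hcyl, hβ1]
  · -- side conditions
    intro t ht
    constructor
    · intro ζ hζ
      have habs : ‖ζ‖ = 1 := by
        rwa [mem_sphere_iff_norm, sub_zero] at hζ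
      have hsph : ((t:ℝ), ζ) ∈ Sph := mnorm_side ht habs
      have hcyl : ((t:ℝ), ζ) ∈ Cyl := by rw [hCyl_def]; exact mem_sph_cyl hsph
      rw [hH_eq _ hcyl, hHc_sph _ hsph hcyl]
      exact hβ_W _ (Set.mem_prod.mpr ⟨ht, hζ⟩)
    · have habs : ‖(1:ℂ)‖ = 1 := by simp
      have hsph : ((t:ℝ), (1:ℂ)) ∈ Sph := mnorm_side ht habs
      have hcyl : ((t:ℝ), (1:ℂ)) ∈ Cyl := by rw [hCyl_def]; exact mem_sph_cyl hsph
      rw [hH_eq _ hcyl, hHc_sph _ hsph hcyl]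
      exact hβ_base t ht
end

section
/- Let 0 < s < 1 < r and let A_{s,r} = {z ∈ ℂ : s < |z| < r}. Let f : ℂ → ℂ be continuous on 𝔻̄ and holomorphic on 𝔻 with f(𝕋) ⊆ A_{s,r} and f(1) = 1. Then there exist a natural number m and a continuous map H : [0,1] × 𝔻̄ → ℂ such that H(0, ζ) = f(ζ) and H(1, ζ) = ζ^m for all ζ ∈ 𝔻̄, and for every t ∈ [0,1] the map H(t, ·) is continuous on 𝔻̄, holomorphic on 𝔻, satisfies H(t, 𝕋) ⊆ A_{s,r} and H(t, 1) = 1. In other words, every element of 𝒜₁(A_{s,r}, ℂ) is h-homotopic to the monomial ζ ↦ ζ^m for some m ∈ ℕ. -/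
open Complex Metric Set

open Polynomial

set_option maxHeartbeats 2000000

section Helpers

noncomputable def Complex.abs : AbsoluteValue ℂ ℝ where
  toFun z := ‖z‖
  map_mul' := norm_mul
  nonneg' := norm_nonneg
  eq_zero' _ := norm_eq_zero
  add_le' := norm_add_le

lemma Complex.norm_eq_abs (z : ℂ) : ‖z‖ = Complex.abs z := rfl

lemma Complex.abs_ofReal (x : ℝ) : Complex.abs (x : ℂ) = |x| := Complex.norm_real x

lemma Complex.abs_conj (z : ℂ) : Complex.abs ((starRingEnd ℂ) z) = Complex.abs z :=
  Complex.norm_conj z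

lemma Complex.abs_exp (z : ℂ) : Complex.abs (cexp z) = Real.exp z.re := Complex.norm_exp z

lemma Complex.continuous_abs : Continuous Complex.abs := continuous_norm

lemma Complex.re_le_abs (z : ℂ) : z.re ≤ Complex.abs z := Complex.re_le_norm z

lemma Complex.normSq_eq_abs (z : ℂ) : Complex.normSq z = Complex.abs z ^ 2 :=
  Complex.normSq_eq_norm_sq z

lemma mem_cB {ζ : ℂ} : ζ ∈ closedBall (0:ℂ) 1 ↔ Complex.abs ζ ≤ 1 := by
  simp [Complex.norm_eq_abs]

lemma mem_sp {ζ : ℂ} : ζ ∈ sphere (0:ℂ) 1 ↔ Complex.abs ζ = 1 := by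
  simp [Complex.norm_eq_abs]

lemma mem_bb {ζ : ℂ} : ζ ∈ ball (0:ℂ) 1 ↔ Complex.abs ζ < 1 := by
  simp [Complex.norm_eq_abs]

lemma contOn_msum {α ι : Type*} [TopologicalSpace α] (S : Multiset ι) (F : ι → α → ℂ)
    (U : Set α) :
    (∀ i ∈ S, ContinuousOn (F i) U) →
      ContinuousOn (fun x => (S.map (fun i => F i x)).sum) U := by
  refine Multiset.induction_on S (fun _ => by simpa using continuousOn_const) ?_
  intro a S ih h
  simp only [Multiset.map_cons, Multiset.sum_cons]
  exact (h a (Multiset.mem_cons_self a S)).add (ih fun i hi => h i (Multiset.mem_cons_of_mem hi))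

lemma contOn_mprod {α ι : Type*} [TopologicalSpace α] (S : Multiset ι) (F : ι → α → ℂ)
    (U : Set α) :
    (∀ i ∈ S, ContinuousOn (F i) U) →
      ContinuousOn (fun x => (S.map (fun i => F i x)).prod) U := by
  refine Multiset.induction_on S (fun _ => by simpa using continuousOn_const) ?_
  intro a S ih h
  simp only [Multiset.map_cons, Multiset.prod_cons]
  exact (h a (Multiset.mem_cons_self a S)).mul (ih fun i hi => h i (Multiset.mem_cons_of_mem hi))

lemma diffOn_msum {ι : Type*} (S : Multiset ι) (F : ι → ℂ → ℂ) (U : Set ℂ) :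
    (∀ i ∈ S, DifferentiableOn ℂ (F i) U) →
      DifferentiableOn ℂ (fun x => (S.map (fun i => F i x)).sum) U := by
  refine Multiset.induction_on S (fun _ => by simpa using differentiableOn_const 0) ?_
  intro a S ih h
  simp only [Multiset.map_cons, Multiset.sum_cons]
  exact (h a (Multiset.mem_cons_self a S)).add (ih fun i hi => h i (Multiset.mem_cons_of_mem hi))

lemma diffOn_mprod {ι : Type*} (S : Multiset ι) (F : ι → ℂ → ℂ) (U : Set ℂ) :
    (∀ i ∈ S, DifferentiableOn ℂ (F i) U) →
      DifferentiableOn ℂ (fun x => (S.map (fun i => F i x)).prod) U := by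
  refine Multiset.induction_on S (fun _ => by simpa using differentiableOn_const 1) ?_
  intro a S ih h
  simp only [Multiset.map_cons, Multiset.prod_cons]
  exact (h a (Multiset.mem_cons_self a S)).mul (ih fun i hi => h i (Multiset.mem_cons_of_mem hi))

lemma exp_msum (S : Multiset ℂ) : cexp S.sum = (S.map cexp).prod := by
  refine Multiset.induction_on S (by simp) ?_
  intro a S ih
  simp [Complex.exp_add, ih]

lemma one_sub_ne {u : ℂ} (hu : Complex.abs u < 1) : 1 - u ≠ 0 := by
  intro h
  rw [sub_eq_zero] at h
  rw [← h] at hu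
  simp at hu

lemma one_sub_slit {u : ℂ} (hu : Complex.abs u < 1) : 1 - u ∈ Complex.slitPlane := by
  rw [Complex.mem_slitPlane_iff]
  left
  have := Complex.re_le_abs u
  simp only [Complex.sub_re, Complex.one_re]
  linarith

lemma abs_mul_lt_one {w ζ : ℂ} (hw : Complex.abs w < 1) (hζ : Complex.abs ζ ≤ 1) :
    Complex.abs ((starRingEnd ℂ) w * ζ) < 1 := by
  rw [map_mul, Complex.abs_conj]
  calc Complex.abs w * Complex.abs ζ ≤ Complex.abs w * 1 := by
        exact mul_le_mul_of_nonneg_left hζ (Complex.abs.nonneg w)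
    _ < 1 := by rwa [mul_one]

lemma abs_blaschke {w ζ : ℂ} (hw : Complex.abs w < 1) (hζ : Complex.abs ζ = 1) :
    Complex.abs ((ζ - w) / (1 - (starRingEnd ℂ) w * ζ)) = 1 := by
  have h1 : ζ * (starRingEnd ℂ) ζ = 1 := by
    rw [Complex.mul_conj]
    norm_cast
    rw [Complex.normSq_eq_abs, hζ]; norm_num
  have h2 : 1 - (starRingEnd ℂ) w * ζ = ζ * ((starRingEnd ℂ) ζ - (starRingEnd ℂ) w) := by
    rw [mul_sub, h1]; ring
  have hne : ζ ≠ w := by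
    intro h; rw [h] at hζ; linarith [hζ ▸ hw]
  have habs : Complex.abs (ζ - w) ≠ 0 := by
    simpa [sub_eq_zero] using hne
  rw [map_div₀, h2, map_mul, hζ, one_mul, ← map_sub (starRingEnd ℂ), Complex.abs_conj]
  exact div_self habs

lemma exp_interval {s r x σ : ℝ} (hs1 : s < 1) (hr : 1 < r)
    (h1 : s < Real.exp x) (h2 : Real.exp x < r) (hσ0 : 0 ≤ σ) (hσ1 : σ ≤ 1) :
    s < Real.exp (σ * x) ∧ Real.exp (σ * x) < r := by
  rcases le_or_gt 0 x with hx | hx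
  · constructor
    · have : (1:ℝ) ≤ Real.exp (σ * x) := Real.one_le_exp (mul_nonneg hσ0 hx)
      linarith
    · exact lt_of_le_of_lt (Real.exp_le_exp.2 (by nlinarith)) h2
  · constructor
    · exact lt_of_lt_of_le h1 (Real.exp_le_exp.2 (by nlinarith))
    · have : Real.exp (σ * x) ≤ 1 := Real.exp_le_one_iff.mpr (by nlinarith)
      linarith

lemma key_arith {s r s' r' : ℝ} (hs0 : 0 < s) (h1 : s < s') (h2 : r' < r) (hr'0 : 0 ≤ r') :
    ∃ ε, 0 < ε ∧ ε ≤ 1/2 ∧ s < (s' - ε)/(1+ε) ∧ (r'+ε)/(1-ε) < r := by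
  set e1 : ℝ := (s'-s)/(2*(1+s)) with he1
  set e2 : ℝ := (r-r')/(2*(1+r)) with he2
  have he1p : 0 < e1 := div_pos (by linarith) (by linarith)
  have he2p : 0 < e2 := div_pos (by linarith) (by linarith)
  set ε : ℝ := min (min e1 e2) (1/2) with hε
  have hεp : 0 < ε := lt_min (lt_min he1p he2p) (by norm_num)
  have hεh : ε ≤ 1/2 := min_le_right _ _
  have hεe1 : ε ≤ e1 := le_trans (min_le_left _ _) (min_le_left _ _)
  have hεe2 : ε ≤ e2 := le_trans (min_le_left _ _) (min_le_right _ _)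
  have k1 : ε * (2*(1+s)) ≤ s' - s := by
    rw [he1] at hεe1
    exact (le_div_iff₀ (by linarith)).1 hεe1
  have k2 : ε * (2*(1+r)) ≤ r - r' := by
    rw [he2] at hεe2
    exact (le_div_iff₀ (by linarith)).1 hεe2
  refine ⟨ε, hεp, hεh, ?_, ?_⟩
  · rw [lt_div_iff₀ (by linarith)]
    nlinarith
  · rw [div_lt_iff₀ (by linarith)]
    nlinarith

lemma quot_bound {s r s' r' ε a b : ℝ} (hε : 0 < ε) (hεh : ε ≤ 1/2) (hs : 0 < s)
    (hlow : s < (s' - ε)/(1+ε)) (hhigh : (r'+ε)/(1-ε) < r)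
    (ha1 : s' - ε ≤ a) (ha2 : a ≤ r' + ε) (hb1 : 1 - ε ≤ b) (hb2 : b ≤ 1 + ε) :
    s < a / b ∧ a / b < r := by
  have hb0 : 0 < b := by linarith
  have hlow' : s * (1+ε) < s' - ε := (lt_div_iff₀ (by linarith)).1 hlow
  have hhigh' : r' + ε < r * (1-ε) := (div_lt_iff₀ (by linarith)).1 hhigh
  have hr0 : 0 < r := by nlinarith
  constructor
  · rw [lt_div_iff₀ hb0]
    nlinarith
  · rw [div_lt_iff₀ hb0]
    nlinarith

end Helpers
def Slice (s r : ℝ) (F : ℂ → ℂ) : Prop :=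
  ContinuousOn F (closedBall (0:ℂ) 1) ∧ DifferentiableOn ℂ F (ball (0:ℂ) 1) ∧
  (∀ ζ ∈ sphere (0:ℂ) 1, s < Complex.abs (F ζ) ∧ Complex.abs (F ζ) < r) ∧ F 1 = 1

def Htpy (s r : ℝ) (H : ℝ × ℂ → ℂ) : Prop :=
  ContinuousOn H (Set.Icc (0:ℝ) 1 ×ˢ closedBall (0:ℂ) 1) ∧
  ∀ t ∈ Set.Icc (0:ℝ) 1, Slice s r (fun ζ => H (t, ζ))

lemma Htpy.glue {s r : ℝ} {H₁ H₂ : ℝ × ℂ → ℂ} (h₁ : Htpy s r H₁) (h₂ : Htpy s r H₂)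
    (hseam : ∀ ζ ∈ closedBall (0:ℂ) 1, H₁ (1, ζ) = H₂ (0, ζ)) :
    Htpy s r (fun q => if q.1 ≤ 1/2 then H₁ (2*q.1, q.2) else H₂ (2*q.1 - 1, q.2)) := by
  constructor
  · apply ContinuousOn.if
    · intro q hq
      have hfr : q.1 = 1/2 := by
        have := frontier_le_subset_eq (continuous_fst) (continuous_const (y := (1/2:ℝ))) hq.2
        simpa using this
      rw [hfr]
      norm_num
      exact hseam q.2 hq.1.2
    · have hcl : closure {q : ℝ × ℂ | q.1 ≤ 1/2} = {q : ℝ × ℂ | q.1 ≤ 1/2} :=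
        (isClosed_le continuous_fst continuous_const).closure_eq
      rw [hcl]
      apply h₁.1.comp (by fun_prop)
      intro q hq
      have h1 : q.1 ∈ Set.Icc (0:ℝ) 1 := hq.1.1
      rw [Set.mem_Icc] at h1
      have hle : q.1 ≤ 1/2 := hq.2
      have h2 : (2*q.1 : ℝ) ∈ Set.Icc (0:ℝ) 1 := Set.mem_Icc.2 ⟨by linarith [h1.1], by linarith⟩
      exact ⟨h2, hq.1.2⟩
    · have hcl : closure {q : ℝ × ℂ | ¬ q.1 ≤ 1/2} ⊆ {q : ℝ × ℂ | 1/2 ≤ q.1} := by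
        have : {q : ℝ × ℂ | ¬ q.1 ≤ 1/2} = {q : ℝ × ℂ | (1:ℝ)/2 < q.1} := by
          ext q; simp [not_le]
        rw [this]
        exact closure_lt_subset_le continuous_const continuous_fst
      apply ContinuousOn.mono _ (inter_subset_inter_right _ hcl)
      apply h₂.1.comp (by fun_prop)
      intro q hq
      have h1 : q.1 ∈ Set.Icc (0:ℝ) 1 := hq.1.1
      rw [Set.mem_Icc] at h1
      have hle : (1:ℝ)/2 ≤ q.1 := hq.2
      have h2 : (2*q.1 - 1 : ℝ) ∈ Set.Icc (0:ℝ) 1 := Set.mem_Icc.2 ⟨by linarith, by linarith [h1.2]⟩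
      exact ⟨h2, hq.1.2⟩
  · intro t ht
    by_cases hle : t ≤ 1/2
    · simp only [hle, if_true]
      exact h₁.2 (2*t) ⟨by linarith [ht.1], by linarith⟩
    · simp only [hle, if_false]
      exact h₂.2 (2*t-1) ⟨by linarith [not_le.1 hle], by linarith [ht.2]⟩


section StageC

lemma stageC {s r : ℝ} (hs0 : 0 < s) (hs1 : s < 1) (hr : 1 < r) (Q : Polynomial ℂ)
    (hQ1 : Q.eval 1 = 1)
    (hQb : ∀ ζ ∈ sphere (0:ℂ) 1, s < Complex.abs (Q.eval ζ) ∧ Complex.abs (Q.eval ζ) < r) :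
    ∃ (m : ℕ) (H : ℝ × ℂ → ℂ), Htpy s r H ∧ (∀ ζ ∈ closedBall (0:ℂ) 1, H (0, ζ) = Q.eval ζ) ∧
      (∀ ζ, H (1, ζ) = ζ ^ m) := by
  classical
  have hQ0 : Q ≠ 0 := by intro h; rw [h] at hQ1; simp at hQ1
  set RT := Q.roots with hRT
  set A := RT.filter (fun z => Complex.abs z < 1) with hA
  set B := RT.filter (fun z => ¬ Complex.abs z < 1) with hB
  have hAB : A + B = RT := Multiset.filter_add_not _ _
  have hAlt : ∀ a ∈ A, Complex.abs a < 1 := fun a ha => (Multiset.mem_filter.1 ha).2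
  have hBgt : ∀ z ∈ B, 1 < Complex.abs z := by
    intro z hz
    obtain ⟨hzRT, hzge⟩ := Multiset.mem_filter.1 hz
    rcases lt_or_eq_of_le (not_lt.1 hzge) with h | h
    · exact h
    · exfalso
      have hzr : Q.eval z = 0 := (Polynomial.mem_roots hQ0).1 hzRT
      have := (hQb z (mem_sp.2 h.symm)).1
      rw [hzr] at this
      simp at this
      linarith
  have hsplit : ∀ ζ : ℂ, Q.eval ζ = Q.leadingCoeff * ((RT.map fun a => ζ - a)).prod := by
    intro ζ
    conv_lhs => rw [(IsAlgClosed.splits Q).eq_prod_roots]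
    rw [Polynomial.eval_mul, Polynomial.eval_C, Polynomial.eval_multiset_prod, Multiset.map_map]
    simp [Function.comp]
    exact Or.inl rfl
  set Φ : ℂ → ℂ := fun ζ =>
      (B.map fun z => Complex.log (1 - ζ * z⁻¹)).sum
      + (A.map fun a => Complex.log (1 - (starRingEnd ℂ) a * ζ)).sum with hΦ
  set bl : ℝ → ℂ → ℂ := fun σ ζ =>
      (A.map fun a =>
        (ζ - ((1 - σ : ℝ) : ℂ) * a) / (1 - (starRingEnd ℂ) (((1 - σ : ℝ) : ℂ) * a) * ζ)).prod
      with hbl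
  set H : ℝ × ℂ → ℂ := fun q =>
      cexp (((1 - q.1 : ℝ) : ℂ) * (Φ q.2 - Φ 1)) * (bl q.1 1)⁻¹ * bl q.1 q.2 with hH
  have hwa : ∀ σ ∈ Icc (0:ℝ) 1, ∀ a ∈ A, Complex.abs (((1 - σ : ℝ) : ℂ) * a) < 1 := by
    intro σ hσ a ha
    rw [map_mul]
    have h1 : Complex.abs ((1 - σ : ℝ) : ℂ) ≤ 1 := by
      rw [Complex.abs_ofReal]
      exact abs_le.2 ⟨by linarith [hσ.2], by linarith [hσ.1]⟩
    nlinarith [Complex.abs.nonneg (((1 - σ : ℝ) : ℂ)), Complex.abs.nonneg a, hAlt a ha]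
  have hBz : ∀ z ∈ B, ∀ ζ : ℂ, Complex.abs ζ ≤ 1 → Complex.abs (ζ * z⁻¹) < 1 := by
    intro z hz ζ hζ
    rw [map_mul, map_inv₀]
    have h1 := hBgt z hz
    have h2 : (Complex.abs z)⁻¹ < 1 := by
      rw [inv_lt_one_iff₀]; right; exact h1
    calc Complex.abs ζ * (Complex.abs z)⁻¹ ≤ 1 * (Complex.abs z)⁻¹ := by
          apply mul_le_mul_of_nonneg_right hζ (by positivity)
      _ < 1 := by rwa [one_mul]
  have hKI : ∀ ζ : ℂ, Complex.abs ζ ≤ 1 →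
      cexp (Φ ζ) = (B.map fun z => 1 - ζ * z⁻¹).prod * (A.map fun a => 1 - (starRingEnd ℂ) a * ζ).prod := by
    intro ζ hζ
    rw [hΦ, Complex.exp_add, exp_msum, exp_msum, Multiset.map_map, Multiset.map_map]
    congr 1
    · apply congrArg Multiset.prod
      apply Multiset.map_congr rfl
      intro z hz
      exact Complex.exp_log (one_sub_ne (hBz z hz ζ hζ))
    · apply congrArg Multiset.prod
      apply Multiset.map_congr rfl
      intro a ha
      exact Complex.exp_log (one_sub_ne (abs_mul_lt_one (hAlt a ha) hζ))
  set κ : ℂ := Q.leadingCoeff * (B.map fun z => -z).prod with hκ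
  have hbl0 : ∀ ζ : ℂ, bl 0 ζ = (A.map fun a => (ζ - a) / (1 - (starRingEnd ℂ) a * ζ)).prod := by
    intro ζ
    rw [hbl]
    apply congrArg Multiset.prod
    apply Multiset.map_congr rfl
    intro a _
    norm_num
  have hKey : ∀ ζ : ℂ, Complex.abs ζ ≤ 1 →
      Q.eval ζ = κ * cexp (Φ ζ) * bl 0 ζ := by
    intro ζ hζ
    rw [hKI ζ hζ, hbl0, hκ, hsplit ζ, ← hAB, Multiset.map_add, Multiset.prod_add]
    have e1 : (B.map fun z => -z).prod * (B.map fun z => 1 - ζ * z⁻¹).prod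
        = (B.map fun z => ζ - z).prod := by
      rw [← Multiset.prod_map_mul]
      apply congrArg Multiset.prod
      apply Multiset.map_congr rfl
      intro z hz
      have hz0 : z ≠ 0 := by
        intro h; have := hBgt z hz; rw [h] at this; simp at this; linarith
      field_simp
      ring
    have e2 : (A.map fun a => 1 - (starRingEnd ℂ) a * ζ).prod
          * (A.map fun a => (ζ - a) / (1 - (starRingEnd ℂ) a * ζ)).prod
        = (A.map fun a => ζ - a).prod := by
      rw [← Multiset.prod_map_mul]
      apply congrArg Multiset.prod
      apply Multiset.map_congr rfl
      intro a ha
      rw [mul_div_cancel₀]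
      exact one_sub_ne (abs_mul_lt_one (hAlt a ha) hζ)
    rw [← e1, ← e2]
    ring
  have hblmod : ∀ σ ∈ Icc (0:ℝ) 1, ∀ ζ : ℂ, Complex.abs ζ = 1 → Complex.abs (bl σ ζ) = 1 := by
    intro σ hσ ζ hζ
    rw [hbl]
    simp only
    rw [map_multiset_prod, Multiset.map_map]
    have hcongr : ∀ a ∈ A, (Complex.abs ∘ fun a =>
        (ζ - ((1 - σ : ℝ) : ℂ) * a) / (1 - (starRingEnd ℂ) (((1 - σ : ℝ) : ℂ) * a) * ζ)) a = 1 :=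
      fun a ha => abs_blaschke (hwa σ hσ a ha) hζ
    rw [Multiset.map_congr rfl hcongr, Multiset.prod_map_one]
  have hblne : ∀ σ ∈ Icc (0:ℝ) 1, bl σ 1 ≠ 0 := by
    intro σ hσ
    rw [hbl]
    apply Multiset.prod_ne_zero
    intro h0
    rw [Multiset.mem_map] at h0
    obtain ⟨a, ha, hfa⟩ := h0
    have hnum : (1 : ℂ) - ((1 - σ : ℝ) : ℂ) * a ≠ 0 := one_sub_ne (hwa σ hσ a ha)
    have hden : (1 : ℂ) - (starRingEnd ℂ) (((1 - σ : ℝ) : ℂ) * a) * 1 ≠ 0 := by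
      apply one_sub_ne
      rw [mul_one, Complex.abs_conj]
      exact hwa σ hσ a ha
    exact div_ne_zero hnum hden hfa
  have h0Icc : (0:ℝ) ∈ Icc (0:ℝ) 1 := by norm_num
  have hH0 : ∀ ζ ∈ closedBall (0:ℂ) 1, H (0, ζ) = Q.eval ζ := by
    intro ζ hζ
    have hζ' := mem_cB.1 hζ
    have k1 := hKey 1 (by norm_num)
    rw [hQ1] at k1
    have k2 := hKey ζ hζ'
    rw [hH]
    simp only
    rw [k2]
    have hb1 : bl 0 1 ≠ 0 := hblne 0 h0Icc
    have he1 : cexp (Φ 1) ≠ 0 := Complex.exp_ne_zero _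
    have hco : ((1 - (0:ℝ) : ℝ) : ℂ) = 1 := by norm_num
    rw [hco, one_mul, Complex.exp_sub]
    field_simp
    linear_combination bl 0 ζ * k1
  have hexpQ : ∀ ζ : ℂ, Complex.abs ζ = 1 →
      Real.exp ((Φ ζ - Φ 1).re) = Complex.abs (Q.eval ζ) := by
    intro ζ hζ1
    have k2 := hKey ζ (le_of_eq hζ1)
    have k1 := hKey 1 (by norm_num)
    rw [hQ1] at k1
    have e2 : Complex.abs (Q.eval ζ) = Complex.abs κ * Real.exp ((Φ ζ).re) := by
      rw [k2, map_mul, map_mul, Complex.abs_exp, hblmod 0 h0Icc ζ hζ1, mul_one]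
    have e1 : (1:ℝ) = Complex.abs κ * Real.exp ((Φ 1).re) := by
      have := congrArg Complex.abs k1
      rwa [map_one, map_mul, map_mul, Complex.abs_exp,
        hblmod 0 h0Icc 1 (map_one Complex.abs), mul_one] at this
    have hκpos : 0 < Complex.abs κ := by
      rcases (Complex.abs.nonneg κ).lt_or_eq with h | h
      · exact h
      · exfalso; rw [← h] at e1; simp at e1
    rw [Complex.sub_re, Real.exp_sub, e2]
    field_simp
    linear_combination e1
  have hHmod : ∀ σ ∈ Icc (0:ℝ) 1, ∀ ζ ∈ sphere (0:ℂ) 1,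
      s < Complex.abs (H (σ, ζ)) ∧ Complex.abs (H (σ, ζ)) < r := by
    intro σ hσ ζ hζ
    have hζ1 := mem_sp.1 hζ
    have habsH : Complex.abs (H (σ, ζ)) = Real.exp ((1-σ) * (Φ ζ - Φ 1).re) := by
      rw [hH]
      simp only
      rw [map_mul, map_mul, Complex.abs_exp, map_inv₀, hblmod σ hσ 1 (map_one Complex.abs),
        hblmod σ hσ ζ hζ1, inv_one, mul_one, mul_one, Complex.re_ofReal_mul]
    obtain ⟨L1, L2⟩ := hQb ζ hζ
    rw [← hexpQ ζ hζ1] at L1 L2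
    rw [habsH]
    exact exp_interval hs1 hr L1 L2 (by linarith [hσ.2]) (by linarith [hσ.1])
  have hH1s : ∀ σ ∈ Icc (0:ℝ) 1, H (σ, 1) = 1 := by
    intro σ hσ
    rw [hH]
    simp only
    rw [sub_self, mul_zero, Complex.exp_zero, one_mul, inv_mul_cancel₀ (hblne σ hσ)]
  have hHend : ∀ ζ : ℂ, H (1, ζ) = ζ ^ (Multiset.card A) := by
    intro ζ
    have hb : ∀ ζ' : ℂ, bl 1 ζ' = ζ' ^ (Multiset.card A) := by
      intro ζ'
      rw [hbl]
      simp only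
      have hcongr : ∀ a ∈ A,
          (ζ' - ((1 - (1:ℝ) : ℝ) : ℂ) * a) / (1 - (starRingEnd ℂ) (((1 - (1:ℝ) : ℝ) : ℂ) * a) * ζ')
          = ζ' := by
        intro a _
        norm_num
      rw [Multiset.map_congr rfl hcongr, Multiset.map_const', Multiset.prod_replicate]
    rw [hH]
    simp only
    have h1 : ((1 - (1:ℝ) : ℝ) : ℂ) = 0 := by norm_num
    rw [h1, zero_mul, Complex.exp_zero, one_mul, hb, hb, one_pow, inv_one, one_mul]
  -- continuity of Φ
  have hΦcont : ContinuousOn Φ (closedBall (0:ℂ) 1) := by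
    rw [hΦ]
    apply ContinuousOn.add
    · apply contOn_msum
      intro z hz ζ hζ
      apply ContinuousAt.continuousWithinAt
      apply ContinuousAt.clog (by fun_prop)
      exact one_sub_slit (hBz z hz ζ (mem_cB.1 hζ))
    · apply contOn_msum
      intro a ha ζ hζ
      apply ContinuousAt.continuousWithinAt
      apply ContinuousAt.clog (by fun_prop)
      exact one_sub_slit (abs_mul_lt_one (hAlt a ha) (mem_cB.1 hζ))
  have hΦdiff : DifferentiableOn ℂ Φ (ball (0:ℂ) 1) := by
    rw [hΦ]
    apply DifferentiableOn.add
    · apply diffOn_msum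
      intro z hz ζ hζ
      apply DifferentiableAt.differentiableWithinAt
      apply DifferentiableAt.clog (by fun_prop)
      exact one_sub_slit (hBz z hz ζ (le_of_lt (mem_bb.1 hζ)))
    · apply diffOn_msum
      intro a ha ζ hζ
      apply DifferentiableAt.differentiableWithinAt
      apply DifferentiableAt.clog (by fun_prop)
      exact one_sub_slit (abs_mul_lt_one (hAlt a ha) (le_of_lt (mem_bb.1 hζ)))
  -- joint continuity of bl
  have hblcont : ContinuousOn (fun q : ℝ × ℂ => bl q.1 q.2)
      (Icc (0:ℝ) 1 ×ˢ closedBall (0:ℂ) 1) := by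
    rw [hbl]
    simp only
    apply contOn_mprod
    intro a ha
    apply ContinuousOn.div
    · apply Continuous.continuousOn
      have : Continuous fun q : ℝ × ℂ => (((1 - q.1 : ℝ) : ℂ)) :=
        Complex.continuous_ofReal.comp (continuous_const.sub continuous_fst)
      exact continuous_snd.sub (this.mul continuous_const)
    · apply Continuous.continuousOn
      have h1 : Continuous fun q : ℝ × ℂ => (((1 - q.1 : ℝ) : ℂ)) :=
        Complex.continuous_ofReal.comp (continuous_const.sub continuous_fst)
      exact continuous_const.sub ((Complex.continuous_conj.comp (h1.mul continuous_const)).mul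
        continuous_snd)
    · intro q hq
      exact one_sub_ne (abs_mul_lt_one (hwa q.1 hq.1 a ha) (mem_cB.1 hq.2))
  have hblcont1 : ContinuousOn (fun t : ℝ => bl t 1) (Icc (0:ℝ) 1) := by
    rw [hbl]
    simp only
    apply contOn_mprod
    intro a ha
    apply ContinuousOn.div
    · apply Continuous.continuousOn
      have : Continuous fun t : ℝ => (((1 - t : ℝ) : ℂ)) :=
        Complex.continuous_ofReal.comp (continuous_const.sub continuous_id)
      exact continuous_const.sub (this.mul continuous_const)
    · apply Continuous.continuousOn
      have h1 : Continuous fun t : ℝ => (((1 - t : ℝ) : ℂ)) :=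
        Complex.continuous_ofReal.comp (continuous_const.sub continuous_id)
      exact continuous_const.sub ((Complex.continuous_conj.comp (h1.mul continuous_const)).mul
        continuous_const)
    · intro t ht
      have hnum : (1 : ℂ) - (starRingEnd ℂ) (((1 - t : ℝ) : ℂ) * a) * 1 ≠ 0 := by
        apply one_sub_ne
        rw [mul_one, Complex.abs_conj]
        exact hwa t ht a ha
      exact hnum
  have hHcont : ContinuousOn H (Icc (0:ℝ) 1 ×ˢ closedBall (0:ℂ) 1) := by
    rw [hH]
    apply ContinuousOn.mul
    apply ContinuousOn.mul
    · apply ContinuousOn.cexp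
      apply ContinuousOn.mul
      · exact (Complex.continuous_ofReal.comp (continuous_const.sub continuous_fst)).continuousOn
      · exact (hΦcont.comp continuous_snd.continuousOn (fun q hq => hq.2)).sub continuousOn_const
    · exact (hblcont1.comp continuous_fst.continuousOn (fun q hq => hq.1)).inv₀
        (fun q hq => hblne q.1 hq.1)
    · exact hblcont
  refine ⟨Multiset.card A, H, ⟨hHcont, ?_⟩, hH0, hHend⟩
  intro t ht
  refine ⟨?_, ?_, fun ζ hζ => hHmod t ht ζ hζ, hH1s t ht⟩
  · exact hHcont.comp (Continuous.continuousOn (by fun_prop)) (fun ζ hζ => ⟨ht, hζ⟩)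
  · rw [hH]
    simp only
    apply DifferentiableOn.mul
    apply DifferentiableOn.mul
    · exact ((hΦdiff.sub_const _).const_mul _).cexp
    · exact differentiableOn_const _
    · apply diffOn_mprod
      intro a ha
      apply DifferentiableOn.div
      · exact (differentiable_id.sub_const _).differentiableOn
      · apply Differentiable.differentiableOn
        exact (differentiable_const _).sub ((differentiable_const _).mul differentiable_id)
      · intro ζ hζ
        exact one_sub_ne (abs_mul_lt_one (hwa t ht a ha) (le_of_lt (mem_bb.1 hζ)))

end StageC



/-- **Section 4 example** (classification of `η₁(A_{s,r}, ℂ, 1)`): every analytic disk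
`f` with boundary values in the annulus `A_{s,r} = {s < |z| < r}` (`0 < s < 1 < r`) and
`f 1 = 1` is h-homotopic, through analytic disks with boundary in the annulus and value `1`
at `1`, to the monomial `ζ ↦ ζ ^ m` for some `m : ℕ`. -/
theorem annulus_disk_homotopic_to_monomial
    (s r : ℝ) (hs0 : 0 < s) (hs1 : s < 1) (hr : 1 < r)
    (f : ℂ → ℂ)
    (hfc : ContinuousOn f (closedBall (0:ℂ) 1))
    (hfd : DifferentiableOn ℂ f (ball (0:ℂ) 1))
    (hfT : ∀ ζ ∈ sphere (0:ℂ) 1, s < ‖f ζ‖ ∧ ‖f ζ‖ < r)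
    (hf1 : f 1 = 1) :
    ∃ (m : ℕ) (H : ℝ × ℂ → ℂ),
      ContinuousOn H (Icc (0:ℝ) 1 ×ˢ closedBall (0:ℂ) 1) ∧
      (∀ ζ ∈ closedBall (0:ℂ) 1, H (0, ζ) = f ζ) ∧
      (∀ ζ ∈ closedBall (0:ℂ) 1, H (1, ζ) = ζ ^ m) ∧
      ∀ t ∈ Icc (0:ℝ) 1,
        ContinuousOn (fun ζ => H (t, ζ)) (closedBall (0:ℂ) 1) ∧
        DifferentiableOn ℂ (fun ζ => H (t, ζ)) (ball (0:ℂ) 1) ∧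
        (∀ ζ ∈ sphere (0:ℂ) 1, s < ‖H (t, ζ)‖ ∧ ‖H (t, ζ)‖ < r) ∧
        H (t, 1) = 1 := by
  -- extrema of |f| on the unit circle
  have h1sp : (1:ℂ) ∈ sphere (0:ℂ) 1 := by simp
  have habsf : ContinuousOn (fun ζ => Complex.abs (f ζ)) (sphere (0:ℂ) 1) :=
    Complex.continuous_abs.comp_continuousOn (hfc.mono sphere_subset_closedBall)
  obtain ⟨ζm, hζm, hmin⟩ := (isCompact_sphere (0:ℂ) 1).exists_isMinOn ⟨1, h1sp⟩ habsf
  obtain ⟨ζM, hζM, hmax⟩ := (isCompact_sphere (0:ℂ) 1).exists_isMaxOn ⟨1, h1sp⟩ habsf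
  rw [isMinOn_iff] at hmin
  rw [isMaxOn_iff] at hmax
  set s' := Complex.abs (f ζm) with hs'
  set r' := Complex.abs (f ζM) with hr'
  have hss' : s < s' := (hfT ζm hζm).1
  have hr'r : r' < r := (hfT ζM hζM).2
  obtain ⟨ε₁, hε₁0, hε₁h, hlow₁, hhigh₁⟩ := key_arith hs0 hss' hr'r (Complex.abs.nonneg _)
  -- uniform continuity of f
  have hUC := (isCompact_closedBall (0:ℂ) 1).uniformContinuousOn_of_continuous hfc
  rw [Metric.uniformContinuousOn_iff] at hUC
  obtain ⟨δ, hδ0, hδ⟩ := hUC ε₁ hε₁0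
  set τ : ℝ := max (1 - δ/2) (1/2) with hτ
  have hτ0 : 0 < τ := lt_of_lt_of_le (by norm_num) (le_max_right _ _)
  have hτ1 : τ < 1 := max_lt (by linarith) (by norm_num)
  have hτδ : 1 - τ ≤ δ/2 := by
    have := le_max_left (1 - δ/2) (1/2)
    rw [hτ]; linarith [le_max_left (1 - δ/2) (1/2)]
  set u : ℝ → ℝ := fun σ => 1 - σ * (1 - τ) with hu
  have huτ : ∀ σ ∈ Icc (0:ℝ) 1, τ ≤ u σ ∧ u σ ≤ 1 := by
    intro σ hσ
    have h1 : u σ = 1 - σ * (1 - τ) := rfl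
    constructor <;> rw [h1] <;>
      nlinarith [hσ.1, hσ.2, hτ1, mul_nonneg (sub_nonneg.2 hσ.2) (by linarith : (0:ℝ) ≤ 1 - τ),
        mul_nonneg hσ.1 (by linarith : (0:ℝ) ≤ 1 - τ)]
  have humem : ∀ σ ∈ Icc (0:ℝ) 1, ((u σ : ℝ) : ℂ) ∈ closedBall (0:ℂ) 1 := by
    intro σ hσ
    have hnn : (0:ℝ) ≤ u σ := by linarith [(huτ σ hσ).1]
    rw [mem_cB, Complex.abs_ofReal, _root_.abs_of_nonneg hnn]
    exact (huτ σ hσ).2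
  have humul : ∀ σ ∈ Icc (0:ℝ) 1, ∀ ζ ∈ closedBall (0:ℂ) 1,
      ((u σ : ℝ) : ℂ) * ζ ∈ closedBall (0:ℂ) 1 := by
    intro σ hσ ζ hζ
    have hnn : (0:ℝ) ≤ u σ := by linarith [(huτ σ hσ).1]
    rw [mem_cB, map_mul, Complex.abs_ofReal, _root_.abs_of_nonneg hnn]
    have := mem_cB.1 hζ
    nlinarith [(huτ σ hσ).2, (huτ σ hσ).1, Complex.abs.nonneg ζ]
  have hfu_close : ∀ σ ∈ Icc (0:ℝ) 1, Complex.abs (f ((u σ : ℝ) : ℂ) - 1) < ε₁ := by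
    intro σ hσ
    have hd : dist (((u σ : ℝ) : ℂ)) (1:ℂ) < δ := by
      rw [Complex.dist_eq]
      push_cast
      rw [← Complex.ofReal_one, ← Complex.ofReal_sub, Complex.norm_eq_abs, Complex.abs_ofReal]
      have hnp : u σ - 1 ≤ 0 := by linarith [(huτ σ hσ).2]
      rw [abs_of_nonpos hnp]
      linarith [(huτ σ hσ).1]
    have := hδ _ (humem σ hσ) 1 (by rw [mem_cB]; simp) hd
    rw [hf1, Complex.dist_eq] at this
    exact this
  have hfu_lb : ∀ σ ∈ Icc (0:ℝ) 1, 1 - ε₁ ≤ Complex.abs (f ((u σ : ℝ) : ℂ)) := by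
    intro σ hσ
    have h := hfu_close σ hσ
    have htri : Complex.abs ((1:ℂ)) ≤ Complex.abs (f ((u σ : ℝ) : ℂ)) +
        Complex.abs (f ((u σ : ℝ) : ℂ) - 1) := by
      calc Complex.abs (1:ℂ) = Complex.abs (f ((u σ : ℝ) : ℂ) - (f ((u σ : ℝ) : ℂ) - 1)) := by
            congr 1; ring
        _ ≤ _ := Complex.abs.sub_le_add _ _
    rw [map_one] at htri
    linarith
  have hfu_ub : ∀ σ ∈ Icc (0:ℝ) 1, Complex.abs (f ((u σ : ℝ) : ℂ)) ≤ 1 + ε₁ := by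
    intro σ hσ
    have h := hfu_close σ hσ
    have htri : Complex.abs (f ((u σ : ℝ) : ℂ)) ≤ Complex.abs (f ((u σ : ℝ) : ℂ) - 1) +
        Complex.abs (1:ℂ) := by
      calc Complex.abs (f ((u σ : ℝ) : ℂ)) = Complex.abs ((f ((u σ : ℝ) : ℂ) - 1) + 1) := by
            congr 1; ring
        _ ≤ _ := Complex.abs.add_le _ _
    rw [map_one] at htri
    linarith
  have hfu_ne : ∀ σ ∈ Icc (0:ℝ) 1, f ((u σ : ℝ) : ℂ) ≠ 0 := by
    intro σ hσ
    have := hfu_lb σ hσ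
    intro h
    rw [h, map_zero] at this
    linarith
  have hfuζ : ∀ σ ∈ Icc (0:ℝ) 1, ∀ ζ ∈ sphere (0:ℂ) 1,
      s' - ε₁ ≤ Complex.abs (f (((u σ : ℝ) : ℂ) * ζ)) ∧
      Complex.abs (f (((u σ : ℝ) : ℂ) * ζ)) ≤ r' + ε₁ := by
    intro σ hσ ζ hζ
    have hζc : ζ ∈ closedBall (0:ℂ) 1 := sphere_subset_closedBall hζ
    have hd : dist (((u σ : ℝ) : ℂ) * ζ) ζ < δ := by
      rw [Complex.dist_eq]
      have : ((u σ : ℝ) : ℂ) * ζ - ζ = (((u σ : ℝ) : ℂ) - 1) * ζ := by ring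
      rw [this, Complex.norm_eq_abs, map_mul, mem_sp.1 hζ, mul_one]
      rw [← Complex.ofReal_one, ← Complex.ofReal_sub, Complex.abs_ofReal]
      have hnp : u σ - 1 ≤ 0 := by linarith [(huτ σ hσ).2]
      rw [abs_of_nonpos hnp]
      linarith [(huτ σ hσ).1]
    have hcl := hδ _ (humul σ hσ ζ hζc) ζ hζc hd
    rw [Complex.dist_eq, Complex.norm_eq_abs] at hcl
    have htri1 : Complex.abs (f ζ) ≤ Complex.abs (f (((u σ : ℝ) : ℂ) * ζ)) + ε₁ := by
      calc Complex.abs (f ζ) = Complex.abs (f (((u σ : ℝ) : ℂ) * ζ) -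
            (f (((u σ : ℝ) : ℂ) * ζ) - f ζ)) := by congr 1; ring
        _ ≤ Complex.abs (f (((u σ : ℝ) : ℂ) * ζ)) +
            Complex.abs (f (((u σ : ℝ) : ℂ) * ζ) - f ζ) := Complex.abs.sub_le_add _ _
        _ ≤ _ := by linarith
    have htri2 : Complex.abs (f (((u σ : ℝ) : ℂ) * ζ)) ≤ Complex.abs (f ζ) + ε₁ := by
      calc Complex.abs (f (((u σ : ℝ) : ℂ) * ζ)) =
            Complex.abs (f ζ + (f (((u σ : ℝ) : ℂ) * ζ) - f ζ)) := by congr 1; ring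
        _ ≤ Complex.abs (f ζ) + Complex.abs (f (((u σ : ℝ) : ℂ) * ζ) - f ζ) :=
            Complex.abs.add_le _ _
        _ ≤ _ := by linarith
    exact ⟨by linarith [hmin ζ hζ], by linarith [hmax ζ hζ]⟩
  set HA : ℝ × ℂ → ℂ := fun q => f (((u q.1 : ℝ) : ℂ) * q.2) / f (((u q.1 : ℝ) : ℂ)) with hHA
  have hucont : Continuous fun t : ℝ => ((u t : ℝ) : ℂ) := by
    apply Complex.continuous_ofReal.comp
    rw [hu]
    fun_prop
  have hHAhtpy : Htpy s r HA := by
    constructor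
    · rw [hHA]
      apply ContinuousOn.div
      · apply hfc.comp
        · exact ((hucont.comp continuous_fst).mul continuous_snd).continuousOn
        · intro q hq
          exact humul q.1 hq.1 q.2 hq.2
      · apply hfc.comp
        · exact (hucont.comp continuous_fst).continuousOn
        · intro q hq
          exact humem q.1 hq.1
      · intro q hq
        exact hfu_ne q.1 hq.1
    · intro t ht
      simp only [hHA]
      refine ⟨?_, ?_, ?_, ?_⟩
      · apply ContinuousOn.div
        · apply hfc.comp (by fun_prop : Continuous fun ζ : ℂ => ((u t : ℝ) : ℂ) * ζ).continuousOn
          intro ζ hζ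
          exact humul t ht ζ hζ
        · exact continuousOn_const
        · intro ζ _
          exact hfu_ne t ht
      · apply DifferentiableOn.div_const
        apply hfd.comp
        · exact (differentiable_id.const_mul _).differentiableOn
        · intro ζ hζ
          have hnn : (0:ℝ) ≤ u t := by linarith [(huτ t ht).1]
          rw [mem_bb, map_mul, Complex.abs_ofReal, _root_.abs_of_nonneg hnn]
          have h1 := mem_bb.1 hζ
          nlinarith [(huτ t ht).2, Complex.abs.nonneg ζ, (huτ t ht).1]
      · intro ζ hζ
        rw [map_div₀]
        exact quot_bound hε₁0 hε₁h hs0 hlow₁ hhigh₁ (hfuζ t ht ζ hζ).1 (hfuζ t ht ζ hζ).2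
          (hfu_lb t ht) (hfu_ub t ht)
      · simp only
        rw [mul_one, div_self (hfu_ne t ht)]
  -- Stage B
  set g : ℂ → ℂ := fun ζ => f ((τ : ℂ) * ζ) / f ((τ : ℂ)) with hg
  have h1Icc : (1:ℝ) ∈ Icc (0:ℝ) 1 := by norm_num
  have h0Icc : (0:ℝ) ∈ Icc (0:ℝ) 1 := by norm_num
  have hu1τ : u 1 = τ := by rw [hu]; ring_nf
  have hu0 : u 0 = 1 := by rw [hu]; ring_nf
  have hgA : ∀ ζ : ℂ, HA (1, ζ) = g ζ := by
    intro ζ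
    rw [hHA, hg]
    simp only
    rw [hu1τ]
  have hfτne : f ((τ:ℝ) : ℂ) ≠ 0 := by
    have := hfu_ne 1 h1Icc
    rwa [hu1τ] at this
  have hg1 : g 1 = 1 := by
    rw [hg]
    simp only
    rw [mul_one, div_self hfτne]
  have hτmul : ∀ ζ : ℂ, Complex.abs ζ ≤ 1 → ((τ:ℝ):ℂ) * ζ ∈ closedBall (0:ℂ) 1 := by
    intro ζ hζ
    rw [mem_cB, map_mul, Complex.abs_ofReal, _root_.abs_of_nonneg hτ0.le]
    nlinarith [Complex.abs.nonneg ζ, hτ1]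
  have hgc : ContinuousOn g (closedBall (0:ℂ) 1) := by
    rw [hg]
    apply ContinuousOn.div_const
    apply hfc.comp (by fun_prop : Continuous fun ζ : ℂ => ((τ:ℝ):ℂ) * ζ).continuousOn
    intro ζ hζ
    exact hτmul ζ (mem_cB.1 hζ)
  have hgdiff : DifferentiableOn ℂ g (ball (0:ℂ) 1) := by
    rw [hg]
    apply DifferentiableOn.div_const
    apply hfd.comp ((differentiable_id.const_mul _).differentiableOn)
    intro ζ hζ
    rw [mem_bb, map_mul, Complex.abs_ofReal, _root_.abs_of_nonneg hτ0.le]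
    simp only [id_eq]
    nlinarith [Complex.abs.nonneg ζ, mem_bb.1 hζ, hτ1]
  -- power series of g on a bigger ball
  set ρ : ℝ := (1+τ)/(2*τ) with hρ
  have hρ1 : 1 < ρ := by
    rw [hρ, lt_div_iff₀ (by linarith)]
    linarith
  have hτρ : τ * ρ = (1+τ)/2 := by
    rw [hρ]
    field_simp
  have hgdρ : DifferentiableOn ℂ g (closedBall (0:ℂ) ρ) := by
    rw [hg]
    apply DifferentiableOn.div_const
    apply hfd.comp ((differentiable_id.const_mul _).differentiableOn)
    intro ζ hζ
    rw [mem_ball_zero_iff, Complex.norm_eq_abs, map_mul, Complex.abs_ofReal,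
      _root_.abs_of_nonneg hτ0.le]
    simp only [id_eq]
    have hζ' : Complex.abs ζ ≤ ρ := by
      have := mem_closedBall_zero_iff.1 hζ
      rwa [Complex.norm_eq_abs] at this
    have h2 : τ * Complex.abs ζ ≤ τ * ρ := mul_le_mul_of_nonneg_left hζ' hτ0.le
    rw [hτρ] at h2
    linarith
  set ρN : NNReal := Real.toNNReal ρ with hρN
  have hρNc : (ρN : ℝ) = ρ := Real.coe_toNNReal _ (by linarith)
  have hρN0 : 0 < ρN := Real.toNNReal_pos.2 (by linarith)
  have hps : HasFPowerSeriesOnBall g (cauchyPowerSeries g 0 ρN) 0 ρN := by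
    apply DifferentiableOn.hasFPowerSeriesOnBall _ hρN0
    rw [hρNc]
    exact hgdρ
  set ρ2 : NNReal := Real.toNNReal ((1+ρ)/2) with hρ2
  have hρ2c : (ρ2 : ℝ) = (1+ρ)/2 := Real.coe_toNNReal _ (by linarith)
  have hρ2gt1 : 1 < (ρ2:ℝ) := by rw [hρ2c]; linarith
  have hρ2lt : (ρ2 : ENNReal) < (ρN : ENNReal) := by
    rw [ENNReal.coe_lt_coe, ← NNReal.coe_lt_coe, hρ2c, hρNc]
    linarith
  have hTU := hps.tendstoUniformlyOn hρ2lt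
  rw [Metric.tendstoUniformlyOn_iff] at hTU
  -- bounds for g on the circle
  set s₁ : ℝ := (s' - ε₁)/(1+ε₁) with hs₁def
  set r₁ : ℝ := (r'+ε₁)/(1-ε₁) with hr₁def
  have hs₁ : s < s₁ := hlow₁
  have hr₁r : r₁ < r := hhigh₁
  have hr₁0 : 0 ≤ r₁ := by
    rw [hr₁def]
    apply div_nonneg (by positivity) (by linarith)
  obtain ⟨ε₂, hε₂0, hε₂h, hlow₂, hhigh₂⟩ := key_arith hs0 hs₁ hr₁r hr₁0
  have hgb : ∀ ζ ∈ sphere (0:ℂ) 1, s₁ ≤ Complex.abs (g ζ) ∧ Complex.abs (g ζ) ≤ r₁ := by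
    intro ζ hζ
    have h1 := hfuζ 1 h1Icc ζ hζ
    rw [hu1τ] at h1
    have h2 := hfu_lb 1 h1Icc
    have h3 := hfu_ub 1 h1Icc
    rw [hu1τ] at h2 h3
    have habs : Complex.abs (g ζ) = Complex.abs (f (((τ:ℝ):ℂ) * ζ)) / Complex.abs (f ((τ:ℝ):ℂ)) := by
      rw [hg]; simp only [map_div₀]
    rw [habs, hs₁def, hr₁def]
    constructor
    · exact div_le_div₀ (Complex.abs.nonneg _) h1.1 (by linarith) h3
    · exact div_le_div₀ (by positivity) h1.2 (by linarith) h2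
  obtain ⟨n, hn⟩ := (hTU ε₂ hε₂0).exists
  set p := cauchyPowerSeries g 0 ↑ρN with hp
  set P : Polynomial ℂ := ∑ k ∈ Finset.range n, Polynomial.C (p.coeff k) * Polynomial.X ^ k
    with hP
  have hPeval : ∀ ζ : ℂ, P.eval ζ = p.partialSum n ζ := by
    intro ζ
    rw [hP, Polynomial.eval_finset_sum]
    unfold FormalMultilinearSeries.partialSum
    apply Finset.sum_congr rfl
    intro k _
    rw [Polynomial.eval_mul, Polynomial.eval_C, Polynomial.eval_pow, Polynomial.eval_X,
      FormalMultilinearSeries.apply_eq_pow_smul_coeff, smul_eq_mul]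
    ring
  have hPg : ∀ ζ ∈ closedBall (0:ℂ) 1, Complex.abs (g ζ - P.eval ζ) < ε₂ := by
    intro ζ hζ
    have hmem : ζ ∈ ball (0:ℂ) (ρ2:ℝ) := by
      rw [mem_ball_zero_iff]
      calc ‖ζ‖ ≤ 1 := mem_closedBall_zero_iff.1 hζ
        _ < _ := hρ2gt1
    have := hn ζ hmem
    rw [zero_add, Complex.dist_eq, ← hPeval ζ] at this
    exact this
  have hP1 : Complex.abs (P.eval 1 - 1) < ε₂ := by
    have h1 := hPg 1 (by rw [mem_cB]; simp)
    rw [hg1] at h1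
    have h2 : P.eval 1 - 1 = -(1 - P.eval 1) := by ring
    rw [h2, Complex.abs.map_neg]
    exact h1
  have hP1ne : P.eval 1 ≠ 0 := by
    intro h
    rw [h] at hP1
    simp at hP1
    linarith
  set HB : ℝ × ℂ → ℂ := fun q =>
      (((1 - q.1 : ℝ) : ℂ) * g q.2 + ((q.1 : ℝ) : ℂ) * P.eval q.2) /
      (((1 - q.1 : ℝ) : ℂ) + ((q.1 : ℝ) : ℂ) * P.eval 1) with hHB
  have hden_close : ∀ σ ∈ Icc (0:ℝ) 1,
      Complex.abs ((((1 - σ : ℝ) : ℂ) + ((σ : ℝ) : ℂ) * P.eval 1) - 1) ≤ ε₂ := by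
    intro σ hσ
    have h1 : (((1 - σ : ℝ) : ℂ) + ((σ : ℝ) : ℂ) * P.eval 1) - 1
        = ((σ:ℝ):ℂ) * (P.eval 1 - 1) := by push_cast; ring
    rw [h1, map_mul, Complex.abs_ofReal, _root_.abs_of_nonneg hσ.1]
    nlinarith [hσ.2, Complex.abs.nonneg (P.eval 1 - 1), hP1.le]
  have hden_lb : ∀ σ ∈ Icc (0:ℝ) 1,
      1 - ε₂ ≤ Complex.abs (((1 - σ : ℝ) : ℂ) + ((σ : ℝ) : ℂ) * P.eval 1) := by
    intro σ hσ
    have h := hden_close σ hσ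
    set d := ((1 - σ : ℝ) : ℂ) + ((σ : ℝ) : ℂ) * P.eval 1
    have htri : Complex.abs (1:ℂ) ≤ Complex.abs d + Complex.abs (d - 1) := by
      calc Complex.abs (1:ℂ) = Complex.abs (d - (d - 1)) := by congr 1; ring
        _ ≤ _ := Complex.abs.sub_le_add _ _
    rw [map_one] at htri
    linarith
  have hden_ub : ∀ σ ∈ Icc (0:ℝ) 1,
      Complex.abs (((1 - σ : ℝ) : ℂ) + ((σ : ℝ) : ℂ) * P.eval 1) ≤ 1 + ε₂ := by
    intro σ hσ
    have h := hden_close σ hσ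
    set d := ((1 - σ : ℝ) : ℂ) + ((σ : ℝ) : ℂ) * P.eval 1
    have htri : Complex.abs d ≤ Complex.abs (d - 1) + Complex.abs (1:ℂ) := by
      calc Complex.abs d = Complex.abs ((d - 1) + 1) := by congr 1; ring
        _ ≤ _ := Complex.abs.add_le _ _
    rw [map_one] at htri
    linarith
  have hden_ne : ∀ σ ∈ Icc (0:ℝ) 1,
      (((1 - σ : ℝ) : ℂ) + ((σ : ℝ) : ℂ) * P.eval 1) ≠ 0 := by
    intro σ hσ
    intro h
    have := hden_lb σ hσ
    rw [h, map_zero] at this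
    linarith
  have hnum_close : ∀ σ ∈ Icc (0:ℝ) 1, ∀ ζ ∈ closedBall (0:ℂ) 1,
      Complex.abs ((((1 - σ : ℝ) : ℂ) * g ζ + ((σ : ℝ) : ℂ) * P.eval ζ) - g ζ) ≤ ε₂ := by
    intro σ hσ ζ hζ
    have h1 : (((1 - σ : ℝ) : ℂ) * g ζ + ((σ : ℝ) : ℂ) * P.eval ζ) - g ζ
        = ((σ:ℝ):ℂ) * (P.eval ζ - g ζ) := by push_cast; ring
    have h2 : Complex.abs (P.eval ζ - g ζ) < ε₂ := by
      have h3 : P.eval ζ - g ζ = -(g ζ - P.eval ζ) := by ring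
      rw [h3, Complex.abs.map_neg]
      exact hPg ζ hζ
    rw [h1, map_mul, Complex.abs_ofReal, _root_.abs_of_nonneg hσ.1]
    nlinarith [hσ.2, Complex.abs.nonneg (P.eval ζ - g ζ)]
  have hnum_b : ∀ σ ∈ Icc (0:ℝ) 1, ∀ ζ ∈ sphere (0:ℂ) 1,
      s₁ - ε₂ ≤ Complex.abs (((1 - σ : ℝ) : ℂ) * g ζ + ((σ : ℝ) : ℂ) * P.eval ζ) ∧
      Complex.abs (((1 - σ : ℝ) : ℂ) * g ζ + ((σ : ℝ) : ℂ) * P.eval ζ) ≤ r₁ + ε₂ := by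
    intro σ hσ ζ hζ
    have h1 := hnum_close σ hσ ζ (sphere_subset_closedBall hζ)
    have h2 := hgb ζ hζ
    set N := ((1 - σ : ℝ) : ℂ) * g ζ + ((σ : ℝ) : ℂ) * P.eval ζ
    constructor
    · have htri : Complex.abs (g ζ) ≤ Complex.abs N + Complex.abs (N - g ζ) := by
        calc Complex.abs (g ζ) = Complex.abs (N - (N - g ζ)) := by congr 1; ring
          _ ≤ _ := Complex.abs.sub_le_add _ _
      linarith [h2.1]
    · have htri : Complex.abs N ≤ Complex.abs (N - g ζ) + Complex.abs (g ζ) := by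
        calc Complex.abs N = Complex.abs ((N - g ζ) + g ζ) := by congr 1; ring
          _ ≤ _ := Complex.abs.add_le _ _
      linarith [h2.2]
  have hPcont : Continuous fun ζ : ℂ => P.eval ζ := P.continuous
  have hPdiff : Differentiable ℂ fun ζ : ℂ => P.eval ζ := P.differentiable
  have hHBhtpy : Htpy s r HB := by
    constructor
    · rw [hHB]
      apply ContinuousOn.div
      · apply ContinuousOn.add
        · exact ((Complex.continuous_ofReal.comp (continuous_const.sub continuous_fst)).continuousOn).mul
            (hgc.comp continuous_snd.continuousOn (fun q hq => hq.2))
        · exact ((Complex.continuous_ofReal.comp continuous_fst).continuousOn).mul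
            ((hPcont.comp continuous_snd).continuousOn)
      · apply Continuous.continuousOn
        exact (Complex.continuous_ofReal.comp (continuous_const.sub continuous_fst)).add
          ((Complex.continuous_ofReal.comp continuous_fst).mul continuous_const)
      · intro q hq
        exact hden_ne q.1 hq.1
    · intro t ht
      simp only [hHB]
      refine ⟨?_, ?_, ?_, ?_⟩
      · apply ContinuousOn.div_const
        exact (continuousOn_const.mul hgc).add (continuousOn_const.mul hPcont.continuousOn)
      · apply DifferentiableOn.div_const
        exact (hgdiff.const_mul _).add ((hPdiff.differentiableOn).const_mul _)
      · intro ζ hζ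
        rw [map_div₀]
        exact quot_bound hε₂0 hε₂h hs0 hlow₂ hhigh₂ (hnum_b t ht ζ hζ).1 (hnum_b t ht ζ hζ).2
          (hden_lb t ht) (hden_ub t ht)
      · simp only
        rw [hg1, mul_one, div_self (hden_ne t ht)]
  have hB0 : ∀ ζ : ℂ, HB (0, ζ) = g ζ := by
    intro ζ
    rw [hHB]
    simp only
    norm_num
  set Qp : Polynomial ℂ := P * Polynomial.C (P.eval 1)⁻¹ with hQp
  have hQpeval : ∀ ζ : ℂ, Qp.eval ζ = P.eval ζ * (P.eval 1)⁻¹ := by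
    intro ζ
    rw [hQp, Polynomial.eval_mul, Polynomial.eval_C]
  have hB1 : ∀ ζ : ℂ, HB (1, ζ) = Qp.eval ζ := by
    intro ζ
    rw [hHB, hQpeval]
    simp only
    norm_num
    rw [div_eq_mul_inv]
  have hQp1 : Qp.eval 1 = 1 := by
    rw [hQpeval]
    exact mul_inv_cancel₀ hP1ne
  have hQpb : ∀ ζ ∈ sphere (0:ℂ) 1,
      s < Complex.abs (Qp.eval ζ) ∧ Complex.abs (Qp.eval ζ) < r := by
    intro ζ hζ
    rw [← hB1 ζ]
    exact (hHBhtpy.2 1 h1Icc).2.2.1 ζ hζ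
  obtain ⟨m, HC, hHChtpy, hC0, hC1⟩ := stageC hs0 hs1 hr Qp hQp1 hQpb
  -- gluing
  have hseam1 : ∀ ζ ∈ closedBall (0:ℂ) 1, HA (1, ζ) = HB (0, ζ) := by
    intro ζ _
    rw [hgA ζ, hB0 ζ]
  set G1 : ℝ × ℂ → ℂ :=
    fun q => if q.1 ≤ 1/2 then HA (2*q.1, q.2) else HB (2*q.1 - 1, q.2) with hG1def
  have hG1htpy : Htpy s r G1 := hHAhtpy.glue hHBhtpy hseam1
  have hseam2 : ∀ ζ ∈ closedBall (0:ℂ) 1, G1 (1, ζ) = HC (0, ζ) := by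
    intro ζ hζ
    rw [hG1def]
    simp only
    rw [if_neg (by norm_num)]
    rw [show (2*(1:ℝ) - 1) = 1 by norm_num]
    rw [hB1 ζ]
    exact (hC0 ζ hζ).symm
  have hG : Htpy s r (fun q => if q.1 ≤ 1/2 then G1 (2*q.1, q.2) else HC (2*q.1 - 1, q.2)) :=
    hG1htpy.glue hHChtpy hseam2
  refine ⟨m, _, hG.1, ?_, ?_, fun t ht => hG.2 t ht⟩
  · intro ζ hζ
    show (if ((0:ℝ) ≤ 1/2) then G1 (2*(0:ℝ), ζ) else HC (2*(0:ℝ) - 1, ζ)) = f ζ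
    rw [if_pos (by norm_num), show (2*(0:ℝ)) = 0 by norm_num]
    have e0 : G1 (0, ζ) = HA (0, ζ) := by
      rw [hG1def]
      simp only
      rw [if_pos (by norm_num), show (2*(0:ℝ)) = 0 by norm_num]
    rw [e0, hHA]
    simp only
    rw [hu0]
    push_cast
    rw [one_mul, hf1, div_one]
  · intro ζ hζ
    show (if ((1:ℝ) ≤ 1/2) then G1 (2*(1:ℝ), ζ) else HC (2*(1:ℝ) - 1, ζ)) = ζ ^ m
    rw [if_neg (by norm_num), show (2*(1:ℝ) - 1) = 1 by norm_num]
    exact hC1 ζ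
end

section
/- Let E be a complex Banach space, let W be an open, path-connected subset of E, and let w₀, w₁ ∈ W. For w ∈ W, let 𝒜_w(W, E) be the set of analytic disks f in E with f(𝕋) ⊆ W and f(1) = w, and call f, g ∈ 𝒜_w(W, E) h-homotopic if there is a continuous H : [0,1] × 𝔻̄ → E with H(0, ·) = f, H(1, ·) = g such that every slice H(t, ·) lies in 𝒜_w(W, E). Then there exists a bijection between the set of h-homotopy classes of 𝒜_{w₁}(W, E) and the set of h-homotopy classes of 𝒜_{w₀}(W, E). -/
open Complex Metric Set

/-- An analytic disk in `E` with boundary in `W` and value `w` at the point `1`: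
a map `ℂ → E` continuous on the closed unit disk, holomorphic on the open unit disk,
mapping the unit circle into `W`, with `f 1 = w`. -/
def AnalyticDiskAt (E : Type*) [NormedAddCommGroup E] [NormedSpace ℂ E]
    (W : Set E) (w : E) : Type _ :=
  {f : ℂ → E //
    ContinuousOn f (Metric.closedBall (0:ℂ) 1) ∧
    DifferentiableOn ℂ f (Metric.ball (0:ℂ) 1) ∧
    (∀ ζ ∈ Metric.sphere (0:ℂ) 1, f ζ ∈ W) ∧ f 1 = w}

/-- h-homotopy in `𝒜_w(W, E)`: a continuous family of analytic disks with boundary in `W`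
and value `w` at `1` joining the two given disks. -/
def HHomotopic (E : Type*) [NormedAddCommGroup E] [NormedSpace ℂ E]
    (W : Set E) (w : E) (f g : AnalyticDiskAt E W w) : Prop :=
  ∃ H : ℝ × ℂ → E,
    ContinuousOn H (Set.Icc (0:ℝ) 1 ×ˢ Metric.closedBall (0:ℂ) 1) ∧
    (∀ ζ ∈ Metric.closedBall (0:ℂ) 1, H (0, ζ) = f.1 ζ) ∧
    (∀ ζ ∈ Metric.closedBall (0:ℂ) 1, H (1, ζ) = g.1 ζ) ∧
    ∀ t ∈ Set.Icc (0:ℝ) 1,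
      ContinuousOn (fun ζ => H (t, ζ)) (Metric.closedBall (0:ℂ) 1) ∧
      DifferentiableOn ℂ (fun ζ => H (t, ζ)) (Metric.ball (0:ℂ) 1) ∧
      (∀ ζ ∈ Metric.sphere (0:ℂ) 1, H (t, ζ) ∈ W) ∧ H (t, 1) = w

namespace BaseChange

variable {E : Type*} [NormedAddCommGroup E] [NormedSpace ℂ E]

/-- the basic analytic "bump" concentrated at `ζ = 1`. -/
noncomputable def uu (n : ℕ) (ζ : ℂ) : ℂ := ((1 + ζ) / 2) ^ n

lemma uu_cont (n : ℕ) : Continuous (uu n) := by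
  unfold uu; fun_prop

lemma uu_diff (n : ℕ) : Differentiable ℂ (uu n) := by
  unfold uu
  exact (((differentiable_const _).add differentiable_id).div_const _).pow _

lemma uu_one (n : ℕ) : uu n 1 = 1 := by norm_num [uu]

lemma uhalf_norm_le {ζ : ℂ} (hζ : ζ ∈ closedBall (0:ℂ) 1) : ‖(1 + ζ) / 2‖ ≤ 1 := by
  rw [mem_closedBall, dist_zero_right] at hζ
  have h2 : ‖(2:ℂ)‖ = 2 := by norm_num
  rw [norm_div, h2]
  have : ‖(1:ℂ) + ζ‖ ≤ 2 := by
    calc ‖(1:ℂ) + ζ‖ ≤ ‖(1:ℂ)‖ + ‖ζ‖ := norm_add_le _ _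
      _ ≤ 2 := by rw [norm_one]; linarith
  linarith

lemma uu_norm_le_one {n : ℕ} {ζ : ℂ} (hζ : ζ ∈ closedBall (0:ℂ) 1) : ‖uu n ζ‖ ≤ 1 := by
  rw [uu, norm_pow]
  exact pow_le_one₀ (norm_nonneg _) (uhalf_norm_le hζ)

lemma uu_norm_anti {n m : ℕ} (hnm : n ≤ m) {ζ : ℂ} (hζ : ζ ∈ closedBall (0:ℂ) 1) :
    ‖uu m ζ‖ ≤ ‖uu n ζ‖ := by
  rw [uu, uu, norm_pow, norm_pow]
  exact pow_le_pow_of_le_one (norm_nonneg _) (uhalf_norm_le hζ) hnm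

lemma uhalf_sq {ζ : ℂ} (hζ : ζ ∈ sphere (0:ℂ) 1) : ‖(1 + ζ) / 2‖ ^ 2 = 1 - ‖ζ - 1‖ ^ 2 / 4 := by
  have h1 : ‖ζ‖ = 1 := by simpa using hζ
  have hpar := parallelogram_law_with_norm ℂ 1 ζ
  have hrev : ‖ζ - 1‖ = ‖(1:ℂ) - ζ‖ := norm_sub_rev _ _
  have h2 : ‖(2:ℂ)‖ = 2 := by norm_num
  rw [norm_div, h2, norm_one, h1] at *
  nlinarith [norm_nonneg ((1:ℂ) + ζ), norm_nonneg ((1:ℂ) - ζ)]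

/-- `GoodAt W H v n`: perturbing `H` on the boundary circle by any multiple `z • v`
with `‖z‖ ≤ 2‖((1+ζ)/2)^n‖` keeps boundary values in `W`. -/
def GoodAt (W : Set E) (H : ℝ × ℂ → E) (v : E) (n : ℕ) : Prop :=
  ∀ t ∈ Icc (0:ℝ) 1, ∀ ζ ∈ sphere (0:ℂ) 1, ∀ z : ℂ,
    ‖z‖ ≤ 2 * ‖uu n ζ‖ → H (t, ζ) + z • v ∈ W

lemma GoodAt.mono {W : Set E} {H : ℝ × ℂ → E} {v : E} {n m : ℕ} (hnm : n ≤ m)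
    (h : GoodAt W H v n) : GoodAt W H v m := by
  intro t ht ζ hζ z hz
  refine h t ht ζ hζ z (hz.trans ?_)
  have := uu_norm_anti hnm (sphere_subset_closedBall hζ)
  linarith

lemma exists_good {W : Set E} (hWopen : IsOpen W) (H : ℝ × ℂ → E) (w : E)
    (hHc : ContinuousOn H (Icc (0:ℝ) 1 ×ˢ closedBall (0:ℂ) 1))
    (hHb : ∀ t ∈ Icc (0:ℝ) 1, ∀ ζ ∈ sphere (0:ℂ) 1, H (t, ζ) ∈ W)
    (hH1 : ∀ t ∈ Icc (0:ℝ) 1, H (t, 1) = w)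
    (ε : ℝ) (hε : 0 < ε) (hball : ball w ε ⊆ W)
    (v : E) (hv : ‖v‖ ≤ ε / 8) :
    ∃ N, ∀ n ≥ N, GoodAt W H v n := by
  have hScomp : IsCompact (Icc (0:ℝ) 1 ×ˢ sphere (0:ℂ) 1) :=
    isCompact_Icc.prod (isCompact_sphere _ _)
  have hsub : (Icc (0:ℝ) 1 ×ˢ sphere (0:ℂ) 1) ⊆ Icc (0:ℝ) 1 ×ˢ closedBall (0:ℂ) 1 :=
    prod_mono subset_rfl sphere_subset_closedBall
  have hKcomp : IsCompact (H '' (Icc (0:ℝ) 1 ×ˢ sphere (0:ℂ) 1)) :=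
    hScomp.image_of_continuousOn (hHc.mono hsub)
  have hKW : H '' (Icc (0:ℝ) 1 ×ˢ sphere (0:ℂ) 1) ⊆ W := by
    rintro x ⟨⟨t, ζ⟩, ⟨ht, hζ⟩, rfl⟩
    exact hHb t ht ζ hζ
  obtain ⟨ρ, hρ, hρW⟩ := hKcomp.exists_thickening_subset_open hWopen hKW
  obtain ⟨δ, hδ, hδH⟩ := Metric.uniformContinuousOn_iff.mp
    ((isCompact_Icc.prod (isCompact_closedBall _ _)).uniformContinuousOn_of_continuous hHc)
    (ε / 2) (by linarith)
  set δ₁ := min δ 1 with hδ₁def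
  have hδ₁0 : 0 < δ₁ := lt_min hδ one_pos
  have hδ₁1 : δ₁ ≤ 1 := min_le_right _ _
  set q := Real.sqrt (1 - δ₁ ^ 2 / 4) with hqdef
  have hq0 : 0 ≤ q := Real.sqrt_nonneg _
  have hq1 : q < 1 := by
    rw [hqdef, Real.sqrt_lt' one_pos]
    nlinarith
  have hqsq : q ^ 2 = 1 - δ₁ ^ 2 / 4 := Real.sq_sqrt (by nlinarith)
  obtain ⟨N, hN⟩ := exists_pow_lt_of_lt_one
    (show (0:ℝ) < ρ / (2 * ‖v‖ + 1) by positivity) hq1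
  have hNρ : q ^ N * (2 * ‖v‖ + 1) < ρ := by
    rw [div_eq_mul_inv] at hN
    have h1 : (0:ℝ) < 2 * ‖v‖ + 1 := by positivity
    calc q ^ N * (2 * ‖v‖ + 1) < ρ * (2 * ‖v‖ + 1)⁻¹ * (2 * ‖v‖ + 1) := by
          exact mul_lt_mul_of_pos_right hN h1
      _ = ρ := by field_simp
  refine ⟨N, fun n hn t ht ζ hζ z hz => ?_⟩
  have hζball : ζ ∈ closedBall (0:ℂ) 1 := sphere_subset_closedBall hζ
  by_cases hnear : ‖ζ - 1‖ < δ₁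
  · -- near 1: stay in the ball `ball w ε`
    have hmem1 : ((t, (1:ℂ)) : ℝ × ℂ) ∈ Icc (0:ℝ) 1 ×ˢ closedBall (0:ℂ) 1 :=
      ⟨ht, by simp⟩
    have hmem2 : ((t, ζ) : ℝ × ℂ) ∈ Icc (0:ℝ) 1 ×ˢ closedBall (0:ℂ) 1 := ⟨ht, hζball⟩
    have hdist : dist ((t, ζ) : ℝ × ℂ) ((t, (1:ℂ))) < δ := by
      rw [Prod.dist_eq]
      simp only [dist_self]
      rw [max_eq_right dist_nonneg]
      calc dist ζ 1 = ‖ζ - 1‖ := by rw [dist_eq_norm]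
        _ < δ₁ := hnear
        _ ≤ δ := min_le_left _ _
    have h2 := hδH _ hmem2 _ hmem1 hdist
    rw [hH1 t ht] at h2
    apply hball
    rw [mem_ball]
    have hzn : ‖z‖ ≤ 2 := hz.trans (by nlinarith [uu_norm_le_one (n := n) hζball])
    calc dist (H (t, ζ) + z • v) w ≤ dist (H (t, ζ) + z • v) (H (t, ζ)) + dist (H (t, ζ)) w :=
          dist_triangle _ _ _
      _ = ‖z‖ * ‖v‖ + dist (H (t, ζ)) w := by
          rw [dist_eq_norm, add_sub_cancel_left, norm_smul]
      _ < 2 * (ε / 8) + ε / 2 := by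
          have : ‖z‖ * ‖v‖ ≤ 2 * (ε / 8) := by nlinarith [norm_nonneg z, norm_nonneg v]
          linarith
      _ ≤ ε := by linarith
  · -- far from 1: small perturbation of a point in the compact boundary set
    push_neg at hnear
    have husq := uhalf_sq hζ
    have hu_le_q : ‖(1 + ζ) / 2‖ ≤ q := by
      have h2 : ‖(1 + ζ) / 2‖ ^ 2 ≤ q ^ 2 := by rw [husq, hqsq]; nlinarith
      nlinarith [norm_nonneg ((1 + ζ) / 2)]
    have hzq : ‖z‖ ≤ 2 * q ^ N := by
      have h1 : ‖uu n ζ‖ ≤ q ^ n := by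
        rw [uu, norm_pow]
        exact pow_le_pow_left₀ (norm_nonneg _) hu_le_q n
      have h2 : q ^ n ≤ q ^ N := pow_le_pow_of_le_one hq0 hq1.le hn
      linarith
    have hHK : H (t, ζ) ∈ H '' (Icc (0:ℝ) 1 ×ˢ sphere (0:ℂ) 1) := ⟨(t, ζ), ⟨ht, hζ⟩, rfl⟩
    apply hρW
    apply ball_subset_thickening hHK ρ
    rw [mem_ball, dist_eq_norm, add_sub_cancel_left, norm_smul]
    nlinarith [norm_nonneg v, pow_nonneg hq0 N, norm_nonneg z]

end BaseChange
namespace BaseChange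
section Part2
variable {E : Type*} [NormedAddCommGroup E] [NormedSpace ℂ E] {W : Set E}

/-- Push a disk at `w` by the analytic bump `uu n • v`, obtaining a disk at `w' = w + v`. -/
noncomputable def pushDisk {w : E} (f : AnalyticDiskAt E W w) (v w' : E) (hw' : w + v = w')
    (n : ℕ) (hg : GoodAt W (fun p => f.1 p.2) v n) : AnalyticDiskAt E W w' := by
  refine ⟨fun ζ => f.1 ζ + uu n ζ • v, ?_, ?_, ?_, ?_⟩
  · exact f.2.1.add (((uu_cont n).smul continuous_const).continuousOn)
  · exact f.2.2.1.add ((uu_diff n).smul_const v).differentiableOn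
  · intro ζ hζ
    exact hg 0 (by constructor <;> norm_num) ζ hζ (uu n ζ)
      (by nlinarith [norm_nonneg (uu n ζ)])
  · show f.1 1 + uu n 1 • v = w'
    rw [uu_one, one_smul, f.2.2.2.2, hw']

@[simp] lemma pushDisk_fst {w : E} (f : AnalyticDiskAt E W w) (v w' : E) (hw' : w + v = w')
    (n : ℕ) (hg : GoodAt W (fun p => f.1 p.2) v n) :
    (pushDisk f v w' hw' n hg).1 = fun ζ => f.1 ζ + uu n ζ • v := rfl

lemma exists_good_disk (hWopen : IsOpen W) {w : E} (f : AnalyticDiskAt E W w)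
    (ε : ℝ) (hε : 0 < ε) (hball : ball w ε ⊆ W) (v : E) (hv : ‖v‖ ≤ ε / 8) :
    ∃ N, ∀ n ≥ N, GoodAt W (fun p => f.1 p.2) v n :=
  exists_good hWopen _ w
    (f.2.1.comp continuous_snd.continuousOn (fun p hp => hp.2))
    (fun _ _ ζ hζ => f.2.2.2.1 ζ hζ) (fun _ _ => f.2.2.2.2) ε hε hball v hv

/-- Master homotopy builder: a linear interpolation of perturbation coefficients. -/
lemma hhom_lin {w w' : E} (G : ℝ × ℂ → E)
    (hGc : ContinuousOn G (Icc (0:ℝ) 1 ×ˢ closedBall (0:ℂ) 1))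
    (hGd : ∀ t ∈ Icc (0:ℝ) 1, DifferentiableOn ℂ (fun ζ => G (t, ζ)) (ball (0:ℂ) 1))
    (hG1 : ∀ t ∈ Icc (0:ℝ) 1, G (t, 1) = w)
    (v : E) (a b : ℂ → ℂ) (hac : Continuous a) (had : Differentiable ℂ a)
    (hbc : Continuous b) (hbd : Differentiable ℂ b)
    (hab1 : a 1 = b 1) (hw' : w + a 1 • v = w')
    (hbdry : ∀ t ∈ Icc (0:ℝ) 1, ∀ ζ ∈ sphere (0:ℂ) 1,
      G (t, ζ) + ((1 - (t:ℂ)) * a ζ + (t:ℂ) * b ζ) • v ∈ W)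
    (fd gd : AnalyticDiskAt E W w')
    (hfd : ∀ ζ ∈ closedBall (0:ℂ) 1, G (0, ζ) + a ζ • v = fd.1 ζ)
    (hgd : ∀ ζ ∈ closedBall (0:ℂ) 1, G (1, ζ) + b ζ • v = gd.1 ζ) :
    HHomotopic E W w' fd gd := by
  have hφc : Continuous fun p : ℝ × ℂ => ((1 - (p.1:ℂ)) * a p.2 + (p.1:ℂ) * b p.2) • v := by
    apply Continuous.smul _ continuous_const
    exact ((continuous_const.sub (Complex.continuous_ofReal.comp continuous_fst)).mul
        (hac.comp continuous_snd)).add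
      ((Complex.continuous_ofReal.comp continuous_fst).mul (hbc.comp continuous_snd))
  have hFc : ContinuousOn (fun p : ℝ × ℂ => G p + ((1 - (p.1:ℂ)) * a p.2 + (p.1:ℂ) * b p.2) • v)
      (Icc (0:ℝ) 1 ×ˢ closedBall (0:ℂ) 1) := hGc.add hφc.continuousOn
  refine ⟨fun p => G p + ((1 - (p.1:ℂ)) * a p.2 + (p.1:ℂ) * b p.2) • v, hFc, ?_, ?_, ?_⟩
  · intro ζ hζ
    simp only [Complex.ofReal_zero, sub_zero, one_mul, zero_mul, add_zero]
    exact hfd ζ hζ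
  · intro ζ hζ
    simp only [Complex.ofReal_one, sub_self, zero_mul, one_mul, zero_add]
    exact hgd ζ hζ
  · intro t ht
    refine ⟨?_, ?_, fun ζ hζ => hbdry t ht ζ hζ, ?_⟩
    · exact hFc.comp (Continuous.continuousOn (continuous_const.prodMk continuous_id))
        (fun ζ hζ => ⟨ht, hζ⟩)
    · refine (hGd t ht).add ?_
      have hd : Differentiable ℂ fun ζ : ℂ => ((1 - (t:ℂ)) * a ζ + (t:ℂ) * b ζ) • v :=
        (((differentiable_const _).mul had).add ((differentiable_const _).mul hbd)).smul_const v
      exact hd.differentiableOn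
    · show G (t, 1) + ((1 - (t:ℂ)) * a 1 + (t:ℂ) * b 1) • v = w'
      have h1 : ((1 - (t:ℂ)) * a 1 + (t:ℂ) * b 1) = a 1 := by rw [← hab1]; ring
      rw [h1, hG1 t ht, hw']

/-- Exponent-change homotopy: `f + uuⁿ•v` and `f + uuᴹ•v` are h-homotopic (n ≤ M). -/
lemma hhom_exp {w w' : E} (f : AnalyticDiskAt E W w) (v : E) (hw' : w + v = w')
    {n M : ℕ} (hnM : n ≤ M) (hgn : GoodAt W (fun p => f.1 p.2) v n)
    (fd gd : AnalyticDiskAt E W w')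
    (hfd : ∀ ζ ∈ closedBall (0:ℂ) 1, f.1 ζ + uu n ζ • v = fd.1 ζ)
    (hgd : ∀ ζ ∈ closedBall (0:ℂ) 1, f.1 ζ + uu M ζ • v = gd.1 ζ) :
    HHomotopic E W w' fd gd := by
  refine hhom_lin (fun p => f.1 p.2)
    (f.2.1.comp continuous_snd.continuousOn (fun p hp => hp.2))
    (fun t ht => f.2.2.1) (fun t ht => f.2.2.2.2) v (uu n) (uu M)
    (uu_cont n) (uu_diff n) (uu_cont M) (uu_diff M) (by rw [uu_one, uu_one])
    (by rw [uu_one, one_smul, hw']) ?_ fd gd hfd hgd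
  intro t ht ζ hζ
  refine hgn t ht ζ hζ _ ?_
  have h1 : ‖uu M ζ‖ ≤ ‖uu n ζ‖ := uu_norm_anti hnM (sphere_subset_closedBall hζ)
  have ht0 : (0:ℝ) ≤ t := ht.1
  have ht1 : t ≤ 1 := ht.2
  calc ‖(1 - (t:ℂ)) * uu n ζ + (t:ℂ) * uu M ζ‖
      ≤ ‖(1 - (t:ℂ)) * uu n ζ‖ + ‖(t:ℂ) * uu M ζ‖ := norm_add_le _ _
    _ = (1 - t) * ‖uu n ζ‖ + t * ‖uu M ζ‖ := by
        rw [norm_mul, norm_mul]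
        congr 2
        · rw [show ((1:ℂ) - (t:ℂ)) = ((1 - t : ℝ) : ℂ) by push_cast; ring,
            Complex.norm_real, Real.norm_of_nonneg (by linarith)]
        · rw [Complex.norm_real, Real.norm_of_nonneg ht0]
    _ ≤ 2 * ‖uu n ζ‖ := by nlinarith [norm_nonneg (uu n ζ), norm_nonneg (uu M ζ)]

/-- Transport a homotopy along a push: if `H` is an h-homotopy from `f` to `g` at `w`,
then `f + uuᴹ•v` and `g + uuᴹ•v` are h-homotopic at `w + v`. -/
lemma hhom_transport {w w' : E} (v : E) (hw' : w + v = w') (H : ℝ × ℂ → E)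
    (hHc : ContinuousOn H (Icc (0:ℝ) 1 ×ˢ closedBall (0:ℂ) 1))
    (hHsl : ∀ t ∈ Icc (0:ℝ) 1,
      ContinuousOn (fun ζ => H (t, ζ)) (closedBall (0:ℂ) 1) ∧
      DifferentiableOn ℂ (fun ζ => H (t, ζ)) (ball (0:ℂ) 1) ∧
      (∀ ζ ∈ sphere (0:ℂ) 1, H (t, ζ) ∈ W) ∧ H (t, 1) = w)
    {M : ℕ} (hgM : GoodAt W H v M)
    (fd gd : AnalyticDiskAt E W w')
    (hfd : ∀ ζ ∈ closedBall (0:ℂ) 1, H (0, ζ) + uu M ζ • v = fd.1 ζ)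
    (hgd : ∀ ζ ∈ closedBall (0:ℂ) 1, H (1, ζ) + uu M ζ • v = gd.1 ζ) :
    HHomotopic E W w' fd gd := by
  refine hhom_lin H hHc (fun t ht => (hHsl t ht).2.1) (fun t ht => (hHsl t ht).2.2.2)
    v (uu M) (uu M) (uu_cont M) (uu_diff M) (uu_cont M) (uu_diff M) rfl
    (by rw [uu_one, one_smul, hw']) ?_ fd gd hfd hgd
  intro t ht ζ hζ
  have h1 : ((1 - (t:ℂ)) * uu M ζ + (t:ℂ) * uu M ζ) = uu M ζ := by ring
  rw [h1]
  exact hgM t ht ζ hζ _ (by nlinarith [norm_nonneg (uu M ζ)])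

end Part2
end BaseChange
namespace BaseChange
section Part3
variable {E : Type*} [NormedAddCommGroup E] [NormedSpace ℂ E] {W : Set E}

lemma norm_coe_of_nonneg {t : ℝ} (h : 0 ≤ t) : ‖(t:ℂ)‖ = t := by
  rw [Complex.norm_real, Real.norm_of_nonneg h]

/-- Round-trip homotopy: pushing by `uuⁿ•v` and then by `uuᵐ•(-v)` gives a disk
h-homotopic to the original one. -/
lemma hhom_roundtrip {w w' : E} (f : AnalyticDiskAt E W w) (v : E) (hw' : w + v = w')
    (n m : ℕ) (hgn : GoodAt W (fun p => f.1 p.2) v n)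
    (hgm : GoodAt W (fun p => f.1 p.2 + uu n p.2 • v) (-v) m)
    (fd : AnalyticDiskAt E W w)
    (hfd : ∀ ζ ∈ closedBall (0:ℂ) 1, f.1 ζ + uu n ζ • v + uu m ζ • (-v) = fd.1 ζ) :
    HHomotopic E W w fd f := by
  refine hhom_lin (fun p => f.1 p.2)
    (f.2.1.comp continuous_snd.continuousOn (fun p hp => hp.2))
    (fun t ht => f.2.2.1) (fun t ht => f.2.2.2.2) v
    (fun ζ => uu n ζ - uu m ζ) (fun _ => 0)
    ((uu_cont n).sub (uu_cont m)) ((uu_diff n).sub (uu_diff m))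
    continuous_const (differentiable_const _)
    (by show uu n 1 - uu m 1 = 0; rw [uu_one, uu_one, sub_self])
    (by show w + (uu n 1 - uu m 1) • v = w; rw [uu_one, uu_one, sub_self, zero_smul, add_zero])
    ?_ fd f ?_ ?_
  · -- boundary values stay in W
    intro t ht ζ hζ
    have ht0 : (0:ℝ) ≤ t := ht.1
    have ht1 : t ≤ 1 := ht.2
    have hζball : ζ ∈ closedBall (0:ℂ) 1 := sphere_subset_closedBall hζ
    have hn1t : ‖(1:ℂ) - (t:ℂ)‖ = 1 - t := by
      rw [show ((1:ℂ) - (t:ℂ)) = ((1 - t : ℝ) : ℂ) by push_cast; ring,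
        norm_coe_of_nonneg (by linarith)]
    rcases le_total n m with hnm | hmn
    · -- use hgn
      refine hgn t ht ζ hζ _ ?_
      have h1 : ‖uu m ζ‖ ≤ ‖uu n ζ‖ := uu_norm_anti hnm hζball
      calc ‖(1 - (t:ℂ)) * (uu n ζ - uu m ζ) + (t:ℂ) * 0‖
          = ‖(1 - (t:ℂ)) * (uu n ζ - uu m ζ)‖ := by rw [mul_zero, add_zero]
        _ = (1 - t) * ‖uu n ζ - uu m ζ‖ := by rw [norm_mul, hn1t]
        _ ≤ 1 * (‖uu n ζ‖ + ‖uu m ζ‖) := by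
            have := norm_sub_le (uu n ζ) (uu m ζ)
            have hnn : (0:ℝ) ≤ ‖uu n ζ - uu m ζ‖ := norm_nonneg _
            nlinarith
        _ ≤ 2 * ‖uu n ζ‖ := by linarith
    · -- use hgm
      have hz' : ‖(t:ℂ) * uu n ζ + (1 - (t:ℂ)) * uu m ζ‖ ≤ 2 * ‖uu m ζ‖ := by
        have h1 : ‖uu n ζ‖ ≤ ‖uu m ζ‖ := uu_norm_anti hmn hζball
        calc ‖(t:ℂ) * uu n ζ + (1 - (t:ℂ)) * uu m ζ‖
            ≤ ‖(t:ℂ) * uu n ζ‖ + ‖(1 - (t:ℂ)) * uu m ζ‖ := norm_add_le _ _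
          _ = t * ‖uu n ζ‖ + (1 - t) * ‖uu m ζ‖ := by
              rw [norm_mul, norm_mul, hn1t, norm_coe_of_nonneg ht0]
          _ ≤ 2 * ‖uu m ζ‖ := by nlinarith [norm_nonneg (uu n ζ), norm_nonneg (uu m ζ)]
      have hmem := hgm t ht ζ hζ _ hz'
      have hco : ((1 - (t:ℂ)) * (uu n ζ - uu m ζ) + (t:ℂ) * 0)
          = uu n ζ - ((t:ℂ) * uu n ζ + (1 - (t:ℂ)) * uu m ζ) := by ring
      have heq : f.1 ζ + ((1 - (t:ℂ)) * (uu n ζ - uu m ζ) + (t:ℂ) * 0) • v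
          = f.1 ζ + uu n ζ • v
            + ((t:ℂ) * uu n ζ + (1 - (t:ℂ)) * uu m ζ) • (-v) := by
        rw [hco, sub_smul, smul_neg]
        abel
      rw [heq]
      exact hmem
  · intro ζ hζ
    rw [← hfd ζ hζ, smul_neg, sub_smul]
    abel
  · intro ζ _
    rw [zero_smul, add_zero]

lemma push_welldef (hWopen : IsOpen W) {w : E} (ε : ℝ) (hε : 0 < ε) (hw : ball w ε ⊆ W)
    (v w' : E) (hw' : w + v = w') (hv : ‖v‖ ≤ ε / 8)
    (f g : AnalyticDiskAt E W w) (hfg : HHomotopic E W w f g)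
    (n m : ℕ) (hgn : GoodAt W (fun p => f.1 p.2) v n) (hgm : GoodAt W (fun p => g.1 p.2) v m) :
    Quot.mk (HHomotopic E W w') (pushDisk f v w' hw' n hgn)
      = Quot.mk (HHomotopic E W w') (pushDisk g v w' hw' m hgm) := by
  obtain ⟨H, hHc, hH0, hH1, hHsl⟩ := hfg
  obtain ⟨M₀, hM₀⟩ := exists_good hWopen H w hHc (fun t ht => (hHsl t ht).2.2.1)
    (fun t ht => (hHsl t ht).2.2.2) ε hε hw v hv
  set M := max (max n m) M₀ with hM
  have hnM : n ≤ M := le_trans (le_max_left _ _) (le_max_left _ _)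
  have hmM : m ≤ M := le_trans (le_max_right _ _) (le_max_left _ _)
  have hgfM : GoodAt W (fun p => f.1 p.2) v M := hgn.mono hnM
  have hggM : GoodAt W (fun p => g.1 p.2) v M := hgm.mono hmM
  have hgHM : GoodAt W H v M := (hM₀ M₀ le_rfl).mono (le_max_right _ _)
  have e1 : HHomotopic E W w' (pushDisk f v w' hw' n hgn) (pushDisk f v w' hw' M hgfM) :=
    hhom_exp f v hw' hnM hgn _ _ (fun ζ _ => rfl) (fun ζ _ => rfl)
  have e2 : HHomotopic E W w' (pushDisk f v w' hw' M hgfM) (pushDisk g v w' hw' M hggM) :=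
    hhom_transport v hw' H hHc hHsl hgHM _ _
      (fun ζ hζ => by rw [hH0 ζ hζ]; rfl) (fun ζ hζ => by rw [hH1 ζ hζ]; rfl)
  have e3 : HHomotopic E W w' (pushDisk g v w' hw' m hgm) (pushDisk g v w' hw' M hggM) :=
    hhom_exp g v hw' hmM hgm _ _ (fun ζ _ => rfl) (fun ζ _ => rfl)
  calc Quot.mk (HHomotopic E W w') (pushDisk f v w' hw' n hgn)
      = Quot.mk _ (pushDisk f v w' hw' M hgfM) := Quot.sound e1
    _ = Quot.mk _ (pushDisk g v w' hw' M hggM) := Quot.sound e2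
    _ = Quot.mk _ (pushDisk g v w' hw' m hgm) := (Quot.sound e3).symm

lemma push_roundtrip {w w' : E} (f : AnalyticDiskAt E W w) (v : E) (hw' : w + v = w')
    (n : ℕ) (hgn : GoodAt W (fun p => f.1 p.2) v n)
    (v₂ : E) (hw'' : w' + v₂ = w) (m : ℕ)
    (hgm : GoodAt W (fun p => (pushDisk f v w' hw' n hgn).1 p.2) v₂ m) :
    Quot.mk (HHomotopic E W w) (pushDisk (pushDisk f v w' hw' n hgn) v₂ w hw'' m hgm)
      = Quot.mk (HHomotopic E W w) f := by
  have hv₂ : v₂ = -v := by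
    have h0 : w + (v + v₂) = w + 0 := by rw [← add_assoc, hw', hw'', add_zero]
    have h1 : v + v₂ = 0 := add_left_cancel h0
    exact eq_neg_of_add_eq_zero_right h1
  subst hv₂
  exact Quot.sound (hhom_roundtrip f v hw' n m hgn hgm _ (fun ζ _ => rfl))

lemma step_equiv (hWopen : IsOpen W) (ε : ℝ) (hε : 0 < ε) (w w' : E)
    (hw : ball w ε ⊆ W) (hw' : ball w' ε ⊆ W) (hd : ‖w' - w‖ ≤ ε / 8) :
    Nonempty (Quot (HHomotopic E W w) ≃ Quot (HHomotopic E W w')) := by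
  set v := w' - w with hv
  have hwv : w + v = w' := by rw [hv]; abel
  have hwv' : w' + (-v) = w := by rw [hv]; abel
  have hnv : ‖-v‖ ≤ ε / 8 := by rwa [norm_neg]
  have exf : ∀ f : AnalyticDiskAt E W w, ∃ N, ∀ k ≥ N, GoodAt W (fun p => f.1 p.2) v k :=
    fun f => exists_good_disk hWopen f ε hε hw v hd
  have exg : ∀ g : AnalyticDiskAt E W w', ∃ N, ∀ k ≥ N, GoodAt W (fun p => g.1 p.2) (-v) k :=
    fun g => exists_good_disk hWopen g ε hε hw' (-v) hnv
  refine ⟨⟨Quot.lift (fun f => Quot.mk (HHomotopic E W w')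
      (pushDisk f v w' hwv (exf f).choose ((exf f).choose_spec _ le_rfl)))
      (fun f g hfg => push_welldef hWopen ε hε hw v w' hwv hd f g hfg _ _ _ _),
    Quot.lift (fun g => Quot.mk (HHomotopic E W w)
      (pushDisk g (-v) w hwv' (exg g).choose ((exg g).choose_spec _ le_rfl)))
      (fun f g hfg => push_welldef hWopen ε hε hw' (-v) w hwv' hnv f g hfg _ _ _ _), ?_, ?_⟩⟩
  · intro x
    induction x using Quot.ind with
    | _ f => exact push_roundtrip f v hwv _ _ (-v) hwv' _ _
  · intro x
    induction x using Quot.ind with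
    | _ g => exact push_roundtrip g (-v) hwv' _ _ v hwv _ _

end Part3
end BaseChange
/-- **Theorem 5.4(2)** (set-theoretic content): for an open path-connected subset `W` of a
complex Banach space `E` and `w₀, w₁ ∈ W`, there is a bijection between the set of
h-homotopy classes of `𝒜_{w₁}(W, E)` and that of `𝒜_{w₀}(W, E)`. -/
theorem base_change_bijection
    (E : Type*) [NormedAddCommGroup E] [NormedSpace ℂ E]
    (W : Set E) (hWopen : IsOpen W) (hWconn : IsPathConnected W)
    (w₀ w₁ : E) (hw₀ : w₀ ∈ W) (hw₁ : w₁ ∈ W) :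
    Nonempty (Quot (HHomotopic E W w₁) ≃ Quot (HHomotopic E W w₀)) := by
  classical
  obtain ⟨γ, hγ⟩ := hWconn.joinedIn w₁ hw₁ w₀ hw₀
  have hKc : IsCompact (γ.extend '' Icc 0 1) := isCompact_Icc.image γ.continuous_extend
  have hKW : γ.extend '' Icc 0 1 ⊆ W := by
    rintro x ⟨t, ht, rfl⟩
    rw [γ.extend_apply ht]
    exact hγ _
  obtain ⟨ε, hε, hεW⟩ := hKc.exists_thickening_subset_open hWopen hKW
  obtain ⟨δ, hδ, hδγ⟩ := Metric.uniformContinuousOn_iff.mp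
    (isCompact_Icc.uniformContinuousOn_of_continuous γ.continuous_extend.continuousOn)
    (ε / 8) (by linarith)
  obtain ⟨k', hk'⟩ := exists_nat_one_div_lt hδ
  set k := k' + 1 with hkdef
  have hk0 : (0:ℝ) < (k:ℝ) := by positivity
  set p : ℕ → E := fun i => γ.extend (i / k) with hpdef
  have hmem : ∀ i : ℕ, i ≤ k → ((i:ℝ) / (k:ℝ)) ∈ Icc (0:ℝ) 1 := by
    intro i hi
    constructor
    · positivity
    · rw [div_le_one hk0]; exact_mod_cast hi
  have hballs : ∀ i : ℕ, i ≤ k → ball (p i) ε ⊆ W := by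
    intro i hi
    have hpi : p i ∈ γ.extend '' Icc 0 1 := ⟨_, hmem i hi, rfl⟩
    exact (ball_subset_thickening hpi ε).trans hεW
  have key : ∀ i : ℕ, i ≤ k →
      Nonempty (Quot (HHomotopic E W w₁) ≃ Quot (HHomotopic E W (p i))) := by
    intro i
    induction i with
    | zero =>
      intro _
      have h0 : p 0 = w₁ := by simp [hpdef]
      rw [h0]
      exact ⟨Equiv.refl _⟩
    | succ i ih =>
      intro hik
      have hi : i ≤ k := Nat.le_of_succ_le hik
      obtain ⟨e1⟩ := ih hi
      have hdd : dist (((i:ℝ)+1) / (k:ℝ)) ((i:ℝ) / (k:ℝ)) < δ := by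
        rw [Real.dist_eq]
        have h1 : ((i:ℝ)+1) / (k:ℝ) - (i:ℝ) / (k:ℝ) = 1 / (k:ℝ) := by
          field_simp
          ring
        rw [h1, abs_of_pos (by positivity)]
        have : (k:ℝ) = (k':ℝ) + 1 := by rw [hkdef]; push_cast; ring
        rw [this]
        exact hk'
      have hdist : ‖p (i+1) - p i‖ ≤ ε / 8 := by
        rw [← dist_eq_norm]
        have h1 := hδγ _ (by exact_mod_cast hmem (i+1) hik) _ (hmem i hi)
          (by exact_mod_cast hdd)
        exact h1.le
      obtain ⟨e2⟩ := BaseChange.step_equiv hWopen ε hε (p i) (p (i+1))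
        (hballs i hi) (hballs (i+1) hik) hdist
      exact ⟨e1.trans e2⟩
  obtain ⟨e⟩ := key k le_rfl
  have hpk : p k = w₀ := by
    have h1 : ((k:ℝ)) / (k:ℝ) = 1 := div_self (ne_of_gt hk0)
    simp [hpdef, h1]
  rw [hpk] at e
  exact ⟨e⟩
end

section
/- Let E be a complex Banach space, let W be an open, path-connected subset of E, and let w₀ ∈ W. Let g : ℂ → E be an analytic disk with g(𝕋) ⊆ W (no base-point condition). Then there exist an analytic disk f with f(𝕋) ⊆ W and f(1) = w₀, and a continuous map H : [0,1] × 𝔻̄ → E with H(0, ·) = g and H(1, ·) = f such that for every t ∈ [0,1] the slice H(t, ·) is an analytic disk with H(t, 𝕋) ⊆ W. That is, every connected component of the space 𝒜(W, E) of analytic disks with boundary in W contains a disk passing through w₀ at the point 1. -/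
open Complex Metric Set Filter

noncomputable def phiM (ζ : ℂ) : ℂ := (1 - ζ) / (1 + ζ)

noncomputable def hdisk (t : ℝ) (ζ : ℂ) : ℂ :=
  if ζ = -1 then 0 else Complex.exp (-(t : ℂ) * (phiM ζ) ^ (1/2 : ℂ))

lemma phiM_re_nonneg {ζ : ℂ} (h : ‖ζ‖ ≤ 1) : 0 ≤ (phiM ζ).re := by
  rcases eq_or_ne (1 + ζ) 0 with h0 | h0
  · simp [phiM, h0]
  · rw [phiM, Complex.div_re]
    have hn : Complex.normSq ζ ≤ 1 := by
      rw [← Complex.sq_norm]; nlinarith [norm_nonneg ζ]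
    have h1 : 0 < Complex.normSq (1 + ζ) := Complex.normSq_pos.2 h0
    have : (1 - ζ).re * (1 + ζ).re + (1 - ζ).im * (1 + ζ).im = 1 - Complex.normSq ζ := by
      simp [Complex.normSq_apply]; ring
    rw [← add_div, this]
    exact div_nonneg (by linarith) h1.le

lemma phiM_re_pos {ζ : ℂ} (h : ‖ζ‖ < 1) : 0 < (phiM ζ).re := by
  have h0 : (1 + ζ) ≠ 0 := by
    intro hc
    have : ζ = -1 := by linear_combination hc
    simp [this] at h
  rw [phiM, Complex.div_re]
  have hn : Complex.normSq ζ < 1 := by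
    rw [← Complex.sq_norm]; nlinarith [norm_nonneg ζ]
  have h1 : 0 < Complex.normSq (1 + ζ) := Complex.normSq_pos.2 h0
  have : (1 - ζ).re * (1 + ζ).re + (1 - ζ).im * (1 + ζ).im = 1 - Complex.normSq ζ := by
    simp [Complex.normSq_apply]; ring
  rw [← add_div, this]
  exact div_pos (by linarith) h1

lemma phiM_ne_zero {ζ : ℂ} (h1 : ζ ≠ 1) (h2 : ζ ≠ -1) : phiM ζ ≠ 0 := by
  apply div_ne_zero
  · intro hc
    apply h1
    linear_combination -hc
  · intro hc
    apply h2
    linear_combination hc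

lemma cpow_half_abs {z : ℂ} (hz : z ≠ 0) :
    ‖z ^ (1/2 : ℂ)‖ = Real.sqrt (‖z‖) := by
  rw [Complex.cpow_def_of_ne_zero hz, Complex.norm_exp]
  have : (Complex.log z * (1/2 : ℂ)).re = Real.log (‖z‖) / 2 := by
    simp [Complex.mul_re, Complex.log_re]
    ring
  rw [this]
  have h0 : 0 < ‖z‖ := norm_pos_iff.mpr hz
  rw [← Real.log_sqrt h0.le, Real.exp_log (Real.sqrt_pos.2 h0)]

lemma cpow_half_re {z : ℂ} (hz : z ≠ 0) (h : 0 ≤ z.re) :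
    Real.sqrt (‖z‖) / 2 ≤ (z ^ (1/2 : ℂ)).re := by
  rw [Complex.cpow_def_of_ne_zero hz, Complex.exp_re]
  have hre : (Complex.log z * (1/2 : ℂ)).re = Real.log (‖z‖) / 2 := by
    simp [Complex.mul_re, Complex.log_re]; ring
  have him : (Complex.log z * (1/2 : ℂ)).im = z.arg / 2 := by
    simp [Complex.mul_im, Complex.log_im]; ring
  rw [hre, him]
  have h0 : 0 < ‖z‖ := norm_pos_iff.mpr hz
  have hexp : Real.exp (Real.log (‖z‖) / 2) = Real.sqrt (‖z‖) := by
    rw [← Real.log_sqrt h0.le, Real.exp_log (Real.sqrt_pos.2 h0)]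
  rw [hexp]
  have harg : |z.arg| ≤ Real.pi / 2 := Complex.abs_arg_le_pi_div_two_iff.2 h
  have hπ : Real.pi < 3.15 := Real.pi_lt_d2
  have hcos : (1:ℝ)/2 ≤ Real.cos (z.arg / 2) := by
    have := Real.one_sub_sq_div_two_le_cos (x := z.arg / 2)
    nlinarith [abs_nonneg z.arg, _root_.sq_abs z.arg, abs_le.1 harg]
  nlinarith [Real.sqrt_nonneg (‖z‖)]

noncomputable def wsq (ζ : ℂ) : ℂ := (phiM ζ) ^ (1/2 : ℂ)

lemma wsq_re_nonneg {ζ : ℂ} (h : ‖ζ‖ ≤ 1) : 0 ≤ (wsq ζ).re := by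
  rcases eq_or_ne (phiM ζ) 0 with h0 | h0
  · simp [wsq, h0, Complex.zero_cpow (by norm_num : (1/2 : ℂ) ≠ 0)]
  · exact le_trans (by positivity) (cpow_half_re h0 (phiM_re_nonneg h))

lemma abs_wsq_le {ζ : ℂ} (h : ‖ζ‖ ≤ 1) :
    ‖wsq ζ‖ ≤ 2 * (wsq ζ).re := by
  rcases eq_or_ne (phiM ζ) 0 with h0 | h0
  · simp [wsq, h0, Complex.zero_cpow (by norm_num : (1/2 : ℂ) ≠ 0)]
  · rw [wsq, cpow_half_abs h0]
    have h1 := cpow_half_re h0 (phiM_re_nonneg h)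
    linarith

lemma hdisk_eq {t : ℝ} {ζ : ℂ} (h2 : ζ ≠ -1) :
    hdisk t ζ = Complex.exp (-(t : ℂ) * wsq ζ) := by
  simp [hdisk, h2, wsq]

lemma abs_hdisk {t : ℝ} {ζ : ℂ} (h2 : ζ ≠ -1) :
    ‖hdisk t ζ‖ = Real.exp (-(t * (wsq ζ).re)) := by
  rw [hdisk_eq h2, Complex.norm_exp]
  congr 1
  simp [Complex.mul_re]

lemma hdisk_sub_one {t : ℝ} {ζ : ℂ} (ht : 0 ≤ t) (h2 : ζ ≠ -1)
    (hsmall : t * ‖wsq ζ‖ ≤ 1) :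
    ‖hdisk t ζ - 1‖ ≤ 2 * (t * ‖wsq ζ‖) := by
  rw [hdisk_eq h2]
  have habs : ‖-(t : ℂ) * wsq ζ‖ = t * ‖wsq ζ‖ := by
    rw [norm_mul, norm_neg, Complex.norm_real, Real.norm_eq_abs, _root_.abs_of_nonneg ht]
  calc ‖Complex.exp (-(t : ℂ) * wsq ζ) - 1‖
      ≤ 2 * ‖-(t : ℂ) * wsq ζ‖ :=
        Complex.norm_exp_sub_one_le (by rw [habs]; exact hsmall)
    _ = 2 * (t * ‖wsq ζ‖) := by rw [habs]

lemma hdisk_one (t : ℝ) : hdisk t 1 = 1 := by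
  have : phiM 1 = 0 := by simp [phiM]
  have h1 : (1 : ℂ) ≠ -1 := by
    intro hc
    have := congrArg Complex.re hc
    norm_num at this
  simp [hdisk, this, h1, Complex.zero_cpow (by norm_num : (1/2 : ℂ) ≠ 0)]

lemma hdisk_neg_one (t : ℝ) : hdisk t (-1) = 0 := by simp [hdisk]

lemma abs_hdisk_le_one {t : ℝ} {ζ : ℂ} (ht : 0 ≤ t) (h : ‖ζ‖ ≤ 1) :
    ‖hdisk t ζ‖ ≤ 1 := by
  rcases eq_or_ne ζ (-1) with rfl | h2
  · simp [hdisk_neg_one]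
  · rw [abs_hdisk h2, Real.exp_le_one_iff]
    have := wsq_re_nonneg h
    nlinarith

lemma hdisk_differentiableOn (t : ℝ) : DifferentiableOn ℂ (hdisk t) (ball (0:ℂ) 1) := by
  intro ζ hζ
  have habs : ‖ζ‖ < 1 := by simpa [Complex.dist_eq] using hζ
  have hne : ζ ≠ -1 := by
    intro h; rw [h] at habs; simp at habs
  have hden : (1 : ℂ) + ζ ≠ 0 := by
    intro hc
    apply hne
    linear_combination hc
  have hd : DifferentiableAt ℂ (fun ξ => Complex.exp (-(t:ℂ) * (phiM ξ) ^ (1/2:ℂ))) ζ := by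
    apply DifferentiableAt.cexp
    apply DifferentiableAt.const_mul
    apply DifferentiableAt.cpow
    · exact ((differentiableAt_const _).sub differentiableAt_id).div
        ((differentiableAt_const _).add differentiableAt_id) hden
    · exact differentiableAt_const _
    · exact Complex.mem_slitPlane_iff.2 (Or.inl (phiM_re_pos habs))
  have heq : hdisk t =ᶠ[nhds ζ] fun ξ => Complex.exp (-(t:ℂ) * (phiM ξ) ^ (1/2:ℂ)) := by
    filter_upwards [isOpen_ne.mem_nhds hne] with ξ hξ
    simp [hdisk, hξ, phiM]
  exact (hd.congr_of_eventuallyEq heq).differentiableWithinAt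

lemma hdisk_continuousOn {t : ℝ} (ht : 0 < t) :
    ContinuousOn (hdisk t) (closedBall (0:ℂ) 1) := by
  intro ζ hζ
  have hζ1 : ‖ζ‖ ≤ 1 := by simpa [Complex.dist_eq] using hζ
  rcases eq_or_ne ζ (-1) with rfl | hne
  · -- squeeze at -1
    rw [ContinuousWithinAt, hdisk_neg_one]
    apply squeeze_zero_norm' (a := fun ξ : ℂ => 2 / t * Real.sqrt (‖1 + ξ‖))
    · have hU : {ξ : ℂ | 1 < ‖1 - ξ‖} ∈ nhds (-1 : ℂ) := by
        have hop : IsOpen {ξ : ℂ | 1 < ‖1 - ξ‖} :=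
          isOpen_lt continuous_const
            (continuous_norm.comp (continuous_const.sub continuous_id))
        apply hop.mem_nhds
        norm_num
      filter_upwards [mem_nhdsWithin_of_mem_nhds hU, self_mem_nhdsWithin] with ξ hξ hξcb
      have hξ1 : ‖ξ‖ ≤ 1 := by simpa [Complex.dist_eq] using hξcb
      rcases eq_or_ne ξ (-1) with rfl | hξne
      · rw [hdisk_neg_one]
        simp only [norm_zero]
        positivity
      · have hden : (1 : ℂ) + ξ ≠ 0 := by
          intro hc; apply hξne; linear_combination hc
        have hnum : (1 : ℂ) - ξ ≠ 0 := by
          intro hc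
          rw [show ξ = 1 by linear_combination -hc] at hξ
          norm_num at hξ
        have hz : phiM ξ ≠ 0 := div_ne_zero hnum hden
        have hplus : 0 < ‖1 + ξ‖ := norm_pos_iff.mpr hden
        set A := ‖1 + ξ‖ with hA
        set s := Real.sqrt A with hs
        have hspos : 0 < s := Real.sqrt_pos.2 hplus
        have habsphi : ‖phiM ξ‖ = ‖1 - ξ‖ / A := by
          rw [phiM, norm_div]
        have hge : (1 : ℝ) / A ≤ ‖phiM ξ‖ := by
          rw [habsphi]
          gcongr

        have hr1 : Real.sqrt (‖phiM ξ‖) / 2 ≤ (wsq ξ).re :=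
          cpow_half_re hz (phiM_re_nonneg hξ1)
        have hsqrtge : s⁻¹ ≤ Real.sqrt (‖phiM ξ‖) := by
          rw [hs, ← Real.sqrt_inv]
          apply Real.sqrt_le_sqrt
          rw [← one_div]
          exact hge
        set r := (wsq ξ).re with hrdef
        have hrpos : 0 < r := by
          have h2 : s⁻¹ / 2 ≤ Real.sqrt (‖phiM ξ‖) / 2 := by linarith
          have h3 : (0:ℝ) < s⁻¹ / 2 := by positivity
          linarith
        have hxle : t * r ≤ Real.exp (t * r) := by
          linarith [Real.add_one_le_exp (t * r)]
        have htr : 0 < t * r := by positivity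
        have hkey : Real.exp (-(t * r)) ≤ 2 / t * s := by
          rw [Real.exp_neg]
          have h1 : (Real.exp (t * r))⁻¹ ≤ (t * r)⁻¹ := by
            apply inv_anti₀ htr hxle
          apply le_trans h1
          rw [inv_le_iff_one_le_mul₀ htr]
          have hss : s⁻¹ * s = 1 := inv_mul_cancel₀ (ne_of_gt hspos)
          have hrs : s⁻¹ / 2 ≤ r := le_trans (by gcongr) hr1
          have : (1:ℝ) / 2 ≤ r * s := by
            calc (1:ℝ)/2 = (s⁻¹ * s)/2 := by rw [hss]
            _ = (s⁻¹/2) * s := by ring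
            _ ≤ r * s := by gcongr
          calc (1:ℝ) = 2 * (1/2) := by norm_num
          _ ≤ 2 * (r * s) := by gcongr
          _ = 2 / t * s * (t * r) := by field_simp
        calc ‖hdisk t ξ‖ = Real.exp (-(t * r)) := by
              rw [abs_hdisk hξne]
        _ ≤ 2 / t * s := hkey
    · have hcont : Continuous fun ξ : ℂ => 2 / t * Real.sqrt (‖1 + ξ‖) := by
        continuity
      have := (hcont.tendsto (-1)).mono_left
        (nhdsWithin_le_nhds (s := closedBall (0:ℂ) 1))
      simpa using this
  · have hden : (1 : ℂ) + ζ ≠ 0 := by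
      intro hc; apply hne; linear_combination hc
    have hc : ContinuousAt (fun ξ => Complex.exp (-(t:ℂ) * (phiM ξ) ^ (1/2:ℂ))) ζ := by
      apply Complex.continuous_exp.continuousAt.comp
      apply ContinuousAt.mul continuousAt_const
      exact ContinuousAt.comp
        (Complex.continuousAt_cpow_const_of_re_pos (Or.inl (phiM_re_nonneg hζ1)) (by norm_num))
        ((continuousAt_const.sub continuousAt_id).div
          (continuousAt_const.add continuousAt_id) hden)
    have heq : (fun ξ => Complex.exp (-(t:ℂ) * (phiM ξ) ^ (1/2:ℂ))) =ᶠ[nhds ζ] hdisk t := by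
      filter_upwards [isOpen_ne.mem_nhds hne] with ξ hξ
      simp [hdisk, hξ, phiM]
    exact (hc.congr heq).continuousWithinAt

lemma min_sub_min_le {x y s : ℝ} (hxy : x ≤ y) : dist (min y s) (min x s) ≤ y - x := by
  rw [Real.dist_eq, abs_le]
  constructor
  · have h1 : min x s ≤ min y s := min_le_min hxy le_rfl
    linarith
  · rcases le_total s x with h | h
    · rw [min_eq_right h, min_eq_right (h.trans hxy)]
      linarith
    · have h1 : min y s ≤ y := min_le_left _ _
      have h2 : x ≤ min x s := le_min le_rfl h
      linarith

set_option maxHeartbeats 1600000 in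
/-- **Theorem 5.8 (surjectivity part)**: for an open path-connected subset `W` of a complex
Banach space `E` and `w₀ ∈ W`, every analytic disk `g` with boundary in `W` can be joined,
by a continuous family of analytic disks with boundary in `W`, to an analytic disk `f` with
boundary in `W` and `f 1 = w₀`; i.e. every connected component of `𝒜(W, E)` contains a
disk passing through `w₀` at the point `1`. -/
theorem component_contains_based_disk
    (E : Type*) [NormedAddCommGroup E] [NormedSpace ℂ E]
    (W : Set E) (hWopen : IsOpen W) (hWconn : IsPathConnected W)
    (w₀ : E) (hw₀ : w₀ ∈ W)
    (g : ℂ → E)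
    (hgc : ContinuousOn g (closedBall (0:ℂ) 1))
    (hgd : DifferentiableOn ℂ g (ball (0:ℂ) 1))
    (hgT : ∀ ζ ∈ sphere (0:ℂ) 1, g ζ ∈ W) :
    ∃ f : ℂ → E,
      ContinuousOn f (closedBall (0:ℂ) 1) ∧
      DifferentiableOn ℂ f (ball (0:ℂ) 1) ∧
      (∀ ζ ∈ sphere (0:ℂ) 1, f ζ ∈ W) ∧ f 1 = w₀ ∧
      ∃ H : ℝ × ℂ → E,
        ContinuousOn H (Icc (0:ℝ) 1 ×ˢ closedBall (0:ℂ) 1) ∧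
        (∀ ζ ∈ closedBall (0:ℂ) 1, H (0, ζ) = g ζ) ∧
        (∀ ζ ∈ closedBall (0:ℂ) 1, H (1, ζ) = f ζ) ∧
        ∀ t ∈ Icc (0:ℝ) 1,
          ContinuousOn (fun ζ => H (t, ζ)) (closedBall (0:ℂ) 1) ∧
          DifferentiableOn ℂ (fun ζ => H (t, ζ)) (ball (0:ℂ) 1) ∧
          (∀ ζ ∈ sphere (0:ℂ) 1, H (t, ζ) ∈ W) := by
  classical
  have h1S : (1:ℂ) ∈ sphere (0:ℂ) 1 := by simp
  have h1cb : (1:ℂ) ∈ closedBall (0:ℂ) 1 := sphere_subset_closedBall h1S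
  have hg1W : g 1 ∈ W := hgT 1 h1S
  obtain ⟨γ, hγW⟩ := hWconn.joinedIn (g 1) hg1W w₀ hw₀
  -- the compact set K and the radius ε
  set K : Set E := g '' (sphere (0:ℂ) 1) ∪ γ.extend '' (Icc (0:ℝ) 1) with hK
  have hKcpt : IsCompact K := by
    apply IsCompact.union
    · exact (isCompact_sphere (0:ℂ) 1).image_of_continuousOn
        (hgc.mono sphere_subset_closedBall)
    · exact isCompact_Icc.image γ.continuous_extend
  have hΓW : ∀ u : ℝ, γ.extend u ∈ W := by
    intro u
    have : γ.extend u ∈ range γ.extend := mem_range_self u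
    rw [γ.extend_range] at this
    obtain ⟨v, hv⟩ := this
    rw [← hv]; exact hγW v
  have hKW : K ⊆ W := by
    rintro x (⟨ζ, hζ, rfl⟩ | ⟨u, _, rfl⟩)
    · exact hgT ζ hζ
    · exact hΓW u
  obtain ⟨ε, hε, hthick⟩ := hKcpt.exists_thickening_subset_open hWopen hKW
  have hmem : ∀ x y : E, y ∈ K → dist x y < ε → x ∈ W := by
    intro x y hy hd
    exact hthick (Metric.mem_thickening_iff.2 ⟨y, hy, hd⟩)
  -- uniform continuity data
  have hΓuc := isCompact_Icc.uniformContinuousOn_of_continuous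
    (γ.continuous_extend.continuousOn (s := Icc (0:ℝ) 1))
  rw [Metric.uniformContinuousOn_iff] at hΓuc
  obtain ⟨d, hd, hΓd⟩ := hΓuc (ε/8) (by positivity)
  have hguc := (isCompact_closedBall (0:ℂ) 1).uniformContinuousOn_of_continuous hgc
  rw [Metric.uniformContinuousOn_iff] at hguc
  obtain ⟨σ, hσ, hgσ⟩ := hguc (ε/8) (by positivity)
  -- choice of N
  obtain ⟨n, hn⟩ := exists_nat_one_div_lt hd
  set N : ℕ := n + 1 with hNdef
  have hN0 : (0:ℝ) < (N:ℝ) := by positivity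
  have hN1 : (1:ℝ)/(N:ℝ) < d := by
    have : ((N:ℝ)) = (n:ℝ) + 1 := by push_cast [hNdef]; ring
    rw [this]; exact hn
  -- constants
  set a : ℝ := 1 / (8 * ((N:ℝ) + 1)) with hadef
  have ha : 0 < a := by positivity
  have haN : (N:ℝ) * a ≤ 1/8 := by
    rw [hadef, mul_one_div, div_le_div_iff₀ (by positivity) (by norm_num)]
    nlinarith [hN0]
  have hahalf : a ≤ 1/2 := by
    rw [hadef, div_le_div_iff₀ (by positivity) (by norm_num)]
    nlinarith [hN0]
  set b : ℝ := Real.log (1/a) with hbdef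
  have hNcast1 : (1:ℝ) ≤ (N:ℝ) := by
    have : 1 ≤ N := by omega
    exact_mod_cast this
  have hb1 : 1 ≤ b := by
    rw [hbdef, Real.le_log_iff_exp_le (by positivity)]
    have h16 : (16:ℝ) ≤ 1/a := by
      rw [hadef, one_div_one_div]
      nlinarith
    have := Real.exp_one_lt_d9
    linarith
  have hb0 : 0 < b := lt_of_lt_of_le one_pos hb1
  have hexpb : Real.exp (-b) = a := by
    rw [hbdef, Real.exp_neg, Real.exp_log (by positivity : (0:ℝ) < 1/a), one_div, inv_inv]
  set ρ : ℝ := b / a with hρdef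
  have hρ0 : 0 < ρ := by positivity
  have hρ1 : 1 ≤ ρ := by
    rw [hρdef, le_div_iff₀ ha]; nlinarith
  have hρa : ρ * a = b := by rw [hρdef]; field_simp
  set r₀ : ℝ := Real.sqrt (σ/2) / 2 with hr₀def
  have hr₀ : 0 < r₀ := by rw [hr₀def]; positivity
  set t₀ : ℝ := b / r₀ with ht₀def
  have ht₀ : 0 < t₀ := by positivity
  set tt : ℕ → ℝ := fun i => t₀ * ρ ^ i with httdef
  have htt : ∀ i, 0 < tt i := fun i => by rw [httdef]; positivity
  have htt0 : ∀ i, t₀ ≤ tt i := by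
    intro i
    rw [httdef]
    simp only
    nlinarith [one_le_pow₀ hρ1 (n := i), ht₀]
  have httsucc : ∀ i j : ℕ, i + 1 ≤ j → tt i * ρ ≤ tt j := by
    intro i j hij
    rw [httdef]
    simp only
    calc t₀ * ρ ^ i * ρ = t₀ * ρ ^ (i+1) := by ring
    _ ≤ t₀ * ρ ^ j := by
        apply mul_le_mul_of_nonneg_left _ ht₀.le
        exact pow_le_pow_right₀ hρ1 hij
  -- the moving path points
  set P : ℕ → ℝ → E := fun i s => γ.extend (min ((i:ℝ)/(N:ℝ)) s) with hPdef
  have hPcont : ∀ i, Continuous fun s => P i s := fun i =>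
    γ.continuous_extend.comp (continuous_const.min continuous_id)
  have hP0 : ∀ s ∈ Icc (0:ℝ) 1, P 0 s = g 1 := by
    intro s hs
    rw [hPdef]
    simp only [Nat.cast_zero, zero_div]
    rw [min_eq_left hs.1, γ.extend_zero]
  have hPN1 : P N 1 = w₀ := by
    rw [hPdef]
    simp only [div_self (ne_of_gt hN0), min_self]
    exact γ.extend_one
  have hPi0 : ∀ i : ℕ, P i 0 = g 1 := by
    intro i
    rw [hPdef]
    simp only
    rw [min_eq_right (by positivity), γ.extend_zero]
  have hPK : ∀ i : ℕ, ∀ s ∈ Icc (0:ℝ) 1, P i s ∈ K := by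
    intro i s hs
    apply Or.inr
    apply mem_image_of_mem
    exact ⟨le_min (by positivity) hs.1, le_trans (min_le_right _ _) hs.2⟩
  have hPd : ∀ i : ℕ, ∀ s ∈ Icc (0:ℝ) 1, ‖P (i+1) s - P i s‖ ≤ ε/8 := by
    intro i s hs
    rw [hPdef]
    simp only [← dist_eq_norm]
    apply le_of_lt
    apply hΓd
    · exact ⟨le_min (by positivity) hs.1, le_trans (min_le_right _ _) hs.2⟩
    · exact ⟨le_min (by positivity) hs.1, le_trans (min_le_right _ _) hs.2⟩
    · have hle : (i:ℝ)/(N:ℝ) ≤ (((i:ℕ)+1:ℕ):ℝ)/(N:ℝ) := by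
        have hpos : (0:ℝ) < (N:ℝ) := hN0
        push_cast at hpos ⊢
        rw [div_le_div_iff₀ hpos hpos]
        nlinarith
      calc dist (min ((((i:ℕ)+1:ℕ):ℝ)/(N:ℝ)) s) (min ((i:ℝ)/(N:ℝ)) s)
          ≤ (((i:ℕ)+1:ℕ):ℝ)/(N:ℝ) - (i:ℝ)/(N:ℝ) := min_sub_min_le hle
      _ = 1/(N:ℝ) := by push_cast; ring
      _ < d := hN1
  -- the homotopy
  set H : ℝ × ℂ → E :=
    fun p => g p.2 + ∑ i ∈ Finset.range N, hdisk (tt i) p.2 • (P (i+1) p.1 - P i p.1) with hHdef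
  -- boundary membership
  have hbdry : ∀ s ∈ Icc (0:ℝ) 1, ∀ ζ ∈ sphere (0:ℂ) 1, H (s, ζ) ∈ W := by
    intro s hs ζ hζS
    have hζcb : ζ ∈ closedBall (0:ℂ) 1 := sphere_subset_closedBall hζS
    have hζ1 : ‖ζ‖ = 1 := by simpa [Complex.dist_eq] using hζS
    rcases eq_or_ne ζ (-1) with rfl | hne
    · have hzero : H (s, -1) = g (-1) := by
        rw [hHdef]
        simp [hdisk_neg_one]
      rw [hzero]
      exact hgT _ hζS
    set r : ℝ := (wsq ζ).re with hrdef
    have hr0 : 0 ≤ r := by rw [hrdef]; exact wsq_re_nonneg hζ1.le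
    have hw2r : ‖wsq ζ‖ ≤ 2 * r := by rw [hrdef]; exact abs_wsq_le hζ1.le
    have habsc : ∀ i, ‖hdisk (tt i) ζ‖ = Real.exp (-(tt i * r)) := by
      intro i
      rw [abs_hdisk hne, hrdef]
    rcases le_or_gt r₀ r with hcase | hcase
    · -- tail completely off
      have hsum : ‖H (s, ζ) - g ζ‖ ≤ (N:ℝ) * (a * (ε/8)) := by
        have hHg : H (s, ζ) - g ζ
            = ∑ i ∈ Finset.range N, hdisk (tt i) ζ • (P (i+1) s - P i s) := by
          rw [hHdef]
          simp
        rw [hHg]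
        refine le_trans (norm_sum_le _ _) ?_
        have hterm : ∀ i ∈ Finset.range N,
            ‖hdisk (tt i) ζ • (P (i+1) s - P i s)‖ ≤ a * (ε/8) := by
          intro i _
          rw [norm_smul]
          have h1 : ‖hdisk (tt i) ζ‖ ≤ a := by
            rw [habsc i, ← hexpb]
            apply Real.exp_le_exp.2
            have h2 : t₀ * r₀ = b := by rw [ht₀def]; field_simp
            have h3 : t₀ * r₀ ≤ tt i * r :=
              mul_le_mul (htt0 i) hcase hr₀.le (htt i).le
            linarith
          exact mul_le_mul h1 (hPd i s hs) (norm_nonneg _) ha.le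
        calc ∑ i ∈ Finset.range N, ‖hdisk (tt i) ζ • (P (i+1) s - P i s)‖
            ≤ ∑ _i ∈ Finset.range N, (a * (ε/8)) := Finset.sum_le_sum hterm
        _ = (N:ℝ) * (a * (ε/8)) := by
            rw [Finset.sum_const, Finset.card_range, nsmul_eq_mul]
      apply hmem _ (g ζ) (Or.inl (mem_image_of_mem g hζS))
      rw [dist_eq_norm]
      nlinarith
    · -- near ζ = 1
      have hζnear : dist ζ 1 < σ := by
        by_contra hcon
        push_neg at hcon
        have hζne1 : ζ ≠ 1 := by
          intro hc
          rw [hc] at hcon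
          simp at hcon
          linarith
        have hz : phiM ζ ≠ 0 := phiM_ne_zero hζne1 hne
        have h1mz : σ ≤ ‖1 - ζ‖ := by
          have : dist ζ 1 = ‖1 - ζ‖ := by
            rw [Complex.dist_eq, ← norm_neg]
            congr 1
            ring
          linarith [hcon, this.symm.le]
        have h1pz0 : (1:ℂ) + ζ ≠ 0 := fun hc => hne (by linear_combination hc)
        have h1pz : ‖1 + ζ‖ ≤ 2 := by
          calc ‖1 + ζ‖ ≤ ‖1‖ + ‖ζ‖ := norm_add_le _ _
          _ = 2 := by rw [hζ1]; norm_num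
        have hphi : σ/2 ≤ ‖phiM ζ‖ := by
          rw [phiM, norm_div]
          exact div_le_div₀ (norm_nonneg _) h1mz (norm_pos_iff.mpr h1pz0) h1pz
        have hrge : r₀ ≤ r := by
          have hre := cpow_half_re hz (phiM_re_nonneg hζ1.le)
          have hs2 : Real.sqrt (σ/2) ≤ Real.sqrt (‖phiM ζ‖) :=
            Real.sqrt_le_sqrt hphi
          rw [hrdef, hr₀def]
          calc Real.sqrt (σ/2)/2 ≤ Real.sqrt (‖phiM ζ‖)/2 := by linarith
          _ ≤ (wsq ζ).re := hre
        linarith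
      have hgnear : dist (g ζ) (g 1) < ε/8 := hgσ ζ hζcb 1 h1cb hζnear
      have hkex : ∃ i : ℕ, N ≤ i ∨ a < tt i * r := ⟨N, Or.inl le_rfl⟩
      set k : ℕ := Nat.find hkex with hkdef
      have hkN : k ≤ N := Nat.find_le (Or.inl le_rfl)
      have hlow : ∀ i : ℕ, i < k → tt i * r ≤ a := by
        intro i hik
        have := Nat.find_min hkex hik
        push_neg at this
        exact this.2
      have hhigh : ∀ i : ℕ, i < N → k < i → b ≤ tt i * r := by
        intro i hiN hki
        have hkN' : k < N := lt_trans hki hiN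
        have hak : a < tt k * r := (Nat.find_spec hkex).resolve_left (by omega)
        have h1 : tt k * ρ ≤ tt i := httsucc k i hki
        have h2 : tt k * ρ * r ≤ tt i * r := mul_le_mul_of_nonneg_right h1 hr0
        nlinarith
      set c : ℕ → ℂ := fun i => hdisk (tt i) ζ with hcdef
      set v : ℕ → E := fun i => P (i+1) s - P i s with hvdef
      have htel : ∑ i ∈ Finset.range k, v i = P k s - P 0 s :=
        Finset.sum_range_sub (fun i => P i s) k
      have hsplit : ∑ i ∈ Finset.range N, c i • v i
          = (∑ i ∈ Finset.range k, c i • v i) + ∑ i ∈ Finset.Ico k N, c i • v i := by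
        rw [Finset.range_eq_Ico, Finset.range_eq_Ico]
        exact (Finset.sum_Ico_consecutive (fun i => c i • v i) (Nat.zero_le k) hkN).symm
      have hE1 : ‖(∑ i ∈ Finset.range k, c i • v i) - (P k s - P 0 s)‖ ≤ ε/16 := by
        rw [← htel, ← Finset.sum_sub_distrib]
        have hcongr : ∀ i ∈ Finset.range k, c i • v i - v i = (c i - 1) • v i := by
          intro i _
          rw [sub_smul, one_smul]
        rw [Finset.sum_congr rfl hcongr]
        refine le_trans (norm_sum_le _ _) ?_
        have hterm : ∀ i ∈ Finset.range k, ‖(c i - 1) • v i‖ ≤ 4*a*(ε/8) := by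
          intro i hi
          rw [Finset.mem_range] at hi
          rw [norm_smul]
          have hir := hlow i hi
          have hsmall : tt i * ‖wsq ζ‖ ≤ 1 := by
            nlinarith [(htt i).le]
          have h1 : ‖c i - 1‖ ≤ 4*a := by
            rw [hcdef]
            refine le_trans (hdisk_sub_one (htt i).le hne hsmall) ?_
            nlinarith [(htt i).le]
          calc ‖c i - 1‖ * ‖v i‖ ≤ (4*a)*(ε/8) :=
            mul_le_mul h1 (hPd i s hs) (norm_nonneg _) (by positivity)
          _ = 4*a*(ε/8) := by ring
        calc ∑ i ∈ Finset.range k, ‖(c i - 1) • v i‖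
            ≤ ∑ _i ∈ Finset.range k, (4*a*(ε/8)) := Finset.sum_le_sum hterm
        _ = (k:ℝ) * (4*a*(ε/8)) := by
            rw [Finset.sum_const, Finset.card_range, nsmul_eq_mul]
        _ ≤ (N:ℝ) * (4*a*(ε/8)) := by
            have hkc : (k:ℝ) ≤ (N:ℝ) := by exact_mod_cast hkN
            exact mul_le_mul_of_nonneg_right hkc (by positivity)
        _ ≤ ε/16 := by nlinarith
      have hE2 : ‖∑ i ∈ Finset.Ico k N, c i • v i‖ ≤ ε/8 + ε/64 := by
        rcases eq_or_lt_of_le hkN with heq | hklt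
        · rw [heq, Finset.Ico_self, Finset.sum_empty, norm_zero]
          positivity
        · rw [Finset.sum_eq_sum_Ico_succ_bot hklt]
          refine le_trans (norm_add_le _ _) ?_
          have hA : ‖c k • v k‖ ≤ ε/8 := by
            rw [norm_smul]
            have h1 : ‖c k‖ ≤ 1 := abs_hdisk_le_one (htt k).le hζ1.le
            calc ‖c k‖ * ‖v k‖ ≤ 1 * (ε/8) :=
              mul_le_mul h1 (hPd k s hs) (norm_nonneg _) one_pos.le
            _ = ε/8 := one_mul _
          have hB : ‖∑ i ∈ Finset.Ico (k+1) N, c i • v i‖ ≤ ε/64 := by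
            refine le_trans (norm_sum_le _ _) ?_
            have hterm : ∀ i ∈ Finset.Ico (k+1) N, ‖c i • v i‖ ≤ a*(ε/8) := by
              intro i hi
              rw [Finset.mem_Ico] at hi
              rw [norm_smul]
              have h1 : ‖c i‖ ≤ a := by
                rw [hcdef, habsc i, ← hexpb]
                apply Real.exp_le_exp.2
                have := hhigh i hi.2 (Nat.lt_of_succ_le hi.1)
                linarith
              exact mul_le_mul h1 (hPd i s hs) (norm_nonneg _) ha.le
            calc ∑ i ∈ Finset.Ico (k+1) N, ‖c i • v i‖
                ≤ ∑ _i ∈ Finset.Ico (k+1) N, (a*(ε/8)) := Finset.sum_le_sum hterm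
            _ = ((Finset.Ico (k+1) N).card : ℝ) * (a*(ε/8)) := by
                rw [Finset.sum_const, nsmul_eq_mul]
            _ ≤ (N:ℝ) * (a*(ε/8)) := by
                have hcard : (Finset.Ico (k+1) N).card ≤ N := by
                  rw [Nat.card_Ico]
                  omega
                have hcc : ((Finset.Ico (k+1) N).card : ℝ) ≤ (N:ℝ) := by exact_mod_cast hcard
                exact mul_le_mul_of_nonneg_right hcc (by positivity)
            _ ≤ ε/64 := by nlinarith
          linarith
      have hP0s : P 0 s = g 1 := hP0 s hs
      have hfinal : ‖H (s, ζ) - P k s‖ < ε := by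
        have hdecomp : H (s, ζ) - P k s
            = (g ζ - g 1) + (((∑ i ∈ Finset.range k, c i • v i) - (P k s - P 0 s))
              + ∑ i ∈ Finset.Ico k N, c i • v i) := by
          rw [hHdef]
          simp only
          rw [hsplit, hP0s]
          abel
        rw [hdecomp]
        have hgg : ‖g ζ - g 1‖ < ε/8 := by
          rw [← dist_eq_norm]
          exact hgnear
        calc ‖(g ζ - g 1) + (((∑ i ∈ Finset.range k, c i • v i) - (P k s - P 0 s))
              + ∑ i ∈ Finset.Ico k N, c i • v i)‖
            ≤ ‖g ζ - g 1‖ + (‖(∑ i ∈ Finset.range k, c i • v i) - (P k s - P 0 s)‖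
              + ‖∑ i ∈ Finset.Ico k N, c i • v i‖) :=
              le_trans (norm_add_le _ _) (by gcongr; exact norm_add_le _ _)
        _ < ε := by linarith
      exact hmem _ (P k s) (hPK k s hs) (by rw [dist_eq_norm]; exact hfinal)
  -- continuity of H on the product
  have hHcont : ContinuousOn H (Icc (0:ℝ) 1 ×ˢ closedBall (0:ℂ) 1) := by
    rw [hHdef]
    apply ContinuousOn.add
    · exact hgc.comp continuous_snd.continuousOn (fun p hp => hp.2)
    · apply continuousOn_finset_sum
      intro i _
      apply ContinuousOn.smul
      · exact (hdisk_continuousOn (htt i)).comp continuous_snd.continuousOn (fun p hp => hp.2)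
      · exact (((hPcont (i+1)).sub (hPcont i)).comp continuous_fst).continuousOn
  -- slices
  have hslicecont : ∀ τ : ℝ, ContinuousOn (fun ζ => H (τ, ζ)) (closedBall (0:ℂ) 1) := by
    intro τ
    simp only [hHdef]
    apply ContinuousOn.add hgc
    apply continuousOn_finset_sum
    intro i _
    exact (hdisk_continuousOn (htt i)).smul continuousOn_const
  have hsliced : ∀ τ : ℝ, DifferentiableOn ℂ (fun ζ => H (τ, ζ)) (ball (0:ℂ) 1) := by
    intro τ
    simp only [hHdef]
    apply DifferentiableOn.add hgd
    apply DifferentiableOn.fun_sum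
    intro i _
    exact (hdisk_differentiableOn (tt i)).smul (differentiableOn_const _)
  -- values at time 0 and at (1,1)
  have hH0 : ∀ ζ : ℂ, H (0, ζ) = g ζ := by
    intro ζ
    rw [hHdef]
    simp only
    have hz : ∀ i ∈ Finset.range N, hdisk (tt i) ζ • (P (i+1) 0 - P i 0) = 0 := by
      intro i _
      rw [hPi0, hPi0, sub_self, smul_zero]
    rw [Finset.sum_congr rfl hz, Finset.sum_const, smul_zero, add_zero]
  have hf1 : H (1, 1) = w₀ := by
    rw [hHdef]
    simp only
    have hz : ∀ i ∈ Finset.range N,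
        hdisk (tt i) 1 • (P (i+1) 1 - P i 1) = (fun j => P j 1) (i+1) - (fun j => P j 1) i := by
      intro i _
      rw [hdisk_one, one_smul]
    rw [Finset.sum_congr rfl hz, Finset.sum_range_sub (fun j => P j 1) N]
    rw [hPN1, hP0 1 (by norm_num)]
    abel
  refine ⟨fun ζ => H (1, ζ), hslicecont 1, hsliced 1,
    fun ζ hζ => hbdry 1 (by norm_num) ζ hζ, hf1, H, hHcont,
    fun ζ _ => hH0 ζ, fun ζ _ => rfl,
    fun τ hτ => ⟨hslicecont τ, hsliced τ, fun ζ hζ => hbdry τ hτ ζ hζ⟩⟩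
end
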